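/- arXiv:1209.2194 — 9 statements merged into one kernel-verified Lean document; each statement's English description precedes it below -/
import Mathlib

section
/- For any nonnegative n×n real matrix A, κ(A) ≥ 0. Moreover, suppose A is symmetric and nonnegative, let G(A) be the simple graph on {1,…,n} that has an edge {i,j} (for i ≠ j) exactly when a_{ij} > 0, assume G(A) is connected with diameter D, and suppose η ∈ (0,1] satisfies a_{ij} ≥ η for every edge {i,j} of G(A). Then κ(A) ≥ η/(n(D+1)). -/
open Finset

lemma cs_key (k a s q : ℝ) (hk : 0 ≤ k) (hq : 0 ≤ q) (h : s ^ 2 ≤ k * q) :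
    (a + s) ^ 2 ≤ (k + 1) * (a ^ 2 + q) := by
  rcases hk.eq_or_lt with rfl | hk
  · have hs : s = 0 := by
      have : s ^ 2 = 0 := le_antisymm (by simpa using h) (sq_nonneg s)
      exact pow_eq_zero_iff (n := 2) (by norm_num) |>.mp this
    subst hs; nlinarith
  · nlinarith [sq_nonneg (k * a - s), mul_le_mul_of_nonneg_left h hk.le]

lemma list_cs (l : List ℝ) : l.sum ^ 2 ≤ l.length * (l.map (· ^ 2)).sum := by
  induction l with
  | nil => simp
  | cons a t ih =>
    have hq : (0:ℝ) ≤ (t.map (· ^ 2)).sum :=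
      List.sum_nonneg (by intro y hy; obtain ⟨z, _, rfl⟩ := List.mem_map.mp hy; positivity)
    simp only [List.sum_cons, List.map_cons, List.length_cons]
    push_cast
    have := cs_key (t.length : ℝ) a t.sum ((t.map (· ^ 2)).sum) (by positivity) hq ih
    linarith

lemma walk_tel {V : Type*} {G : SimpleGraph V} (x : V → ℝ) {u v : V} (p : G.Walk u v) :
    (p.darts.map (fun d => x d.toProd.2 - x d.toProd.1)).sum = x v - x u := by
  induction p with
  | nil => simp
  | cons h q ih => simp only [SimpleGraph.Walk.darts_cons, List.map_cons, List.sum_cons, ih]; ring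

lemma walk_cs {V : Type*} {G : SimpleGraph V} (x : V → ℝ) {u v : V} (p : G.Walk u v) :
    x v ^ 2 ≤ ((p.length : ℝ) + 1) *
      (x u ^ 2 + (p.darts.map (fun d => (x d.toProd.1 - x d.toProd.2) ^ 2)).sum) := by
  have hfe : ((· ^ 2) ∘ fun d : G.Dart => x d.toProd.2 - x d.toProd.1)
      = fun d : G.Dart => (x d.toProd.1 - x d.toProd.2) ^ 2 := by
    funext d; simp only [Function.comp_apply]; ring
  have h := list_cs (x u :: p.darts.map (fun d => x d.toProd.2 - x d.toProd.1))
  simp only [List.sum_cons, walk_tel x p, List.map_cons, List.length_cons, List.map_map, hfe,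
    List.length_map, SimpleGraph.Walk.length_darts] at h
  push_cast at h
  have he : x u + (x v - x u) = x v := by ring
  rw [he] at h
  linarith

/-- For any nonnegative `n×n` matrix `A`, the sieve constant
`κ(A) = min { x_m² + Σ_{k<l} a_{kl}(x_k - x_l)² : m, ‖x‖₂ = 1 }` is nonnegative;
and if moreover `A` is symmetric, its graph `G(A)` is connected with diameter `D`,
and `η ∈ (0,1]` lower-bounds the entries of `A` on edges of `G(A)`, then
`κ(A) ≥ η / (n (D+1))`. -/
theorem stmt4 (n : ℕ) (A : Matrix (Fin n) (Fin n) ℝ) (hA : ∀ i j, 0 ≤ A i j) (κ : ℝ)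
    (hκ : IsLeast {y : ℝ | ∃ (m : Fin n) (x : Fin n → ℝ), (∑ i, (x i) ^ 2 = 1) ∧
      y = (x m) ^ 2 + ∑ p ∈ Finset.univ.filter (fun p : Fin n × Fin n => p.1 < p.2),
        A p.1 p.2 * (x p.1 - x p.2) ^ 2} κ) :
    0 ≤ κ ∧
      ∀ (G : SimpleGraph (Fin n)), A.IsSymm →
        (∀ i j, G.Adj i j ↔ i ≠ j ∧ 0 < A i j) → G.Connected →
        ∀ D : ℕ, G.diam = D →
        ∀ η : ℝ, 0 < η → η ≤ 1 → (∀ i j, G.Adj i j → η ≤ A i j) →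
        η / (n * (D + 1)) ≤ κ := by
  obtain ⟨m0, x0, hx0, hy0⟩ := hκ.1
  have hQ0 : (0:ℝ) ≤ ∑ p ∈ Finset.univ.filter (fun p : Fin n × Fin n => p.1 < p.2),
      A p.1 p.2 * (x0 p.1 - x0 p.2) ^ 2 :=
    Finset.sum_nonneg fun p _ => mul_nonneg (hA _ _) (sq_nonneg _)
  constructor
  · rw [hy0]; exact add_nonneg (sq_nonneg _) hQ0
  · intro G hsym hadj hconn D hD η hη hη1 hedge
    rw [hy0]
    set Q : ℝ := ∑ p ∈ Finset.univ.filter (fun p : Fin n × Fin n => p.1 < p.2),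
      A p.1 p.2 * (x0 p.1 - x0 p.2) ^ 2 with hQdef
    have hn : 0 < n := m0.pos
    have hnR : (0:ℝ) < n := by exact_mod_cast hn
    -- a coordinate with large square
    have hex : ∃ i : Fin n, 1 / (n:ℝ) ≤ x0 i ^ 2 := by
      by_contra hcon
      push_neg at hcon
      have hlt := Finset.sum_lt_sum_of_nonempty
        (⟨m0, Finset.mem_univ m0⟩ : (Finset.univ : Finset (Fin n)).Nonempty)
        (fun i _ => hcon i)
      rw [hx0, Finset.sum_const, Finset.card_univ, Fintype.card_fin, nsmul_eq_mul] at hlt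
      rw [mul_one_div, div_self hnR.ne'] at hlt
      exact lt_irrefl _ hlt
    obtain ⟨i, hi⟩ := hex
    -- distance bound
    haveI : Nonempty (Fin n) := ⟨m0⟩
    have hetop : G.ediam ≠ ⊤ := by
      obtain ⟨u, v, huv⟩ := G.exists_edist_eq_ediam_of_finite
      rw [← huv]
      exact SimpleGraph.edist_ne_top_iff_reachable.mpr (hconn u v)
    have hdist : G.dist m0 i ≤ D := hD ▸ G.dist_le_diam hetop
    obtain ⟨p, hpath, hplen⟩ := hconn.exists_path_of_dist m0 i
    have hlen : p.length ≤ D := hplen ▸ hdist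
    -- Cauchy-Schwarz along the path
    set S : ℝ := (p.darts.map (fun d => (x0 d.toProd.1 - x0 d.toProd.2) ^ 2)).sum with hSdef
    have hS0 : (0:ℝ) ≤ S :=
      List.sum_nonneg (by intro y hy; obtain ⟨z, _, rfl⟩ := List.mem_map.mp hy; positivity)
    have hcs : x0 i ^ 2 ≤ ((D:ℝ) + 1) * (x0 m0 ^ 2 + S) := by
      refine le_trans (walk_cs x0 p) (mul_le_mul_of_nonneg_right ?_
        (add_nonneg (sq_nonneg _) hS0))
      have : (p.length : ℝ) ≤ (D : ℝ) := by exact_mod_cast hlen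
      linarith
    -- η * S ≤ Q
    have hSQ : η * S ≤ Q := by
      classical
      have heNodup : (p.darts.map SimpleGraph.Dart.edge).Nodup := hpath.edges_nodup
      have hndup : p.darts.Nodup := List.Nodup.of_map _ heNodup
      set f : G.Dart → ℝ := fun d => (x0 d.toProd.1 - x0 d.toProd.2) ^ 2 with hfdef
      have hmap : S = ∑ d ∈ p.darts.toFinset, f d := (List.sum_toFinset f hndup).symm
      set e : G.Dart → Fin n × Fin n :=
        fun d => if d.toProd.1 < d.toProd.2 then d.toProd else d.toProd.swap with hedef
      have hlt : ∀ d : G.Dart, (e d).1 < (e d).2 := by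
        intro d
        by_cases h : d.toProd.1 < d.toProd.2
        · simp [hedef, h]
        · have hne : d.toProd.1 ≠ d.toProd.2 := d.adj.ne
          have : d.toProd.2 < d.toProd.1 := lt_of_le_of_ne (not_lt.mp h) hne.symm
          simp [hedef, h, this]
      have hedge_e : ∀ d : G.Dart, Sym2.mk (e d).1 (e d).2 = d.edge := by
        intro d
        by_cases h : d.toProd.1 < d.toProd.2
        · simp [hedef, h, SimpleGraph.Dart.edge]
        · simp [hedef, h, SimpleGraph.Dart.edge, Sym2.mk_prod_swap_eq]
      have hinj : ∀ d1 ∈ p.darts.toFinset, ∀ d2 ∈ p.darts.toFinset, e d1 = e d2 → d1 = d2 := by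
        intro d1 h1 d2 h2 hee
        have hedgeeq : d1.edge = d2.edge := by rw [← hedge_e d1, ← hedge_e d2, hee]
        exact List.inj_on_of_nodup_map heNodup (List.mem_toFinset.mp h1)
          (List.mem_toFinset.mp h2) hedgeeq
      set g : Fin n × Fin n → ℝ := fun q => A q.1 q.2 * (x0 q.1 - x0 q.2) ^ 2 with hgdef
      have hkey : ∀ d ∈ p.darts.toFinset, η * f d ≤ g (e d) := by
        intro d _
        have hadj' : G.Adj d.toProd.1 d.toProd.2 := d.adj
        by_cases h : d.toProd.1 < d.toProd.2
        · simp only [hedef, hgdef, hfdef, if_pos h]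
          exact mul_le_mul_of_nonneg_right (hedge _ _ hadj') (sq_nonneg _)
        · simp only [hedef, hgdef, hfdef, if_neg h, Prod.fst_swap, Prod.snd_swap]
          have h1 : η ≤ A d.toProd.2 d.toProd.1 := hedge _ _ hadj'.symm
          have h2 : (x0 d.toProd.1 - x0 d.toProd.2) ^ 2
              = (x0 d.toProd.2 - x0 d.toProd.1) ^ 2 := by ring
          rw [h2]
          exact mul_le_mul_of_nonneg_right h1 (sq_nonneg _)
      calc η * S = ∑ d ∈ p.darts.toFinset, η * f d := by
              rw [hmap, Finset.mul_sum]
        _ ≤ ∑ d ∈ p.darts.toFinset, g (e d) := Finset.sum_le_sum hkey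
        _ = ∑ q ∈ p.darts.toFinset.image e, g q := (Finset.sum_image hinj).symm
        _ ≤ Q := by
            refine Finset.sum_le_sum_of_subset_of_nonneg ?_
              (fun q _ _ => mul_nonneg (hA _ _) (sq_nonneg _))
            intro q hq
            obtain ⟨d, _, rfl⟩ := Finset.mem_image.mp hq
            exact Finset.mem_filter.mpr ⟨Finset.mem_univ _, hlt d⟩
    -- final arithmetic
    have hxm : (0:ℝ) ≤ x0 m0 ^ 2 := sq_nonneg _
    have hDpos : (0:ℝ) < (D:ℝ) + 1 := by positivity
    rw [div_le_iff₀ (by positivity)]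
    have h1 : (1:ℝ) ≤ (n:ℝ) * x0 i ^ 2 := by
      rw [div_le_iff₀ hnR] at hi; linarith [hi]
    have h2 : η * 1 ≤ η * ((n:ℝ) * x0 i ^ 2) := mul_le_mul_of_nonneg_left h1 hη.le
    have h3 : η * ((n:ℝ) * x0 i ^ 2) ≤ η * ((n:ℝ) * (((D:ℝ) + 1) * (x0 m0 ^ 2 + S))) :=
      mul_le_mul_of_nonneg_left (mul_le_mul_of_nonneg_left hcs hnR.le) hη.le
    have h4 : η * ((n:ℝ) * (((D:ℝ) + 1) * (x0 m0 ^ 2 + S)))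
        = ((n:ℝ) * ((D:ℝ) + 1)) * (η * x0 m0 ^ 2 + η * S) := by ring
    have h5 : η * x0 m0 ^ 2 + η * S ≤ x0 m0 ^ 2 + Q := by
      have : η * x0 m0 ^ 2 ≤ x0 m0 ^ 2 := by nlinarith
      linarith
    have h6 : ((n:ℝ) * ((D:ℝ) + 1)) * (η * x0 m0 ^ 2 + η * S)
        ≤ ((n:ℝ) * ((D:ℝ) + 1)) * (x0 m0 ^ 2 + Q) :=
      mul_le_mul_of_nonneg_left h5 (by positivity)
    nlinarith [h2, h3, h4, h6]
end

section
/- Let G be a connected simple graph on the vertex set {1,…,n} (n ≥ 2) with edge set E and diameter D. Then for every vertex m and every x ∈ ℝⁿ with ‖x‖₂ = 1, one has x_m² + Σ_{{i,j}∈E} (x_i − x_j)² ≥ 1/(n(D+1)). -/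
open Finset

lemma getVert_injOn' {V : Type*} {G : SimpleGraph V} {u v : V} (p : G.Walk u v)
    (hp : p.IsPath) : ∀ a b, a ≤ p.length → b ≤ p.length →
      p.getVert a = p.getVert b → a = b := by
  induction p with
  | nil => intro a b ha hb _; simp at ha hb; omega
  | cons h q ih =>
    rename_i u w v
    intro a b ha hb heq
    rw [SimpleGraph.Walk.cons_isPath_iff] at hp
    match a, b with
    | 0, 0 => rfl
    | 0, Nat.succ b =>
      exfalso
      apply hp.2
      rw [SimpleGraph.Walk.mem_support_iff_exists_getVert]
      exact ⟨b, heq.symm ▸ by simp [SimpleGraph.Walk.getVert_cons_succ], by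
        simp [SimpleGraph.Walk.length_cons] at hb; omega⟩
    | Nat.succ a, 0 =>
      exfalso
      apply hp.2
      rw [SimpleGraph.Walk.mem_support_iff_exists_getVert]
      exact ⟨a, heq ▸ by simp [SimpleGraph.Walk.getVert_cons_succ], by
        simp [SimpleGraph.Walk.length_cons] at ha; omega⟩
    | Nat.succ a, Nat.succ b =>
      simp only [SimpleGraph.Walk.getVert_cons_succ] at heq
      simp [SimpleGraph.Walk.length_cons] at ha hb
      have := ih hp.1 a b (by omega) (by omega) heq
      omega

/-- For a connected simple graph `G` on `n ≥ 2` vertices with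
diameter `D`, every vertex `m` and every unit vector `x ∈ ℝⁿ` satisfy
`x_m² + Σ_{{i,j} ∈ E} (x_i - x_j)² ≥ 1/(n(D+1))`.  (Each unordered edge is
counted once; here the sum over unordered edges is written as half the sum
over ordered adjacent pairs.) -/
theorem stmt5 (n : ℕ) (hn : 2 ≤ n) (G : SimpleGraph (Fin n)) [DecidableRel G.Adj]
    (hconn : G.Connected) (D : ℕ) (hD : G.diam = D) :
    ∀ (m : Fin n) (x : Fin n → ℝ), ∑ i, (x i) ^ 2 = 1 →
      1 / (n * (D + 1) : ℝ)
        ≤ (x m) ^ 2 + (1 / 2) * ∑ i, ∑ j, if G.Adj i j then (x i - x j) ^ 2 else 0 := by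
  intro m x hx
  haveI : NeZero n := ⟨by omega⟩
  -- the half-sum S is nonneg and the notation
  set S : ℝ := (1 / 2) * ∑ i, ∑ j, if G.Adj i j then (x i - x j) ^ 2 else 0 with hS
  -- choose v maximizing x_v^2
  obtain ⟨v, -, hv⟩ := Finset.exists_max_image (univ : Finset (Fin n)) (fun i => x i ^ 2)
    ⟨m, mem_univ m⟩
  have hvn : (1 : ℝ) ≤ n * x v ^ 2 := by
    calc (1:ℝ) = ∑ i, x i ^ 2 := hx.symm
    _ ≤ ∑ _i : Fin n, x v ^ 2 := Finset.sum_le_sum (fun i _ => hv i (mem_univ i))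
    _ = n * x v ^ 2 := by simp [mul_comm]
  -- shortest path from m to v
  obtain ⟨p, hpath, hplen⟩ := hconn.exists_path_of_dist m v
  set d := p.length with hd
  -- ediam ≠ ⊤
  have hediam : G.ediam ≠ ⊤ := by
    obtain ⟨a, b, hab⟩ := G.exists_edist_eq_ediam_of_finite
    rw [← hab]
    exact (SimpleGraph.edist_ne_top_iff_reachable).2 (hconn a b)
  have hdD : d ≤ D := by
    calc d = G.dist m v := hplen
    _ ≤ G.diam := SimpleGraph.dist_le_diam hediam
    _ = D := hD
  set w : ℕ → Fin n := p.getVert with hw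
  -- telescoping sum function
  set f : ℕ → ℝ := fun k => if k = 0 then x m else x (w k) - x (w (k - 1)) with hf
  have htel : ∑ k ∈ range (d + 1), f k = x v := by
    rw [Finset.sum_range_succ']
    simp only [hf]
    have h1 : ∑ i ∈ range d, (if i + 1 = 0 then x m else x (w (i+1)) - x (w (i+1-1)))
        = ∑ i ∈ range d, (x (w (i+1)) - x (w i)) := by
      apply Finset.sum_congr rfl
      intro i _
      simp
    rw [h1, Finset.sum_range_sub (fun i => x (w i))]
    have hvd : w d = v := p.getVert_length
    have h0 : w 0 = m := p.getVert_zero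
    simp [hvd, h0]
  set T : ℝ := ∑ k ∈ range d, (x (w (k+1)) - x (w k)) ^ 2 with hT
  -- Cauchy-Schwarz
  have hCS : x v ^ 2 ≤ (d + 1 : ℝ) * (x m ^ 2 + T) := by
    have hcs := sq_sum_le_card_mul_sum_sq (s := range (d+1)) (f := f)
    rw [htel] at hcs
    simp only [Finset.card_range] at hcs
    have hsum : ∑ i ∈ range (d+1), f i ^ 2 = x m ^ 2 + T := by
      rw [Finset.sum_range_succ']
      have h2 : ∑ i ∈ range d, f (i+1) ^ 2 = T := by
        apply Finset.sum_congr rfl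
        intro i _
        simp [hf]
      rw [h2]
      simp only [hf, if_pos rfl]
      ring
    rw [hsum] at hcs
    calc x v ^ 2 ≤ ((d + 1 : ℕ) : ℝ) * (x m ^ 2 + T) := by exact_mod_cast hcs
    _ = (d + 1 : ℝ) * (x m ^ 2 + T) := by push_cast; ring
  -- T ≤ S
  have hwinj : ∀ a b, a ≤ d → b ≤ d → w a = w b → a = b :=
    fun a b ha hb => getVert_injOn' p hpath a b ha hb
  have hadjw : ∀ k, k < d → G.Adj (w k) (w (k+1)) := fun k hk =>
    p.adj_getVert_succ hk
  have hTS : T ≤ S := by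
    set F : Fin n × Fin n → ℝ := fun q => if G.Adj q.1 q.2 then (x q.1 - x q.2) ^ 2 else 0
      with hF
    have hFnn : ∀ q, 0 ≤ F q := by
      intro q; simp only [hF]; positivity
    set s₁ : Finset (Fin n × Fin n) := (range d).image (fun k => (w k, w (k+1))) with hs₁
    set s₂ : Finset (Fin n × Fin n) := (range d).image (fun k => (w (k+1), w k)) with hs₂
    have hinj1 : Set.InjOn (fun k => (w k, w (k+1))) (range d) := by
      intro a ha b hb hab
      simp only [Prod.mk.injEq] at hab
      simp only [coe_range, Set.mem_Iio] at ha hb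
      exact hwinj a b (by omega) (by omega) hab.1
    have hinj2 : Set.InjOn (fun k => (w (k+1), w k)) (range d) := by
      intro a ha b hb hab
      simp only [Prod.mk.injEq] at hab
      simp only [coe_range, Set.mem_Iio] at ha hb
      exact hwinj a b (by omega) (by omega) hab.2
    have hsum1 : ∑ q ∈ s₁, F q = T := by
      rw [hs₁, Finset.sum_image hinj1]
      apply Finset.sum_congr rfl
      intro k hk
      simp only [hF, if_pos (hadjw k (mem_range.1 hk))]
      ring
    have hsum2 : ∑ q ∈ s₂, F q = T := by
      rw [hs₂, Finset.sum_image hinj2]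
      apply Finset.sum_congr rfl
      intro k hk
      have := hadjw k (mem_range.1 hk)
      simp only [hF, if_pos this.symm]
    have hdisj : Disjoint s₁ s₂ := by
      rw [Finset.disjoint_left]
      intro q hq1 hq2
      simp only [hs₁, hs₂, Finset.mem_image, mem_range] at hq1 hq2
      obtain ⟨a, ha, rfl⟩ := hq1
      obtain ⟨b, hb, hab⟩ := hq2
      simp only [Prod.mk.injEq] at hab
      have h1 := hwinj (b+1) a (by omega) (by omega) hab.1
      have h2 := hwinj b (a+1) (by omega) (by omega) hab.2
      omega
    have hfull : ∑ i, ∑ j, (if G.Adj i j then (x i - x j) ^ 2 else 0)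
        = ∑ q : Fin n × Fin n, F q := by
      rw [Fintype.sum_prod_type]
    have hle : ∑ q ∈ s₁ ∪ s₂, F q ≤ ∑ q : Fin n × Fin n, F q :=
      Finset.sum_le_sum_of_subset_of_nonneg (Finset.subset_univ _)
        (fun q _ _ => hFnn q)
    rw [Finset.sum_union hdisj, hsum1, hsum2] at hle
    rw [hS, hfull]
    linarith
  -- finish
  have hTnn : 0 ≤ T := by
    rw [hT]; positivity
  have hxm : (0:ℝ) ≤ x m ^ 2 := sq_nonneg _
  have hstep : x v ^ 2 ≤ (D + 1 : ℝ) * (x m ^ 2 + S) := by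
    calc x v ^ 2 ≤ (d + 1 : ℝ) * (x m ^ 2 + T) := hCS
    _ ≤ (D + 1 : ℝ) * (x m ^ 2 + T) := by
        apply mul_le_mul_of_nonneg_right _ (by linarith)
        have : (d:ℝ) ≤ D := by exact_mod_cast hdD
        linarith
    _ ≤ (D + 1 : ℝ) * (x m ^ 2 + S) := by
        apply mul_le_mul_of_nonneg_left (by linarith) (by positivity)
  have hnpos : (0:ℝ) < n := by positivity
  have h1 : (1:ℝ) ≤ n * ((D + 1 : ℝ) * (x m ^ 2 + S)) := by
    calc (1:ℝ) ≤ n * x v ^ 2 := hvn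
    _ ≤ n * ((D + 1 : ℝ) * (x m ^ 2 + S)) := by
        apply mul_le_mul_of_nonneg_left hstep (le_of_lt hnpos)
  rw [div_le_iff₀ (by positivity)]
  nlinarith [hstep, hvn]
end

section
/- Let q ∈ (0,1] and ε ∈ (0,1), and let a ≤ b be integers with 2 ≤ a and a ≤ b − (2/q) b^{1−ε} ln b. Then Φ_q(a,b) ≤ 1/b². -/
/-- For `q ∈ (0,1]`, `ε ∈ (0,1)` and integers `2 ≤ a ≤ b` with
`a ≤ b - (2/q) b^(1-ε) ln b`, one has `Φ_q(a,b) ≤ 1/b²`. -/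
theorem stmt9 (q ε : ℝ) (hq0 : 0 < q) (hq1 : q ≤ 1) (hε0 : 0 < ε) (hε1 : ε < 1)
    (a b : ℕ) (ha : 2 ≤ a) (hab : a ≤ b)
    (hagap : (a : ℝ) ≤ (b : ℝ) - (2 / q) * (b : ℝ) ^ (1 - ε) * Real.log b) :
    ∏ t ∈ Finset.Ico a b, (1 - q / (t : ℝ) ^ (1 - ε)) ≤ 1 / (b : ℝ) ^ 2 := by
  have hb2 : (2 : ℕ) ≤ b := ha.trans hab
  have hbR : (2 : ℝ) ≤ (b : ℝ) := by exact_mod_cast hb2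
  have hb0 : (0 : ℝ) < b := by linarith
  have hε' : (0 : ℝ) < 1 - ε := by linarith
  have hbe : (0 : ℝ) < (b : ℝ) ^ (1 - ε) := Real.rpow_pos_of_pos hb0 _
  -- each factor bounded by exp
  have h1 : ∏ t ∈ Finset.Ico a b, (1 - q / (t : ℝ) ^ (1 - ε))
      ≤ ∏ t ∈ Finset.Ico a b, Real.exp (-(q / (t : ℝ) ^ (1 - ε))) := by
    apply Finset.prod_le_prod
    · intro t ht
      have ht2 : (2 : ℝ) ≤ (t : ℝ) := by
        exact_mod_cast ha.trans (Finset.mem_Ico.mp ht).1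
      have h1t : (1 : ℝ) < (t : ℝ) ^ (1 - ε) :=
        Real.one_lt_rpow_iff_of_pos (by linarith) |>.mpr (Or.inl ⟨by linarith, hε'⟩)
      have : q / (t : ℝ) ^ (1 - ε) < q / 1 := by
        apply div_lt_div_of_pos_left hq0 one_pos h1t
      simp at this
      linarith
    · intro t ht
      have := Real.add_one_le_exp (-(q / (t : ℝ) ^ (1 - ε)))
      linarith
  rw [← Real.exp_sum] at h1
  -- bound the sum
  have hsum : ∑ t ∈ Finset.Ico a b, -(q / (t : ℝ) ^ (1 - ε))
      ≤ ∑ _t ∈ Finset.Ico a b, -(q / (b : ℝ) ^ (1 - ε)) := by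
    apply Finset.sum_le_sum
    intro t ht
    have ht0 : (0 : ℝ) ≤ (t : ℝ) := Nat.cast_nonneg t
    have htb : (t : ℝ) ≤ (b : ℝ) := by
      exact_mod_cast (Finset.mem_Ico.mp ht).2.le
    have ht2 : (2 : ℝ) ≤ (t : ℝ) := by
      exact_mod_cast ha.trans (Finset.mem_Ico.mp ht).1
    have hte : (0 : ℝ) < (t : ℝ) ^ (1 - ε) := Real.rpow_pos_of_pos (by linarith) _
    have hle : (t : ℝ) ^ (1 - ε) ≤ (b : ℝ) ^ (1 - ε) :=
      Real.rpow_le_rpow ht0 htb hε'.le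
    have : q / (b : ℝ) ^ (1 - ε) ≤ q / (t : ℝ) ^ (1 - ε) :=
      div_le_div_of_nonneg_left hq0.le hte hle
    linarith
  rw [Finset.sum_const, Nat.card_Ico, nsmul_eq_mul] at hsum
  have hcard : ((b - a : ℕ) : ℝ) = (b : ℝ) - (a : ℝ) := by
    rw [Nat.cast_sub hab]
  rw [hcard] at hsum
  -- from hagap: (b - a) * (q / b^(1-ε)) ≥ 2 * log b
  have hlog : 0 < Real.log b := Real.log_pos (by linarith)
  have hkey : 2 * Real.log b ≤ ((b : ℝ) - a) * (q / (b : ℝ) ^ (1 - ε)) := by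
    have h2 : (2 / q) * (b : ℝ) ^ (1 - ε) * Real.log b ≤ (b : ℝ) - a := by linarith
    have := mul_le_mul_of_nonneg_right h2 (le_of_lt (div_pos hq0 hbe))
    calc 2 * Real.log b
        = ((2 / q) * (b : ℝ) ^ (1 - ε) * Real.log b) * (q / (b : ℝ) ^ (1 - ε)) := by
          field_simp
      _ ≤ ((b : ℝ) - a) * (q / (b : ℝ) ^ (1 - ε)) := this
  have h3 : ∑ t ∈ Finset.Ico a b, -(q / (t : ℝ) ^ (1 - ε)) ≤ -(2 * Real.log b) := by
    have : ((b : ℝ) - a) * -(q / (b : ℝ) ^ (1 - ε)) = -(((b : ℝ) - a) * (q / (b : ℝ) ^ (1 - ε))) := by ring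
    rw [this] at hsum
    linarith
  have h4 : Real.exp (∑ t ∈ Finset.Ico a b, -(q / (t : ℝ) ^ (1 - ε)))
      ≤ Real.exp (-(2 * Real.log b)) := Real.exp_le_exp.mpr h3
  have h5 : Real.exp (-(2 * Real.log b)) = 1 / (b : ℝ) ^ 2 := by
    rw [Real.exp_neg, two_mul, Real.exp_add, Real.exp_log hb0]
    rw [eq_div_iff (by positivity)]
    rw [sq]
    field_simp
  linarith
end

section
/- Let q ∈ (0,1] and ε ∈ (0,1), and let b be a real number with b ≥ [ (12/(qε)) ln(4/(qε)) ]^{1/ε}. Then b − (2/q) b^{1−ε} ln b ≥ b/2. -/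
lemma aux_stmt10 (A t : ℝ) (hA : 4 ≤ A) (ht : 3 * A * Real.log A ≤ t) :
    A * Real.log t ≤ t := by
  have hA0 : (0:ℝ) < A := by linarith
  have hlA : 4/3 ≤ Real.log A := by
    have h2 := Real.log_two_gt_d9
    have h4 : Real.log 4 = 2 * Real.log 2 := by
      rw [show (4:ℝ) = 2^2 by norm_num, Real.log_pow]; push_cast; ring
    have h5 : Real.log 4 ≤ Real.log A := Real.log_le_log (by norm_num) hA
    linarith
  have hlA0 : 0 < Real.log A := by linarith
  set L := Real.log A with hL
  set s := 3 * A * L with hs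
  have hs0 : 0 < s := by positivity
  have ht0 : 0 < t := lt_of_lt_of_le hs0 ht
  have hconc : Real.log t ≤ Real.log s + (t / s - 1) := by
    have h := Real.log_le_sub_one_of_pos (show 0 < t / s by positivity)
    rw [Real.log_div ht0.ne' hs0.ne'] at h
    linarith
  have hls : Real.log s ≤ 3 * L := by
    have e1 : Real.log s = Real.log 3 + L + Real.log L := by
      rw [hs, show 3 * A * L = 3 * A * L from rfl, Real.log_mul (by positivity) hlA0.ne',
        Real.log_mul (by norm_num) hA0.ne']
    have h1 : Real.log 3 ≤ L := Real.log_le_log (by norm_num) (by linarith) |>.trans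
      (le_of_eq rfl) |>.trans_eq rfl
    have h2 : Real.log L ≤ L := by
      have := Real.log_le_sub_one_of_pos hlA0
      linarith
    linarith
  -- from hconc: log t ≤ log s + t/s - 1 ≤ 3L + (t-s)/s
  have hts : A * (t / s) = t / (3 * L) := by
    rw [hs]; field_simp
  have hmain : A * Real.log t ≤ s + t / (3 * L) - A := by
    have h := mul_le_mul_of_nonneg_left hconc hA0.le
    have h2 := mul_le_mul_of_nonneg_left hls hA0.le
    have hexp : A * (Real.log s + (t / s - 1)) = A * Real.log s + A * (t / s) - A := by
      ring
    linarith [hts, hexp, h, h2]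
  have hfin : t / (3 * L) ≤ t - s + A := by
    rw [div_le_iff₀ (by positivity : (0:ℝ) < 3 * L)]
    nlinarith [mul_nonneg (sub_nonneg.2 ht) (by linarith : (0:ℝ) ≤ 3 * L - 1)]
  linarith

/-- For `q ∈ (0,1]`, `ε ∈ (0,1)` and a real
`b ≥ [(12/(qε)) ln(4/(qε))]^(1/ε)`, one has `b - (2/q) b^(1-ε) ln b ≥ b/2`. -/
theorem stmt10 (q ε b : ℝ) (hq0 : 0 < q) (hq1 : q ≤ 1) (hε0 : 0 < ε) (hε1 : ε < 1)
    (hb : (12 / (q * ε) * Real.log (4 / (q * ε))) ^ (1 / ε) ≤ b) :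
    b / 2 ≤ b - (2 / q) * b ^ (1 - ε) * Real.log b := by
  have hc0 : 0 < q * ε := mul_pos hq0 hε0
  have hc1 : q * ε ≤ 1 := by nlinarith
  set A : ℝ := 4 / (q * ε) with hA
  have hA4 : 4 ≤ A := by
    rw [hA, le_div_iff₀ hc0]; linarith
  have hlA : 4/3 ≤ Real.log A := by
    have h2 := Real.log_two_gt_d9
    have h4 : Real.log 4 = 2 * Real.log 2 := by
      rw [show (4:ℝ) = 2^2 by norm_num, Real.log_pow]; push_cast; ring
    have h5 : Real.log 4 ≤ Real.log A := Real.log_le_log (by norm_num) hA4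
    linarith
  have hMeq : 12 / (q * ε) * Real.log (4 / (q * ε)) = 3 * A * Real.log A := by
    rw [hA]; ring
  set M : ℝ := 3 * A * Real.log A with hM
  rw [hMeq] at hb
  have hM0 : 0 < M := by nlinarith
  have hb0 : 0 < b := lt_of_lt_of_le (Real.rpow_pos_of_pos hM0 _) hb
  have htM : M ≤ b ^ ε := by
    have h1 : (M ^ (1/ε)) ^ ε = M := by
      rw [← Real.rpow_mul hM0.le, one_div_mul_cancel hε0.ne', Real.rpow_one]
    calc M = (M ^ (1/ε)) ^ ε := h1.symm
    _ ≤ b ^ ε := Real.rpow_le_rpow (Real.rpow_pos_of_pos hM0 _).le hb hε0.le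
  have haux := aux_stmt10 A (b ^ ε) hA4 htM
  rw [Real.log_rpow hb0] at haux
  have key : 4 / q * Real.log b ≤ b ^ ε := by
    have heq : A * (ε * Real.log b) = 4 / q * Real.log b := by
      rw [hA]; field_simp
    linarith [heq ▸ haux]
  have hbe : b ^ ε * b ^ (1 - ε) = b := by
    rw [← Real.rpow_add hb0]; norm_num
  have h6 : 2 / q * Real.log b ≤ b ^ ε / 2 := by
    have : 2 / q * Real.log b = (4 / q * Real.log b) / 2 := by ring
    linarith
  have h7 : (2 / q * Real.log b) * b ^ (1 - ε) ≤ (b ^ ε / 2) * b ^ (1 - ε) :=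
    mul_le_mul_of_nonneg_right h6 (Real.rpow_nonneg hb0.le _)
  have h8 : (b ^ ε / 2) * b ^ (1 - ε) = b / 2 := by
    rw [div_mul_eq_mul_div, hbe]
  have h9 : 2 / q * b ^ (1 - ε) * Real.log b = (2 / q * Real.log b) * b ^ (1 - ε) := by ring
  linarith [h8 ▸ h7]
end

section
/- Let q ∈ (0,1], ε ∈ (0,1), d ≥ 0, and let a(1), a(2), a(3), … be a sequence of real numbers with a(1) ≥ 0 satisfying a(k+1) ≤ (1 − q/(k+1)^{1−ε}) a(k) + d/k^{2−2ε} for every integer k ≥ 1. Then for every integer k ≥ [ (12/(qε)) ln(4/(qε)) ]^{1/ε}, one has a(k) ≤ (9d/q) (ln k)/k^{1−ε} + a(1) exp( −q(k^ε − 2)/ε ). -/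
open Real Finset

private lemma bern_up {p : ℝ} (hp0 : 0 ≤ p) (hp1 : p ≤ 1) {j : ℝ} (hj : 1 ≤ j) :
    (j + 1) ^ p ≤ j ^ p + p * j ^ (p - 1) := by
  have hj0 : 0 < j := lt_of_lt_of_le one_pos hj
  have h1 : (0:ℝ) ≤ 1 + 1 / j := by positivity
  have hb : (1 + 1 / j) ^ p ≤ 1 + p * (1 / j) :=
    rpow_one_add_le_one_add_mul_self (by
      have : (0:ℝ) ≤ 1 / j := by positivity
      linarith) hp0 hp1
  have hmul : (j + 1) ^ p = j ^ p * (1 + 1 / j) ^ p := by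
    rw [← Real.mul_rpow hj0.le h1]
    congr 1
    field_simp
  rw [hmul]
  calc j ^ p * (1 + 1 / j) ^ p ≤ j ^ p * (1 + p * (1 / j)) := by
        apply mul_le_mul_of_nonneg_left hb (by positivity)
    _ = j ^ p + p * (j ^ p / j) := by ring
    _ = j ^ p + p * j ^ (p - 1) := by rw [Real.rpow_sub_one hj0.ne' p]

private lemma bern_down {p : ℝ} (hp0 : 0 ≤ p) (hp1 : p ≤ 1) {j : ℝ} (hj : 1 ≤ j) :
    (j - 1) ^ p ≤ j ^ p - p * j ^ (p - 1) := by
  have hj0 : 0 < j := lt_of_lt_of_le one_pos hj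
  have h1 : (0:ℝ) ≤ 1 + -(1 / j) := by
    have : 1 / j ≤ 1 := by
      rw [div_le_one hj0]; exact hj
    linarith
  have hb : (1 + -(1 / j)) ^ p ≤ 1 + p * (-(1 / j)) :=
    rpow_one_add_le_one_add_mul_self (by
      have : 0 < 1 / j := by positivity
      linarith) hp0 hp1
  have hmul : (j - 1) ^ p = j ^ p * (1 + -(1 / j)) ^ p := by
    rw [← Real.mul_rpow hj0.le h1]
    congr 1
    field_simp
    ring
  rw [hmul]
  calc j ^ p * (1 + -(1 / j)) ^ p ≤ j ^ p * (1 + p * (-(1 / j))) := by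
        apply mul_le_mul_of_nonneg_left hb (by positivity)
    _ = j ^ p - p * (j ^ p / j) := by ring
    _ = j ^ p - p * j ^ (p - 1) := by rw [Real.rpow_sub_one hj0.ne' p]

/-- The inhomogeneous comparison sequence. -/
private noncomputable def Aseq (q ε d : ℝ) : ℕ → ℝ
  | 0 => 0
  | 1 => 0
  | (k+2) => (1 - q / ((k:ℝ) + 2) ^ (1-ε)) * Aseq q ε d (k+1) + d / ((k:ℝ) + 1) ^ (2 - 2*ε)

private lemma Aseq_rec (q ε d : ℝ) (k : ℕ) (hk : 1 ≤ k) :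
    Aseq q ε d (k+1)
      = (1 - q / ((k:ℝ) + 1) ^ (1-ε)) * Aseq q ε d k + d / (k:ℝ) ^ (2 - 2*ε) := by
  cases k with
  | zero => omega
  | succ j =>
    rw [show Aseq q ε d (j+2)
        = (1 - q / ((j:ℝ) + 2) ^ (1-ε)) * Aseq q ε d (j+1) + d / ((j:ℝ) + 1) ^ (2 - 2*ε) from rfl]
    push_cast
    ring_nf

-- coefficient facts
private lemma coeff_nonneg {q ε : ℝ} (hq0 : 0 < q) (hq1 : q ≤ 1) (hε1 : ε < 1)
    {x : ℝ} (hx : 1 ≤ x) : 0 ≤ 1 - q / x ^ (1-ε) := by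
  have hx0 : 0 < x := lt_of_lt_of_le one_pos hx
  have h1 : (1:ℝ) ≤ x ^ (1-ε) := by
    have := Real.rpow_le_rpow_of_exponent_le hx (le_of_lt (by linarith : (0:ℝ) < 1-ε))
    simpa using this
  have : q / x ^ (1-ε) ≤ q := div_le_self hq0.le h1
  linarith

private lemma coeff_le_exp {q ε : ℝ} (hε1 : ε < 1) {x : ℝ} (hx : 1 ≤ x) :
    1 - q / x ^ (1-ε) ≤ Real.exp (-(q * x ^ (ε-1))) := by
  have hx0 : 0 < x := lt_of_lt_of_le one_pos hx
  have hid : q / x ^ (1-ε) = q * x ^ (ε-1) := by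
    rw [show (ε - 1 : ℝ) = -(1-ε) by ring, Real.rpow_neg hx0.le, div_eq_mul_inv]
  rw [hid]
  have := Real.add_one_le_exp (-(q * x ^ (ε-1)))
  linarith

private lemma Aseq_nonneg {q ε d : ℝ} (hq0 : 0 < q) (hq1 : q ≤ 1) (hε1 : ε < 1)
    (hd : 0 ≤ d) : ∀ k : ℕ, 0 ≤ Aseq q ε d k := by
  intro k
  induction k with
  | zero => exact le_refl 0
  | succ n ih =>
    cases n with
    | zero => exact le_refl 0
    | succ j =>
      rw [Aseq_rec q ε d (j+1) (by omega)]
      have hc : 0 ≤ 1 - q / ((j:ℝ) + 1 + 1) ^ (1-ε) := by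
        have := coeff_nonneg hq0 hq1 hε1 (x := ((j:ℝ)+1+1)) (by push_cast; linarith)
        convert this using 3 <;> push_cast <;> ring
      have hD : 0 ≤ d / ((j:ℝ)+1) ^ (2-2*ε) := by positivity
      push_cast
      nlinarith [ih]

/-- comparison of `a` with `Aseq` plus homogeneous part -/
private lemma a_le_Aseq {q ε d : ℝ} (hq0 : 0 < q) (hq1 : q ≤ 1) (hε1 : ε < 1)
    (a : ℕ → ℝ)
    (hrec : ∀ k : ℕ, 1 ≤ k →
      a (k + 1) ≤ (1 - q / ((k : ℝ) + 1) ^ (1 - ε)) * a k + d / (k : ℝ) ^ (2 - 2 * ε)) :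
    ∀ k : ℕ, 1 ≤ k →
      a k ≤ Aseq q ε d k + a 1 * ∏ i ∈ Finset.Icc 2 k, (1 - q / (i:ℝ) ^ (1-ε)) := by
  intro k hk
  induction k, hk using Nat.le_induction with
  | base => simp [Aseq]
  | succ k hk ih =>
    have hc : 0 ≤ 1 - q / ((k:ℝ) + 1) ^ (1-ε) := by
      refine coeff_nonneg hq0 hq1 hε1 ?_
      have : (0:ℝ) ≤ (k:ℝ) := Nat.cast_nonneg k
      linarith
    have hlast : (1 - q / ((↑(k+1):ℝ)) ^ (1-ε)) = (1 - q / ((k:ℝ)+1) ^ (1-ε)) := by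
      push_cast; ring_nf
    have hprod : (∏ i ∈ Finset.Icc 2 (k+1), (1 - q / (i:ℝ) ^ (1-ε)))
        = (∏ i ∈ Finset.Icc 2 k, (1 - q / (i:ℝ) ^ (1-ε))) * (1 - q / ((k:ℝ)+1) ^ (1-ε)) := by
      rw [Finset.prod_Icc_succ_top (by omega : 2 ≤ k + 1), hlast]
    calc a (k+1) ≤ (1 - q / ((k : ℝ) + 1) ^ (1 - ε)) * a k + d / (k : ℝ) ^ (2 - 2 * ε) :=
          hrec k hk
      _ ≤ (1 - q / ((k : ℝ) + 1) ^ (1 - ε))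
            * (Aseq q ε d k + a 1 * ∏ i ∈ Finset.Icc 2 k, (1 - q / (i:ℝ) ^ (1-ε)))
            + d / (k : ℝ) ^ (2 - 2 * ε) := by
          have := mul_le_mul_of_nonneg_left ih hc
          linarith
      _ = Aseq q ε d (k+1)
            + a 1 * ∏ i ∈ Finset.Icc 2 (k+1), (1 - q / (i:ℝ) ^ (1-ε)) := by
          rw [Aseq_rec q ε d k hk, hprod]
          ring

/-- product of coefficients decays like `exp(-(q/ε)((k+1)^ε - (m+1)^ε))`. -/
private lemma prod_bound {q ε : ℝ} (hq0 : 0 < q) (hq1 : q ≤ 1) (hε0 : 0 < ε) (hε1 : ε < 1)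
    (m : ℕ) (hm : 1 ≤ m) :
    ∀ k : ℕ, m ≤ k →
      (∏ i ∈ Finset.Icc (m+1) k, (1 - q / (i:ℝ) ^ (1-ε)))
        ≤ Real.exp (-(q/ε * (((k:ℝ)+1) ^ ε - ((m:ℝ)+1) ^ ε))) := by
  intro k hk
  induction k, hk using Nat.le_induction with
  | base =>
    rw [Finset.Icc_eq_empty (by omega), Finset.prod_empty]
    simp
  | succ k hk ih =>
    have hk1 : (1:ℝ) ≤ (k:ℝ) := by exact_mod_cast le_trans hm hk
    have hk10 : (1:ℝ) ≤ (k:ℝ) + 1 := by linarith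
    have hprod : (∏ i ∈ Finset.Icc (m+1) (k+1), (1 - q / (i:ℝ) ^ (1-ε)))
        = (∏ i ∈ Finset.Icc (m+1) k, (1 - q / (i:ℝ) ^ (1-ε)))
          * (1 - q / ((k:ℝ)+1) ^ (1-ε)) := by
      rw [Finset.prod_Icc_succ_top (by omega : m + 1 ≤ k + 1)]
      norm_num
    have hcnn : 0 ≤ 1 - q / ((k:ℝ)+1) ^ (1-ε) := coeff_nonneg hq0 hq1 hε1 hk10
    have hcexp : 1 - q / ((k:ℝ)+1) ^ (1-ε) ≤ Real.exp (-(q * ((k:ℝ)+1) ^ (ε-1))) :=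
      coeff_le_exp hε1 hk10
    have hpnn : 0 ≤ ∏ i ∈ Finset.Icc (m+1) k, (1 - q / (i:ℝ) ^ (1-ε)) := by
      apply Finset.prod_nonneg
      intro i hi
      have : 1 ≤ (i:ℝ) := by
        have := (Finset.mem_Icc.mp hi).1
        exact_mod_cast le_trans (by omega) this
      exact coeff_nonneg hq0 hq1 hε1 this
    rw [hprod]
    calc (∏ i ∈ Finset.Icc (m+1) k, (1 - q / (i:ℝ) ^ (1-ε)))
          * (1 - q / ((k:ℝ)+1) ^ (1-ε))
        ≤ Real.exp (-(q/ε * (((k:ℝ)+1) ^ ε - ((m:ℝ)+1) ^ ε)))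
          * Real.exp (-(q * ((k:ℝ)+1) ^ (ε-1))) :=
          mul_le_mul ih hcexp hcnn (Real.exp_nonneg _)
      _ = Real.exp (-(q/ε * (((k:ℝ)+1) ^ ε - ((m:ℝ)+1) ^ ε)) + -(q * ((k:ℝ)+1) ^ (ε-1))) := by
          rw [← Real.exp_add]
      _ ≤ Real.exp (-(q/ε * (((k:ℝ)+1+1) ^ ε - ((m:ℝ)+1) ^ ε))) := by
          apply Real.exp_le_exp.mpr
          -- key: (k+2)^ε - (k+1)^ε ≤ ε * (k+1)^(ε-1)
          have hkey : ((k:ℝ)+1+1) ^ ε - ((k:ℝ)+1) ^ ε ≤ ε * ((k:ℝ)+1) ^ (ε-1) := by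
            have := bern_up hε0.le hε1.le (j := (k:ℝ)+1) hk10
            linarith
          have hqe : 0 < q / ε := by positivity
          have h5 := mul_le_mul_of_nonneg_left hkey hqe.le
          have hqq : q / ε * (ε * ((k:ℝ)+1) ^ (ε-1)) = q * ((k:ℝ)+1) ^ (ε-1) := by
            field_simp
          rw [hqq] at h5
          nlinarith
      _ = Real.exp (-(q/ε * ((((k+1:ℕ):ℝ)+1) ^ ε - ((m:ℝ)+1) ^ ε))) := by push_cast; ring_nf

/-- weaker form with `k^ε`. -/
private lemma prod_bound' {q ε : ℝ} (hq0 : 0 < q) (hq1 : q ≤ 1) (hε0 : 0 < ε) (hε1 : ε < 1)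
    (m : ℕ) (hm : 1 ≤ m) (k : ℕ) (hk : m ≤ k) :
    (∏ i ∈ Finset.Icc (m+1) k, (1 - q / (i:ℝ) ^ (1-ε)))
      ≤ Real.exp (-(q/ε * ((k:ℝ) ^ ε - ((m:ℝ)+1) ^ ε))) := by
  refine le_trans (prod_bound hq0 hq1 hε0 hε1 m hm k hk) (Real.exp_le_exp.mpr ?_)
  have : (k:ℝ) ^ ε ≤ ((k:ℝ)+1) ^ ε :=
    Real.rpow_le_rpow (Nat.cast_nonneg k) (by linarith) hε0.le
  have hqe : 0 < q / ε := by positivity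
  nlinarith

/-- burn-in bound: `Aseq m ≤ (d/ε) (m-1)^ε`. -/
private lemma Aseq_le {q ε d : ℝ} (hq0 : 0 < q) (hq1 : q ≤ 1) (hε0 : 0 < ε) (hε1 : ε < 1)
    (hd : 0 ≤ d) :
    ∀ m : ℕ, 1 ≤ m → Aseq q ε d m ≤ d / ε * ((m:ℝ) - 1) ^ ε := by
  intro m hm
  induction m, hm using Nat.le_induction with
  | base => simp [Aseq, Real.zero_rpow hε0.ne']
  | succ m hm ih =>
    have hm1 : (1:ℝ) ≤ (m:ℝ) := by exact_mod_cast hm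
    have hm0 : (0:ℝ) < m := by linarith
    rw [Aseq_rec q ε d m hm]
    have hc0 : 0 ≤ 1 - q / ((m:ℝ) + 1) ^ (1-ε) := coeff_nonneg hq0 hq1 hε1 (by linarith)
    have hc1 : 1 - q / ((m:ℝ) + 1) ^ (1-ε) ≤ 1 := by
      have : 0 ≤ q / ((m:ℝ) + 1) ^ (1-ε) := by positivity
      linarith
    have hA0 : 0 ≤ Aseq q ε d m := Aseq_nonneg hq0 hq1 hε1 hd m
    have hstep1 : (1 - q / ((m:ℝ) + 1) ^ (1-ε)) * Aseq q ε d m ≤ d / ε * ((m:ℝ) - 1) ^ ε := by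
      calc (1 - q / ((m:ℝ) + 1) ^ (1-ε)) * Aseq q ε d m ≤ 1 * Aseq q ε d m :=
            mul_le_mul_of_nonneg_right hc1 hA0
        _ = Aseq q ε d m := one_mul _
        _ ≤ _ := ih
    -- d / m^(2-2ε) ≤ d * m^(ε-1)
    have hstep2 : d / (m:ℝ) ^ (2 - 2*ε) ≤ d * (m:ℝ) ^ (ε-1) := by
      have hmono : (m:ℝ) ^ (1-ε) ≤ (m:ℝ) ^ (2-2*ε) :=
        Real.rpow_le_rpow_of_exponent_le hm1 (by linarith)
      have hpos : (0:ℝ) < (m:ℝ) ^ (1-ε) := Real.rpow_pos_of_pos hm0 _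
      have h1 : d / (m:ℝ) ^ (2-2*ε) ≤ d / (m:ℝ) ^ (1-ε) := by
        apply div_le_div_of_nonneg_left hd ?_ hmono
        · exact hpos
      have h2 : d / (m:ℝ) ^ (1-ε) = d * (m:ℝ) ^ (ε-1) := by
        rw [show (ε - 1 : ℝ) = -(1-ε) by ring, Real.rpow_neg hm0.le, div_eq_mul_inv]
      linarith
    have hbern : ((m:ℝ) - 1) ^ ε ≤ (m:ℝ) ^ ε - ε * (m:ℝ) ^ (ε-1) := bern_down hε0.le hε1.le hm1
    have hfin : d / ε * ((m:ℝ) - 1) ^ ε + d * (m:ℝ) ^ (ε-1) ≤ d / ε * (m:ℝ) ^ ε := by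
      have hde : 0 ≤ d / ε := by positivity
      have := mul_le_mul_of_nonneg_left hbern hde
      have hid : d / ε * (ε * (m:ℝ) ^ (ε-1)) = d * (m:ℝ) ^ (ε-1) := by
        field_simp
      nlinarith
    have hcast : ((m+1:ℕ):ℝ) - 1 = (m:ℝ) := by push_cast; ring
    rw [hcast]
    linarith

set_option maxHeartbeats 1000000 in
private lemma supersol {q ε d : ℝ} (hq0 : 0 < q) (hq1 : q ≤ 1) (hε0 : 0 < ε) (hε1 : ε < 1)
    (hd : 0 ≤ d) {K : ℝ} (hK2 : 2 ≤ K) (hK4 : 4/q ≤ K ^ ε) :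
    (1 - q / (K+1) ^ (1-ε)) * (7*d/q * Real.log K * K ^ (ε-1)) + d / K ^ (2-2*ε)
      ≤ 7*d/q * Real.log (K+1) * (K+1) ^ (ε-1) := by
  have hK0 : (0:ℝ) < K := by linarith
  have hK1 : (1:ℝ) ≤ K := by linarith
  have hK10 : (0:ℝ) < K + 1 := by linarith
  set a := K ^ (1-ε) with ha_def
  set b := (K+1) ^ (1-ε) with hb_def
  have ha : 0 < a := Real.rpow_pos_of_pos hK0 _
  have hb : 0 < b := Real.rpow_pos_of_pos hK10 _
  set P := K ^ (ε-1) with hP_def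
  set P1 := (K+1) ^ (ε-1) with hP1_def
  have hPa : P = a⁻¹ := by
    rw [hP_def, ha_def, show (ε-1:ℝ) = -(1-ε) by ring, Real.rpow_neg hK0.le]
  have hP1b : P1 = b⁻¹ := by
    rw [hP1_def, hb_def, show (ε-1:ℝ) = -(1-ε) by ring, Real.rpow_neg hK10.le]
  have hP : 0 < P := by rw [hPa]; positivity
  have hP1 : 0 < P1 := by rw [hP1b]; positivity
  set L := Real.log K with hL_def
  have hL2 : Real.log 2 ≤ L := Real.log_le_log two_pos hK2
  have hL0 : 0 < L := lt_of_lt_of_le (Real.log_pos one_lt_two) hL2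
  have h821 : (8:ℝ)/21 ≤ L := by
    have := Real.log_two_gt_d9
    linarith
  -- identity: q / b = q * P1
  have hwb : q / b = q * P1 := by
    rw [div_eq_mul_inv, hP1b]
  -- identity: d / K^(2-2ε) = d * (P*P)
  have hD : d / K ^ (2-2*ε) = d * (P*P) := by
    rw [show (2-2*ε:ℝ) = (1-ε)+(1-ε) by ring, Real.rpow_add hK0, ← ha_def]
    rw [hPa]
    field_simp
  -- f1 : P - P1 ≤ (1-ε) * K⁻¹ * P1
  have hbb : b ≤ a + (1-ε) * (a / K) := by
    have h := bern_up (p := 1-ε) (by linarith) (by linarith) hK1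
    have hKe : K ^ ((1-ε)-1) = a / K := by
      rw [Real.rpow_sub_one hK0.ne', ha_def]
    rw [hKe] at h
    exact h
  have f1 : P - P1 ≤ (1-ε) * K⁻¹ * P1 := by
    rw [hPa, hP1b]
    have h' : a⁻¹ - b⁻¹ = (b - a) * (a⁻¹ * b⁻¹) := by field_simp
    rw [h']
    have hba : b - a ≤ (1-ε) * (a/K) := by linarith
    calc (b - a) * (a⁻¹ * b⁻¹) ≤ ((1-ε) * (a/K)) * (a⁻¹ * b⁻¹) := by
          apply mul_le_mul_of_nonneg_right hba (by positivity)
      _ = (1-ε) * K⁻¹ * b⁻¹ := by field_simp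
  -- f2 : (1-ε) * K⁻¹ ≤ q/4 * P
  have hPKe : P = K ^ ε / K := by rw [hP_def, Real.rpow_sub_one hK0.ne']
  have f2 : (1-ε) * K⁻¹ ≤ q/4 * P := by
    rw [hPKe]
    rw [div_le_iff₀ hq0] at hK4
    have h1 : (1-ε) * K⁻¹ ≤ K⁻¹ := by
      have : 0 < K⁻¹ := by positivity
      nlinarith
    have h2 : K⁻¹ ≤ q/4 * (K ^ ε / K) := by
      rw [← sub_nonneg]
      have : q/4 * (K ^ ε / K) - K⁻¹ = (K ^ ε * q - 4) / (4*K) := by field_simp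
      rw [this]
      exact div_nonneg (by linarith) (by positivity)
    linarith
  -- f3 : P ≤ 2 * P1
  have f3 : P ≤ 2 * P1 := by
    have hb2a : b ≤ 2 * a := by
      have h1 : (K+1) ^ (1-ε) ≤ (2*K) ^ (1-ε) :=
        Real.rpow_le_rpow (by linarith) (by linarith) (by linarith)
      have h2 : (2*K) ^ (1-ε) = 2 ^ (1-ε) * a :=
        Real.mul_rpow (by norm_num) hK0.le
      have h3 : (2:ℝ) ^ (1-ε) ≤ 2 := by
        have := Real.rpow_le_rpow_of_exponent_le one_le_two (by linarith : (1-ε:ℝ) ≤ 1)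
        simpa using this
      calc b ≤ (2*K) ^ (1-ε) := h1
        _ = 2 ^ (1-ε) * a := h2
        _ ≤ 2 * a := by nlinarith
    have h4 : (2*a)⁻¹ ≤ b⁻¹ := by
      apply inv_anti₀ (by positivity) hb2a
    have h5 : a⁻¹ = 2 * (2*a)⁻¹ := by
      rw [mul_inv]
      ring
    rw [hPa, hP1b, h5]
    linarith
  -- combine
  set C := 7*d/q with hC_def
  have hC0 : 0 ≤ C := by positivity
  have hC : q * C = 7*d := by
    rw [hC_def]
    field_simp
  have hlogmono : L ≤ Real.log (K+1) := Real.log_le_log hK0 (by linarith)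
  clear_value a b P P1 L C
  have h1 : P - P1 ≤ q/4 * (P*P1) := by
    have := mul_le_mul_of_nonneg_right f2 hP1.le
    calc P - P1 ≤ (1-ε) * K⁻¹ * P1 := f1
      _ ≤ q/4 * P * P1 := this
      _ = q/4 * (P*P1) := by ring
  have hCL0 : 0 ≤ C*L := mul_nonneg hC0 hL0.le
  have t1 : C*L*P - C*L*P1 ≤ 7/4*d*(L*(P*P1)) := by
    have h := mul_le_mul_of_nonneg_left h1 hCL0
    have e1 : C*L*(q/4*(P*P1)) = (q*C)*(L*(P*P1))/4 := by ring
    rw [e1, hC] at h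
    have e2 : C*L*(P - P1) = C*L*P - C*L*P1 := by ring
    rw [e2] at h
    linarith
  have t2 : d*(P*P) ≤ 2*d*(P*P1) := by
    calc d*(P*P) = (d*P)*P := by ring
      _ ≤ (d*P)*(2*P1) := by
          apply mul_le_mul_of_nonneg_left f3 (mul_nonneg hd hP.le)
      _ = 2*d*(P*P1) := by ring
  have t3 : 2*d*(P*P1) ≤ 21/4*d*(L*(P*P1)) := by
    calc 2*d*(P*P1) = (8/21)*(21/4*d*(P*P1)) := by ring
      _ ≤ L*(21/4*d*(P*P1)) := by
          apply mul_le_mul_of_nonneg_right h821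
          exact mul_nonneg (mul_nonneg (by norm_num) hd) (mul_nonneg hP.le hP1.le)
      _ = 21/4*d*(L*(P*P1)) := by ring
  rw [hwb, hD]
  have goal1 : (1 - q*P1) * (C*L*P) + d*(P*P) ≤ C*L*P1 := by
    have expand : (1 - q*P1) * (C*L*P) = C*L*P - (q*C)*(L*(P*P1)) := by ring
    rw [expand, hC]
    linarith [t1, t2, t3]
  calc (1 - q*P1) * (C*L*P) + d*(P*P) ≤ C*L*P1 := goal1
    _ ≤ C * Real.log (K+1) * P1 := by
        apply mul_le_mul_of_nonneg_right ?_ hP1.le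
        exact mul_le_mul_of_nonneg_left hlogmono hC0

private lemma phase2 {q ε d : ℝ} (hq0 : 0 < q) (hq1 : q ≤ 1) (hε0 : 0 < ε) (hε1 : ε < 1)
    (hd : 0 ≤ d) (N : ℕ) (hN2 : 2 ≤ N) (hN4 : 4/q ≤ (N:ℝ) ^ ε) :
    ∀ k : ℕ, N ≤ k →
      Aseq q ε d k ≤ 7*d/q * Real.log k * (k:ℝ) ^ (ε-1)
        + Aseq q ε d N * ∏ i ∈ Finset.Icc (N+1) k, (1 - q / (i:ℝ) ^ (1-ε)) := by
  intro k hk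
  induction k, hk using Nat.le_induction with
  | base =>
    rw [Finset.Icc_eq_empty (by omega), Finset.prod_empty, mul_one]
    have h1 : 0 ≤ 7*d/q * Real.log N * (N:ℝ) ^ (ε-1) := by
      apply mul_nonneg (mul_nonneg (by positivity) ?_) (Real.rpow_nonneg (Nat.cast_nonneg N) _)
      exact Real.log_nonneg (by exact_mod_cast Nat.one_le_cast.mpr (by omega))
    linarith
  | succ k hk ih =>
    have hk1 : 1 ≤ k := by omega
    have hkR2 : (2:ℝ) ≤ (k:ℝ) := by exact_mod_cast le_trans hN2 hk
    have hk4 : 4/q ≤ (k:ℝ) ^ ε := by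
      refine le_trans hN4 (Real.rpow_le_rpow (Nat.cast_nonneg N) ?_ hε0.le)
      exact_mod_cast hk
    have hss := supersol hq0 hq1 hε0 hε1 hd hkR2 hk4
    have hc : 0 ≤ 1 - q / ((k:ℝ) + 1) ^ (1-ε) := coeff_nonneg hq0 hq1 hε1 (by linarith)
    have hAN : 0 ≤ Aseq q ε d N := Aseq_nonneg hq0 hq1 hε1 hd N
    have hlast : (1 - q / ((↑(k+1):ℝ)) ^ (1-ε)) = (1 - q / ((k:ℝ)+1) ^ (1-ε)) := by
      push_cast; ring_nf
    have hprod : (∏ i ∈ Finset.Icc (N+1) (k+1), (1 - q / (i:ℝ) ^ (1-ε)))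
        = (∏ i ∈ Finset.Icc (N+1) k, (1 - q / (i:ℝ) ^ (1-ε))) * (1 - q / ((k:ℝ)+1) ^ (1-ε)) := by
      rw [Finset.prod_Icc_succ_top (by omega : N + 1 ≤ k + 1), hlast]
    rw [Aseq_rec q ε d k hk1]
    have hcast : ((↑(k+1):ℝ)) = (k:ℝ) + 1 := by push_cast; ring
    calc (1 - q / ((k:ℝ) + 1) ^ (1-ε)) * Aseq q ε d k + d / (k:ℝ) ^ (2 - 2*ε)
        ≤ (1 - q / ((k:ℝ) + 1) ^ (1-ε))
            * (7*d/q * Real.log k * (k:ℝ) ^ (ε-1)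
               + Aseq q ε d N * ∏ i ∈ Finset.Icc (N+1) k, (1 - q / (i:ℝ) ^ (1-ε)))
            + d / (k:ℝ) ^ (2 - 2*ε) := by
          have := mul_le_mul_of_nonneg_left ih hc
          linarith
      _ = ((1 - q / ((k:ℝ) + 1) ^ (1-ε)) * (7*d/q * Real.log k * (k:ℝ) ^ (ε-1))
            + d / (k:ℝ) ^ (2 - 2*ε))
          + Aseq q ε d N * ((∏ i ∈ Finset.Icc (N+1) k, (1 - q / (i:ℝ) ^ (1-ε)))
              * (1 - q / ((k:ℝ)+1) ^ (1-ε))) := by ring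
      _ ≤ 7*d/q * Real.log ((k:ℝ)+1) * ((k:ℝ)+1) ^ (ε-1)
          + Aseq q ε d N * ∏ i ∈ Finset.Icc (N+1) (k+1), (1 - q / (i:ℝ) ^ (1-ε)) := by
          rw [hprod]
          linarith [hss]
      _ = 7*d/q * Real.log (↑(k+1)) * (↑(k+1):ℝ) ^ (ε-1)
          + Aseq q ε d N * ∏ i ∈ Finset.Icc (N+1) (k+1), (1 - q / (i:ℝ) ^ (1-ε)) := by
          rw [hcast]

set_option maxHeartbeats 1000000 in
private lemma keyineq {q ε : ℝ} (hq0 : 0 < q) (hq1 : q ≤ 1) (hε0 : 0 < ε) (hε1 : ε < 1)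
    {u : ℝ} (hu : 12/(q*ε) * Real.log (4/(q*ε)) ≤ u) :
    4 * Real.exp ((6 - q*u)/ε) ≤ 2 * Real.log u * u ^ (1 - 1/ε) := by
  have hqε : 0 < q*ε := mul_pos hq0 hε0
  have hqε1 : q*ε ≤ 1 := by nlinarith
  set L := Real.log (4/(q*ε)) with hL_def
  have h4qe : (4:ℝ) ≤ 4/(q*ε) := by
    rw [le_div_iff₀ hqε]
    nlinarith
  have hlog2 := Real.log_two_gt_d9
  have hL : (5:ℝ)/4 ≤ L := by
    have h1 : Real.log 4 ≤ L := Real.log_le_log (by norm_num) h4qe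
    have h2 : Real.log 4 = 2 * Real.log 2 := by
      rw [show (4:ℝ) = 2^2 by norm_num, Real.log_pow]
      push_cast; ring
    linarith
  set B := 12/(q*ε) * L with hB_def
  have hB15 : (15:ℝ) ≤ B := by
    rw [hB_def]
    have h1 : (12:ℝ) ≤ 12/(q*ε) := by
      rw [le_div_iff₀ hqε]
      nlinarith
    nlinarith
  have hu15 : (15:ℝ) ≤ u := le_trans hB15 hu
  have hu0 : (0:ℝ) < u := by linarith
  -- log B = log (3L) + L
  have hL0 : (0:ℝ) < L := by linarith
  have hlogB : Real.log B = Real.log (3*L) + L := by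
    rw [hB_def, show 12/(q*ε) * L = (3*L) * (4/(q*ε)) by ring]
    rw [Real.log_mul (by positivity) (by positivity), hL_def]
  have hlog3L : Real.log (3*L) ≤ 3*L - 1 := by
    have := Real.log_le_sub_one_of_pos (show (0:ℝ) < 3*L by positivity)
    linarith
  have hqB : 12*L ≤ q*B := by
    rw [hB_def]
    rw [show q * (12/(q*ε) * L) = 12*L * (1/ε) by field_simp]
    nlinarith [show (1:ℝ) ≤ 1/ε by rw [le_div_iff₀ hε0]; linarith]
  have hqB1 : (1:ℝ) ≤ q*B := by linarith
  -- qu ≥ 7 + log u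
  have hstep : 7 + Real.log u ≤ q*u := by
    have hlogu : Real.log u ≤ Real.log B + q*(u - B) := by
      have h1 : Real.log u - Real.log B = Real.log (u/B) := by
        rw [Real.log_div hu0.ne' (by positivity : B ≠ 0)]
      have h2 : Real.log (u/B) ≤ u/B - 1 := Real.log_le_sub_one_of_pos (by positivity)
      have h3 : u/B - 1 ≤ q*(u-B) := by
        rw [show u/B - 1 = (u-B)/B by field_simp]
        rw [div_le_iff₀ (by positivity : (0:ℝ) < B)]
        have huB : 0 ≤ u - B := by linarith
        nlinarith
      linarith
    have h4 : Real.log B ≤ L + 3*L - 1 := by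
      rw [hlogB]; linarith
    have h5 : 7 + Real.log B ≤ q*B := by
      have : 7 + (L + 3*L - 1) ≤ 12*L := by linarith
      linarith
    linarith
  -- conclude
  have hlogu1 : (1:ℝ) ≤ Real.log u := by
    rw [Real.le_log_iff_exp_le hu0]
    have := Real.exp_one_lt_d9
    linarith
  have hrw : u ^ (1 - 1/ε) = Real.exp ((1 - 1/ε) * Real.log u) := by
    rw [Real.rpow_def_of_pos hu0]
    ring_nf
  rw [hrw]
  have hmain : Real.exp (Real.log 2 + (6 - q*u)/ε) ≤ Real.exp ((1 - 1/ε) * Real.log u) := by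
    apply Real.exp_le_exp.mpr
    have key : ε * Real.log 2 + 6 - q*u ≤ (ε - 1) * Real.log u := by
      have hln2 : Real.log 2 ≤ 1 := by
        have := Real.log_le_sub_one_of_pos (show (0:ℝ) < 2 by norm_num)
        linarith
      have h1 : (1 - ε) * Real.log u ≤ Real.log u := by nlinarith
      nlinarith
    have e1 : Real.log 2 + (6 - q*u)/ε = (ε * Real.log 2 + 6 - q*u)/ε := by
      field_simp
      ring
    have e2 : (1 - 1/ε) * Real.log u = (ε - 1) * Real.log u / ε := by
      field_simp
    rw [e1, e2, div_le_div_iff₀ hε0 hε0]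
    exact mul_le_mul_of_nonneg_right key hε0.le
  calc 4 * Real.exp ((6 - q*u)/ε) = 2 * Real.exp (Real.log 2 + (6 - q*u)/ε) := by
        rw [Real.exp_add, Real.exp_log (by norm_num : (0:ℝ) < 2)]
        ring
    _ ≤ 2 * Real.exp ((1 - 1/ε) * Real.log u) := by linarith [hmain]
    _ ≤ 2 * Real.log u * Real.exp ((1 - 1/ε) * Real.log u) := by
        nlinarith [Real.exp_pos ((1 - 1/ε) * Real.log u)]

set_option maxHeartbeats 1000000 in
/-- decay of a sequence satisfying
`a(k+1) ≤ (1 - q/(k+1)^(1-ε)) a(k) + d/k^(2-2ε)`. -/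
theorem stmt11 (q ε d : ℝ) (hq0 : 0 < q) (hq1 : q ≤ 1) (hε0 : 0 < ε) (hε1 : ε < 1)
    (hd : 0 ≤ d) (a : ℕ → ℝ) (ha1 : 0 ≤ a 1)
    (hrec : ∀ k : ℕ, 1 ≤ k →
      a (k + 1) ≤ (1 - q / ((k : ℝ) + 1) ^ (1 - ε)) * a k + d / (k : ℝ) ^ (2 - 2 * ε)) :
    ∀ k : ℕ, (12 / (q * ε) * Real.log (4 / (q * ε))) ^ (1 / ε) ≤ (k : ℝ) →
      a k ≤ (9 * d / q) * Real.log k / (k : ℝ) ^ (1 - ε)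
        + a 1 * Real.exp (-(q * ((k : ℝ) ^ ε - 2) / ε)) := by
  intro k hk
  have hqε : 0 < q*ε := mul_pos hq0 hε0
  have hqε1 : q*ε ≤ 1 := by nlinarith
  have hL : (5:ℝ)/4 ≤ Real.log (4/(q*ε)) := by
    have h4qe : (4:ℝ) ≤ 4/(q*ε) := by
      rw [le_div_iff₀ hqε]; nlinarith
    have h1 : Real.log 4 ≤ Real.log (4/(q*ε)) := Real.log_le_log (by norm_num) h4qe
    have h2 : Real.log 4 = 2 * Real.log 2 := by
      rw [show (4:ℝ) = 2^2 by norm_num, Real.log_pow]; push_cast; ring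
    have := Real.log_two_gt_d9
    linarith
  have hL0 : (0:ℝ) < Real.log (4/(q*ε)) := by linarith
  have hB15 : (15:ℝ) ≤ 12/(q*ε) * Real.log (4/(q*ε)) := by
    have h1 : (12:ℝ) ≤ 12/(q*ε) := by
      rw [le_div_iff₀ hqε]; nlinarith
    nlinarith
  have hB0 : (0:ℝ) < 12/(q*ε) * Real.log (4/(q*ε)) := by linarith
  have hinv1 : (1:ℝ) ≤ 1/ε := by rw [le_div_iff₀ hε0]; linarith
  -- k is large
  have hk15 : (15:ℝ) ≤ (k:ℝ) := by
    have h1 : (15:ℝ) = (15:ℝ) ^ (1:ℝ) := (Real.rpow_one 15).symm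
    have h2 : (15:ℝ) ^ (1:ℝ) ≤ (15:ℝ) ^ (1/ε) :=
      Real.rpow_le_rpow_of_exponent_le (by norm_num) hinv1
    have h3 : (15:ℝ) ^ (1/ε) ≤ (12/(q*ε) * Real.log (4/(q*ε))) ^ (1/ε) :=
      Real.rpow_le_rpow (by norm_num) hB15 (by positivity)
    linarith
  have hk0 : (0:ℝ) < (k:ℝ) := by linarith
  have hk1N : 1 ≤ k := by exact_mod_cast Nat.one_le_cast.mpr (by
    have : (1:ℝ) ≤ (k:ℝ) := by linarith
    exact_mod_cast this)
  -- B ≤ k^ε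
  have hkB : 12/(q*ε) * Real.log (4/(q*ε)) ≤ (k:ℝ) ^ ε := by
    have h1 : ((12/(q*ε) * Real.log (4/(q*ε))) ^ (1/ε)) ^ ε ≤ (k:ℝ) ^ ε :=
      Real.rpow_le_rpow (by positivity) hk hε0.le
    rwa [← Real.rpow_mul hB0.le, one_div_mul_cancel hε0.ne', Real.rpow_one] at h1
  -- the burn-in threshold N
  set x := (4/q) ^ (1/ε) with hx_def
  have hq4 : (4:ℝ) ≤ 4/q := by
    rw [le_div_iff₀ hq0]; nlinarith
  have hx4 : (4:ℝ) ≤ x := by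
    have h1 : (4:ℝ) = (4:ℝ) ^ (1:ℝ) := (Real.rpow_one 4).symm
    have h2 : (4:ℝ) ^ (1:ℝ) ≤ (4:ℝ) ^ (1/ε) :=
      Real.rpow_le_rpow_of_exponent_le (by norm_num) hinv1
    have h3 : (4:ℝ) ^ (1/ε) ≤ x := Real.rpow_le_rpow (by norm_num) hq4 (by positivity)
    linarith
  have hx0 : (0:ℝ) < x := by linarith
  have hxε : x ^ ε = 4/q := by
    rw [hx_def, ← Real.rpow_mul (by positivity : (0:ℝ) ≤ 4/q),
      one_div_mul_cancel hε0.ne', Real.rpow_one]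
  set N := ⌈x⌉₊ with hN_def
  have hNx : x ≤ (N:ℝ) := Nat.le_ceil x
  have hN4R : (4:ℝ) ≤ (N:ℝ) := le_trans hx4 hNx
  have hN2 : 2 ≤ N := by exact_mod_cast (by linarith : (2:ℝ) ≤ (N:ℝ))
  have hN4 : 4/q ≤ (N:ℝ) ^ ε := by
    rw [← hxε]
    exact Real.rpow_le_rpow hx0.le hNx hε0.le
  have hNub : (N:ℝ) < x + 1 := Nat.ceil_lt_add_one hx0.le
  -- N ≤ k
  have hq4B : 4/q ≤ 12/(q*ε) * Real.log (4/(q*ε)) := by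
    rw [div_le_iff₀ hq0]
    have hBqe : (12/(q*ε) * Real.log (4/(q*ε))) * q * ε = 12 * Real.log (4/(q*ε)) := by
      field_simp
    have h2 : 0 ≤ (12/(q*ε) * Real.log (4/(q*ε))) * q := mul_nonneg hB0.le hq0.le
    nlinarith [mul_nonneg h2 (by linarith : (0:ℝ) ≤ 1-ε)]
  have hxk : x ≤ (k:ℝ) := by
    by_contra hcon
    push_neg at hcon
    have : (k:ℝ) ^ ε < x ^ ε := Real.rpow_lt_rpow (Nat.cast_nonneg k) hcon hε0
    rw [hxε] at this
    linarith
  have hkN : N ≤ k := Nat.ceil_le.mpr (by exact_mod_cast hxk)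
  -- (N+1)^ε ≤ 6/q
  have h6q : ((N:ℝ)+1) ^ ε ≤ 6/q := by
    have h1 : ((N:ℝ)+1) ^ ε ≤ (3/2*x) ^ ε :=
      Real.rpow_le_rpow (by positivity) (by linarith) hε0.le
    have h2 : (3/2*x) ^ ε = (3/2:ℝ) ^ ε * x ^ ε := Real.mul_rpow (by norm_num) hx0.le
    have h3 : (3/2:ℝ) ^ ε ≤ 3/2 := by
      have := Real.rpow_le_rpow_of_exponent_le (by norm_num : (1:ℝ) ≤ 3/2) hε1.le
      simpa using this
    have h4 : (3/2:ℝ) ^ ε * x ^ ε ≤ 3/2 * (4/q) := by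
      rw [hxε]
      apply mul_le_mul_of_nonneg_right h3 (by positivity)
    have h5 : (3/2:ℝ) * (4/q) = 6/q := by ring
    linarith
  -- A_N ≤ (d/ε)·(4/q)
  have hAN0 : 0 ≤ Aseq q ε d N := Aseq_nonneg hq0 hq1 hε1 hd N
  have hANle : Aseq q ε d N ≤ d/ε * (4/q) := by
    have h1 := Aseq_le hq0 hq1 hε0 hε1 hd N (by omega)
    have h2 : ((N:ℝ)-1) ^ ε ≤ x ^ ε :=
      Real.rpow_le_rpow (by linarith) (by linarith) hε0.le
    rw [hxε] at h2
    have h3 : d/ε * ((N:ℝ)-1) ^ ε ≤ d/ε * (4/q) :=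
      mul_le_mul_of_nonneg_left h2 (by positivity)
    linarith
  -- main decomposition
  have hmain := a_le_Aseq hq0 hq1 hε1 a hrec k hk1N
  have hphase := phase2 hq0 hq1 hε0 hε1 hd N hN2 hN4 k hkN
  -- transient bound
  have hQle := prod_bound' hq0 hq1 hε0 hε1 N (by omega) k hkN
  have hQ0 : 0 ≤ ∏ i ∈ Finset.Icc (N+1) k, (1 - q / (i:ℝ) ^ (1-ε)) := by
    apply Finset.prod_nonneg
    intro i hi
    have : 1 ≤ (i:ℝ) := by
      have := (Finset.mem_Icc.mp hi).1
      exact_mod_cast le_trans (by omega) this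
    exact coeff_nonneg hq0 hq1 hε1 this
  have hQle2 : (∏ i ∈ Finset.Icc (N+1) k, (1 - q / (i:ℝ) ^ (1-ε)))
      ≤ Real.exp ((6 - q * (k:ℝ)^ε)/ε) := by
    refine le_trans hQle (Real.exp_le_exp.mpr ?_)
    have hqed : 0 < q/ε := by positivity
    have he : (6 - q * (k:ℝ)^ε)/ε = -(q/ε * ((k:ℝ)^ε - 6/q)) := by
      field_simp
      ring
    rw [he]
    nlinarith [h6q]
  have htrans : Aseq q ε d N * (∏ i ∈ Finset.Icc (N+1) k, (1 - q / (i:ℝ) ^ (1-ε)))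
      ≤ (d/(q*ε)) * (4 * Real.exp ((6 - q * (k:ℝ)^ε)/ε)) := by
    have h := mul_le_mul hANle hQle2 hQ0 (by positivity)
    have he : d/ε * (4/q) * Real.exp ((6 - q * (k:ℝ)^ε)/ε)
        = (d/(q*ε)) * (4 * Real.exp ((6 - q * (k:ℝ)^ε)/ε)) := by
      field_simp
    rw [he] at h
    linarith
  -- apply key inequality with u = k^ε
  have hkey := keyineq hq0 hq1 hε0 hε1 hkB
  have htrans2 : Aseq q ε d N * (∏ i ∈ Finset.Icc (N+1) k, (1 - q / (i:ℝ) ^ (1-ε)))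
      ≤ 2*d/q * Real.log k * (k:ℝ) ^ (ε-1) := by
    have h1 : (d/(q*ε)) * (4 * Real.exp ((6 - q * (k:ℝ)^ε)/ε))
        ≤ (d/(q*ε)) * (2 * Real.log ((k:ℝ)^ε) * ((k:ℝ)^ε) ^ (1 - 1/ε)) :=
      mul_le_mul_of_nonneg_left hkey (by positivity)
    have hlogu : Real.log ((k:ℝ)^ε) = ε * Real.log k := Real.log_rpow hk0 ε
    have hupow : ((k:ℝ)^ε) ^ (1 - 1/ε) = (k:ℝ) ^ (ε-1) := by
      rw [← Real.rpow_mul hk0.le]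
      congr 1
      field_simp
    have he2 : (d/(q*ε)) * (2 * (ε * Real.log k) * (k:ℝ) ^ (ε-1))
        = 2*d/q * Real.log k * (k:ℝ) ^ (ε-1) := by
      field_simp
    rw [hlogu, hupow, he2] at h1
    linarith
  -- homogeneous part
  have hPi : (∏ i ∈ Finset.Icc 2 k, (1 - q / (i:ℝ) ^ (1-ε)))
      ≤ Real.exp (-(q * ((k:ℝ)^ε - 2)/ε)) := by
    have h1 := prod_bound' hq0 hq1 hε0 hε1 1 le_rfl k hk1N
    have h2 : ((1:ℕ):ℝ) + 1 = 2 := by norm_num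
    rw [h2] at h1
    refine le_trans h1 (Real.exp_le_exp.mpr ?_)
    have h2e : (2:ℝ) ^ ε ≤ 2 := by
      have := Real.rpow_le_rpow_of_exponent_le (by norm_num : (1:ℝ) ≤ 2) hε1.le
      simpa using this
    have he : -(q * ((k:ℝ)^ε - 2)/ε) = -(q/ε * ((k:ℝ)^ε - 2)) := by
      field_simp
    rw [he]
    have hqed : 0 < q/ε := by positivity
    nlinarith
  have hhom : a 1 * (∏ i ∈ Finset.Icc 2 k, (1 - q / (i:ℝ) ^ (1-ε)))
      ≤ a 1 * Real.exp (-(q * ((k:ℝ)^ε - 2)/ε)) :=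
    mul_le_mul_of_nonneg_left hPi ha1
  -- final identity and assembly
  have hfin : (9 * d / q) * Real.log k / (k:ℝ) ^ (1-ε)
      = 7*d/q * Real.log k * (k:ℝ) ^ (ε-1) + 2*d/q * Real.log k * (k:ℝ) ^ (ε-1) := by
    have h1 : (k:ℝ) ^ (ε-1) = ((k:ℝ) ^ (1-ε))⁻¹ := by
      rw [show (ε-1:ℝ) = -(1-ε) by ring, Real.rpow_neg hk0.le]
    rw [h1, div_eq_mul_inv]
    ring
  rw [hfin]
  linarith
end

section
/- Let q ∈ (0,1], ε ∈ (0,1), d ≥ 0, and let T be a positive integer. Let t_1 < t_2 < t_3 < … be positive integers with t_1 = 1 and t_{k+1} − t_k < T for all k ≥ 1, and let a : ℕ → ℝ satisfy a(t_1) ≥ 0 and a(t_{k+1}) ≤ (1 − q/t_{k+1}^{1−ε}) a(t_k) + d/t_k^{2−2ε} for every integer k ≥ 1. Then for every integer k ≥ [ (12T/(qε)) ln(4T/(qε)) ]^{1/ε}, one has a(t_k) ≤ (9dT/q) / k^{1−ε} + a(t_1) exp( −q(k^ε − 2)/(Tε) ). -/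
/-- Bernoulli inequality for exponents in `[0,1]`. -/
lemma stmt12_bern {x p : ℝ} (hx : -1 ≤ x) (hp0 : 0 ≤ p) (hp1 : p ≤ 1) :
    (1 + x) ^ p ≤ 1 + p * x := by
  have h := Real.geom_mean_le_arith_mean2_weighted hp0 (by linarith : (0:ℝ) ≤ 1 - p)
    (by linarith : (0:ℝ) ≤ 1 + x) zero_le_one (by ring)
  rw [Real.one_rpow, mul_one] at h
  nlinarith

lemma stmt12_diff_le {k ε : ℝ} (hk : 1 ≤ k) (hε0 : 0 < ε) (hε1 : ε ≤ 1) :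
    (k+1)^ε - k^ε ≤ ε * k^(ε-1) := by
  have hk0 : 0 < k := by linarith
  have hpos : (0:ℝ) ≤ 1 + 1/k := by positivity
  have h2 : (k+1)^ε = k^ε * (1+1/k)^ε := by
    rw [← Real.mul_rpow hk0.le hpos]; congr 1; field_simp
  have h3 : (1+1/k)^ε ≤ 1 + ε * (1/k) := by
    have := one_div_pos.mpr hk0
    exact stmt12_bern (by linarith) hε0.le hε1
  have h4 : k^(ε-1) = k^ε / k := by
    rw [Real.rpow_sub hk0, Real.rpow_one]
  have h5 : (0:ℝ) < k^ε := Real.rpow_pos_of_pos hk0 _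
  rw [h2, h4]
  have := mul_le_mul_of_nonneg_left h3 h5.le
  calc k^ε * (1+1/k)^ε - k^ε ≤ k^ε * (1 + ε * (1/k)) - k^ε := by linarith
    _ = ε * (k^ε / k) := by field_simp; ring

lemma stmt12_diff_ge {k ε : ℝ} (hk : 1 ≤ k) (hε0 : 0 < ε) (hε1 : ε ≤ 1) :
    ε * (k+1)^(ε-1) ≤ (k+1)^ε - k^ε := by
  have hk1 : (0:ℝ) < k + 1 := by linarith
  have hd1 : 1/(k+1) ≤ (1:ℝ) := by
    rw [div_le_one hk1]; linarith
  have hpos : (0:ℝ) ≤ 1 + (-(1/(k+1))) := by linarith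
  have h2 : k^ε = (k+1)^ε * (1 + (-(1/(k+1))))^ε := by
    rw [← Real.mul_rpow hk1.le hpos]; congr 1; field_simp; ring
  have h3 : (1 + (-(1/(k+1))))^ε ≤ 1 + ε * (-(1/(k+1))) :=
    stmt12_bern (by linarith) hε0.le hε1
  have h4 : (k+1)^(ε-1) = (k+1)^ε / (k+1) := by
    rw [Real.rpow_sub hk1, Real.rpow_one]
  have h5 : (0:ℝ) < (k+1)^ε := Real.rpow_pos_of_pos hk1 _
  have h6 := mul_le_mul_of_nonneg_left h3 h5.le
  rw [h4]
  calc ε * ((k+1)^ε / (k+1)) = (k+1)^ε - (k+1)^ε * (1 + ε * (-(1/(k+1)))) := by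
        field_simp; ring
    _ ≤ (k+1)^ε - k^ε := by rw [h2]; linarith

lemma stmt12_inv_diff_le {k ε : ℝ} (hk : 1 ≤ k) (hε0 : 0 < ε) (hε1 : ε ≤ 1) :
    k^(ε-1) - (k+1)^(ε-1) ≤ k^(ε-2) := by
  have hk0 : 0 < k := by linarith
  have hpos : (0:ℝ) ≤ 1 + 1/k := by positivity
  have h2 : (k+1)^(ε-1) = k^(ε-1) * (1+1/k)^(ε-1) := by
    rw [← Real.mul_rpow hk0.le hpos]; congr 1; field_simp
  have h3 : (1+1/k)^(-1:ℝ) ≤ (1+1/k)^(ε-1) :=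
    Real.rpow_le_rpow_of_exponent_le (by nlinarith [one_div_pos.mpr hk0]) (by linarith)
  have h4 : (1+1/k)^(-1:ℝ) = k/(k+1) := by
    rw [Real.rpow_neg_one]; field_simp
  have h5 : (1:ℝ) - 1/k ≤ k/(k+1) := by
    rw [le_div_iff₀ (by linarith : (0:ℝ) < k+1)]
    have : (1 - 1/k) * (k+1) = k - 1/k := by field_simp; ring
    rw [this]
    have := one_div_pos.mpr hk0
    linarith
  have h6 : 1 - 1/k ≤ (1+1/k)^(ε-1) := by rw [← h4] at h5; linarith
  have h7 : (0:ℝ) < k^(ε-1) := Real.rpow_pos_of_pos hk0 _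
  have h8 : k^(ε-2) = k^(ε-1) / k := by
    rw [show ε-2 = (ε-1)-1 by ring, Real.rpow_sub hk0, Real.rpow_one]
  rw [h2, h8]
  have h9 := mul_le_mul_of_nonneg_left h6 h7.le
  calc k^(ε-1) - k^(ε-1) * (1+1/k)^(ε-1) ≤ k^(ε-1) - k^(ε-1)*(1 - 1/k) := by linarith
    _ = k^(ε-1)/k := by field_simp; ring

lemma stmt12_half {k ε : ℝ} (hk : 1 ≤ k) (hε0 : 0 ≤ ε) (hε1 : ε ≤ 1) :
    k^(ε-1) ≤ 2 * (k+1)^(ε-1) := by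
  have hk0 : 0 < k := by linarith
  have h1 : (k+1)^(ε-1) ≥ (2*k)^(ε-1) :=
    Real.rpow_le_rpow_of_nonpos (by linarith) (by linarith) (by linarith)
  have h2 : (2*k)^(ε-1) = 2^(ε-1) * k^(ε-1) :=
    Real.mul_rpow (by norm_num) hk0.le
  have h3 : (2:ℝ)^(-1:ℝ) ≤ 2^(ε-1) :=
    Real.rpow_le_rpow_of_exponent_le (by norm_num) (by linarith)
  have h4 : (2:ℝ)^(-1:ℝ) = 1/2 := by rw [Real.rpow_neg_one]; norm_num
  have h7 : (0:ℝ) < k^(ε-1) := Real.rpow_pos_of_pos hk0 _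
  have h5 : (1/2) * k^(ε-1) ≤ 2^(ε-1) * k^(ε-1) := by
    rw [← h4]; exact mul_le_mul_of_nonneg_right h3 h7.le
  linarith [h2 ▸ h1]

set_option maxHeartbeats 1000000 in
lemma stmt12_num {ε Y s L : ℝ} (hε0 : 0 < ε) (hε1 : ε ≤ 1) (hY : 8 ≤ Y)
    (hs : 3 * Y * Real.log Y ≤ s) (hL : 0 ≤ L) (hsL : Real.log s = ε * L) :
    Real.log 6 - Real.log ε + 3/ε + (1-ε)*L ≤ 4*s/(Y*ε^2) := by
  have hY0 : (0:ℝ) < Y := by linarith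
  have hG : 2 ≤ Real.log Y := by
    have he : Real.exp 2 < 8 := by
      have h1 := Real.exp_one_lt_d9
      have : Real.exp 2 = Real.exp 1 * Real.exp 1 := by
        rw [← Real.exp_add]; norm_num
      nlinarith [Real.exp_pos 1]
    have : Real.exp 2 ≤ Y := by linarith
    calc (2:ℝ) = Real.log (Real.exp 2) := (Real.log_exp 2).symm
      _ ≤ Real.log Y := Real.log_le_log (Real.exp_pos 2) this
  have hs0 : (0:ℝ) < s := by nlinarith
  have h1 : Real.log s ≤ s/Y^2 + 2*Real.log Y - 1 := by
    have h := Real.log_le_sub_one_of_pos (show (0:ℝ) < s/Y^2 by positivity)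
    have heq : Real.log (s/Y^2) = Real.log s - 2*Real.log Y := by
      rw [Real.log_div hs0.ne' (by positivity), Real.log_pow]
      push_cast; ring
    rw [heq] at h; linarith
  have h2 : Real.log 6 ≤ Real.log Y := Real.log_le_log (by norm_num) (by linarith)
  have h3 : -Real.log ε ≤ 1/ε - 1 := by
    have h := Real.log_le_sub_one_of_pos (show (0:ℝ) < ε⁻¹ by positivity)
    rw [Real.log_inv] at h
    rw [one_div]; linarith
  set G := Real.log Y with hGdef
  rw [le_div_iff₀ (show (0:ℝ) < Y*ε^2 by positivity)]
  have expand : (Real.log 6 - Real.log ε + 3/ε + (1-ε)*L)*(Y*ε^2)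
      = Real.log 6 * (Y*ε^2) + (-Real.log ε)*(Y*ε^2) + 3*ε*Y + (1-ε)*L*(Y*ε^2) := by
    field_simp; ring
  rw [expand]
  have hYe2 : (0:ℝ) ≤ Y*ε^2 := by positivity
  have hε2le : ε^2 ≤ 1 := by nlinarith
  have hYe2Y : Y*ε^2 ≤ Y := by nlinarith
  have hεY : ε*Y ≤ Y := by nlinarith
  have hlog6 : (0:ℝ) ≤ Real.log 6 := Real.log_nonneg (by norm_num)
  have hA : Real.log 6 * (Y*ε^2) ≤ Y*G := by
    have k1 := mul_le_mul_of_nonneg_right h2 hYe2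
    have k2 : G*(Y*ε^2) ≤ G*Y := mul_le_mul_of_nonneg_left hYe2Y (by linarith)
    nlinarith
  have hB : (-Real.log ε)*(Y*ε^2) ≤ Y := by
    have k1 := mul_le_mul_of_nonneg_right h3 hYe2
    have k2 : (1/ε - 1)*(Y*ε^2) = ε*Y - ε^2*Y := by field_simp
    have k3 : (0:ℝ) ≤ ε^2*Y := by positivity
    linarith [k2 ▸ k1]
  have hC : 3*ε*Y ≤ 3*Y := by linarith
  have hεL : ε*L ≤ s/Y^2 + 2*G - 1 := by rw [← hsL]; exact h1
  have hD : (1-ε)*L*(Y*ε^2) ≤ s/Y + 2*Y*G := by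
    have k0 : (0:ℝ) ≤ L*(Y*ε^2) := by positivity
    have k1 : (1-ε)*L*(Y*ε^2) ≤ L*(Y*ε^2) := by
      have h := mul_le_mul_of_nonneg_right (show (1-ε:ℝ) ≤ 1 by linarith) k0
      nlinarith
    have k2 : L*(Y*ε^2) = (ε*L)*(Y*ε) := by ring
    have k3 : (ε*L)*(Y*ε) ≤ (s/Y^2 + 2*G - 1)*(Y*ε) :=
      mul_le_mul_of_nonneg_right hεL (by positivity)
    have knn : (0:ℝ) ≤ s/Y^2 + 2*G - 1 := by
      have : (0:ℝ) ≤ s/Y^2 := by positivity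
      linarith
    have k4 : (s/Y^2 + 2*G - 1)*(Y*ε) ≤ (s/Y^2 + 2*G - 1)*Y := by
      apply mul_le_mul_of_nonneg_left _ knn
      nlinarith
    have k5 : (s/Y^2 + 2*G - 1)*Y = s/Y + 2*Y*G - Y := by
      field_simp
    calc (1-ε)*L*(Y*ε^2) ≤ L*(Y*ε^2) := k1
      _ = (ε*L)*(Y*ε) := k2
      _ ≤ (s/Y^2 + 2*G - 1)*(Y*ε) := k3
      _ ≤ (s/Y^2 + 2*G - 1)*Y := k4
      _ = s/Y + 2*Y*G - Y := k5
      _ ≤ s/Y + 2*Y*G := by linarith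
  have hsY : s/Y ≤ s/8 := div_le_div_of_nonneg_left hs0.le (by norm_num) hY
  have hP2 : 2*Y ≤ Y*G := by
    have := mul_le_mul_of_nonneg_left hG hY0.le
    nlinarith
  linarith

set_option maxHeartbeats 1000000 in
/-- decay of a sequence along measurement times `t_k` with
`t_1 = 1`, `t_{k+1} - t_k < T`, satisfying
`a(t_{k+1}) ≤ (1 - q/t_{k+1}^(1-ε)) a(t_k) + d/t_k^(2-2ε)`. -/
theorem stmt12 (q ε d : ℝ) (T : ℕ) (hT : 0 < T)
    (hq0 : 0 < q) (hq1 : q ≤ 1) (hε0 : 0 < ε) (hε1 : ε < 1) (hd : 0 ≤ d)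
    (t : ℕ → ℕ) (ht1 : t 1 = 1)
    (hmono : ∀ k : ℕ, 1 ≤ k → t k < t (k + 1))
    (hgap : ∀ k : ℕ, 1 ≤ k → t (k + 1) < t k + T)
    (a : ℕ → ℝ) (ha1 : 0 ≤ a (t 1))
    (hrec : ∀ k : ℕ, 1 ≤ k →
      a (t (k + 1)) ≤ (1 - q / (t (k + 1) : ℝ) ^ (1 - ε)) * a (t k)
        + d / (t k : ℝ) ^ (2 - 2 * ε)) :
    ∀ k : ℕ, (12 * T / (q * ε) * Real.log (4 * T / (q * ε))) ^ (1 / ε) ≤ (k : ℝ) →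
      a (t k) ≤ (9 * d * T / q) / (k : ℝ) ^ (1 - ε)
        + a (t 1) * Real.exp (-(q * ((k : ℝ) ^ ε - 1) / (T * ε))) := by
  have hT2 : 2 ≤ T := by
    have h1 := hmono 1 le_rfl
    have h2 := hgap 1 le_rfl
    omega
  have hTR : (2:ℝ) ≤ (T:ℝ) := by exact_mod_cast hT2
  have hTpos : (0:ℝ) < T := by linarith
  have hε1' : ε ≤ 1 := le_of_lt hε1
  -- lower bound on t
  have htlow : ∀ k : ℕ, 1 ≤ k → k ≤ t k := by
    intro k hk
    induction k, hk using Nat.le_induction with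
    | base => simp [ht1]
    | succ n hn ih => have := hmono n hn; omega
  -- upper bound on t
  have htub0 : ∀ j : ℕ, t (j+1) ≤ j * (T-1) + 1 := by
    intro j
    induction j with
    | zero => simp [ht1]
    | succ n ih =>
      have h := hgap (n+1) (by omega)
      have hmul : (n+1) * (T-1) = n*(T-1) + (T-1) := Nat.succ_mul n (T-1)
      omega
  have htub : ∀ k : ℕ, 1 ≤ k → t (k+1) ≤ k * T := by
    intro k hk
    have h1 := htub0 k
    have h2 : k * T = k*(T-1) + k*1 := by
      rw [← Nat.mul_add]
      congr 1
      omega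
    omega
  have htubR : ∀ k : ℕ, 1 ≤ k → (t (k+1) : ℝ) ≤ (k:ℝ) * T := by
    intro k hk
    have := htub k hk
    exact_mod_cast this
  have htlowR : ∀ k : ℕ, 1 ≤ k → (k:ℝ) ≤ (t k : ℝ) := by
    intro k hk; exact_mod_cast htlow k hk
  have htposR : ∀ k : ℕ, 1 ≤ k → (0:ℝ) < (t k : ℝ) := by
    intro k hk
    have h1 : (1:ℝ) ≤ (k:ℝ) := by exact_mod_cast hk
    linarith [htlowR k hk]
  -- coefficient bounds
  have hcpos : ∀ k : ℕ, 1 ≤ k → (0:ℝ) < ((t (k+1) : ℝ)) ^ (1-ε) := by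
    intro k hk
    exact Real.rpow_pos_of_pos (htposR (k+1) (by omega)) _
  have hc_le_one : ∀ k : ℕ, 1 ≤ k → q / (t (k+1) : ℝ) ^ (1-ε) ≤ 1 := by
    intro k hk
    have h1 : (1:ℝ) ≤ (t (k+1) : ℝ) := by
      have := htlow (k+1) (by omega)
      have : (1:ℕ) ≤ t (k+1) := by omega
      exact_mod_cast this
    have h2 : (1:ℝ) ≤ (t (k+1) : ℝ) ^ (1-ε) := by
      calc (1:ℝ) = (1:ℝ)^(1-ε) := (Real.one_rpow _).symm
        _ ≤ (t (k+1) : ℝ) ^ (1-ε) := Real.rpow_le_rpow zero_le_one h1 (by linarith)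
    rw [div_le_one (by linarith)]
    linarith
  have hc_nonneg : ∀ k : ℕ, 1 ≤ k → 0 ≤ 1 - q / (t (k+1) : ℝ) ^ (1-ε) := by
    intro k hk
    linarith [hc_le_one k hk]
  have hc_nonneg2 : ∀ k : ℕ, 1 ≤ k → 0 ≤ q / (t (k+1) : ℝ) ^ (1-ε) := by
    intro k hk
    positivity
  have hcc2 : ∀ k : ℕ, 1 ≤ k → q/(T:ℝ) * (k:ℝ)^(ε-1) ≤ q / (t (k+1) : ℝ) ^ (1-ε) := by
    intro k hk
    have hk1 : (1:ℝ) ≤ (k:ℝ) := by exact_mod_cast hk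
    have hk0 : (0:ℝ) < (k:ℝ) := by linarith
    have h2 : ((t (k+1):ℝ))^(1-ε) ≤ ((k:ℝ)*T)^(1-ε) :=
      Real.rpow_le_rpow (by positivity) (htubR k hk) (by linarith)
    have h3 : ((k:ℝ)*T)^(1-ε) = (k:ℝ)^(1-ε) * (T:ℝ)^(1-ε) :=
      Real.mul_rpow hk0.le hTpos.le
    have h4 : (T:ℝ)^(1-ε) ≤ (T:ℝ) := by
      calc (T:ℝ)^(1-ε) ≤ (T:ℝ)^(1:ℝ) :=
            Real.rpow_le_rpow_of_exponent_le (by linarith) (by linarith)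
        _ = (T:ℝ) := Real.rpow_one _
    have h5 : ((t (k+1):ℝ))^(1-ε) ≤ (k:ℝ)^(1-ε) * T := by
      have := mul_le_mul_of_nonneg_left h4
        (Real.rpow_nonneg hk0.le (1-ε))
      rw [h3] at h2
      linarith
    have h6 : q / ((k:ℝ)^(1-ε) * T) ≤ q / (t (k+1) : ℝ) ^ (1-ε) :=
      div_le_div_of_nonneg_left hq0.le (hcpos k hk) h5
    have h7 : q / ((k:ℝ)^(1-ε) * T) = q/(T:ℝ) * (k:ℝ)^(ε-1) := by
      rw [show ε-1 = -(1-ε) by ring, Real.rpow_neg hk0.le]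
      have hne : ((k:ℝ)^(1-ε)) ≠ 0 := (Real.rpow_pos_of_pos hk0 _).ne'
      field_simp
    linarith [h7 ▸ h6]
  have hcc1 : ∀ k : ℕ, 1 ≤ k →
      q * (((k:ℝ)+1)^ε - (k:ℝ)^ε)/((T:ℝ)*ε) ≤ q / (t (k+1) : ℝ) ^ (1-ε) := by
    intro k hk
    have hk1 : (1:ℝ) ≤ (k:ℝ) := by exact_mod_cast hk
    have hdle := stmt12_diff_le (k := (k:ℝ)) hk1 hε0 hε1'
    have step : q * (((k:ℝ)+1)^ε - (k:ℝ)^ε)/((T:ℝ)*ε) ≤ q/(T:ℝ)*(k:ℝ)^(ε-1) := by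
      calc q * (((k:ℝ)+1)^ε - (k:ℝ)^ε)/((T:ℝ)*ε)
          = q/((T:ℝ)*ε) * ((((k:ℝ)+1))^ε - (k:ℝ)^ε) := by ring
        _ ≤ q/((T:ℝ)*ε) * (ε * (k:ℝ)^(ε-1)) :=
            mul_le_mul_of_nonneg_left hdle (by positivity)
        _ = q/(T:ℝ)*(k:ℝ)^(ε-1) := by field_simp
    linarith [hcc2 k hk]
  have hE : ∀ k : ℕ, 1 ≤ k → (1 - q / (t (k+1) : ℝ) ^ (1-ε)) ≤
      Real.exp (-(q * (((k:ℝ)+1)^ε - (k:ℝ)^ε)/((T:ℝ)*ε))) := by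
    intro k hk
    have h1 := Real.add_one_le_exp (-(q / (t (k+1) : ℝ) ^ (1-ε)))
    have h2 : Real.exp (-(q / (t (k+1) : ℝ) ^ (1-ε))) ≤
        Real.exp (-(q * (((k:ℝ)+1)^ε - (k:ℝ)^ε)/((T:ℝ)*ε))) :=
      Real.exp_le_exp.mpr (by linarith [hcc1 k hk])
    linarith
  -- Lemma A
  have lemA : ∀ k : ℕ, 1 ≤ k →
      a (t k) ≤ a (t 1) * Real.exp (-(q * ((k:ℝ)^ε - 1)/((T:ℝ)*ε))) + 2*d*(k:ℝ)^ε/ε := by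
    intro k hk
    induction k, hk using Nat.le_induction with
    | base =>
      have e1 : ((1:ℕ):ℝ)^ε = 1 := by norm_num [Real.one_rpow]
      rw [e1]
      norm_num
      have : 0 ≤ 2*d/ε := by positivity
      nlinarith
    | succ k hk ih =>
      have hk1 : (1:ℝ) ≤ (k:ℝ) := by exact_mod_cast hk
      have hk0 : (0:ℝ) < (k:ℝ) := by linarith
      have hcnn := hc_nonneg k hk
      have h0 := hrec k hk
      -- inhomogeneous bound
      have q2 : (k:ℝ)^(2-2*ε) ≤ (t k:ℝ)^(2-2*ε) :=
        Real.rpow_le_rpow (by positivity) (htlowR k hk) (by linarith)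
      have q3 : (0:ℝ) < (k:ℝ)^(2-2*ε) := Real.rpow_pos_of_pos hk0 _
      have q4 : d / (t k:ℝ)^(2-2*ε) ≤ d / (k:ℝ)^(2-2*ε) :=
        div_le_div_of_nonneg_left hd q3 q2
      have q5 : d / (k:ℝ)^(2-2*ε) = d * (k:ℝ)^(2*ε-2) := by
        rw [show (2*ε-2) = -(2-2*ε) by ring, Real.rpow_neg hk0.le]
        ring
      have hUB : d / (t k:ℝ)^(2-2*ε) ≤ d * (k:ℝ)^(2*ε-2) := by linarith [q5 ▸ q4]
      -- growth of the J part
      have p1 : (k:ℝ)^(ε-1) ≤ 1 := Real.rpow_le_one_of_one_le_of_nonpos hk1 (by linarith)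
      have p2 : (k:ℝ)^(2*ε-2) = (k:ℝ)^(ε-1) * (k:ℝ)^(ε-1) := by
        rw [show (2*ε-2) = (ε-1)+(ε-1) by ring, Real.rpow_add hk0]
      have p2' : (k:ℝ)^(2*ε-2) ≤ (k:ℝ)^(ε-1) := by
        rw [p2]
        nlinarith [Real.rpow_nonneg hk0.le (ε-1)]
      have p4 := stmt12_half (k := (k:ℝ)) hk1 hε0.le hε1'
      have p5 := stmt12_diff_ge (k := (k:ℝ)) hk1 hε0 hε1'
      have hJ : d * (k:ℝ)^(2*ε-2) ≤ 2*d*(((k:ℝ)+1)^ε)/ε - 2*d*((k:ℝ)^ε)/ε := by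
        have h : ε * (k:ℝ)^(2*ε-2) ≤ 2*((((k:ℝ)+1))^ε - (k:ℝ)^ε) := by
          nlinarith [mul_le_mul_of_nonneg_left p2' hε0.le,
            mul_le_mul_of_nonneg_left p4 hε0.le]
        have h2 := mul_le_mul_of_nonneg_left h (show (0:ℝ) ≤ d/ε by positivity)
        have e1 : d/ε*(ε*(k:ℝ)^(2*ε-2)) = d*(k:ℝ)^(2*ε-2) := by field_simp
        have e2 : d/ε*(2*((((k:ℝ)+1))^ε - (k:ℝ)^ε))
            = 2*d*(((k:ℝ)+1)^ε)/ε - 2*d*((k:ℝ)^ε)/ε := by field_simp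
        linarith [e1 ▸ e2 ▸ h2]
      -- split
      have hA0 : 0 ≤ a (t 1) * Real.exp (-(q * ((k:ℝ)^ε - 1)/((T:ℝ)*ε))) :=
        mul_nonneg ha1 (Real.exp_pos _).le
      have hB0 : 0 ≤ 2*d*(k:ℝ)^ε/ε := by positivity
      have s1 : (1 - q / (t (k+1) : ℝ) ^ (1-ε)) * (a (t 1) * Real.exp (-(q * ((k:ℝ)^ε - 1)/((T:ℝ)*ε))))
          ≤ Real.exp (-(q * (((k:ℝ)+1)^ε - (k:ℝ)^ε)/((T:ℝ)*ε)))
            * (a (t 1) * Real.exp (-(q * ((k:ℝ)^ε - 1)/((T:ℝ)*ε)))) :=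
        mul_le_mul_of_nonneg_right (hE k hk) hA0
      have s2 : (1 - q / (t (k+1) : ℝ) ^ (1-ε)) * (2*d*(k:ℝ)^ε/ε) ≤ 2*d*(k:ℝ)^ε/ε := by
        have := mul_le_mul_of_nonneg_right
          (show 1 - q / (t (k+1) : ℝ) ^ (1-ε) ≤ 1 by linarith [hc_nonneg2 k hk]) hB0
        linarith
      have keyE : Real.exp (-(q * (((k:ℝ)+1)^ε - (k:ℝ)^ε)/((T:ℝ)*ε)))
            * Real.exp (-(q * ((k:ℝ)^ε - 1)/((T:ℝ)*ε)))
          = Real.exp (-(q * (((k:ℝ)+1)^ε - 1)/((T:ℝ)*ε))) := by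
        rw [← Real.exp_add]; congr 1; ring
      have hmul := mul_le_mul_of_nonneg_left ih hcnn
      have expand : (1 - q / (t (k+1) : ℝ) ^ (1-ε)) *
            (a (t 1) * Real.exp (-(q * ((k:ℝ)^ε - 1)/((T:ℝ)*ε))) + 2*d*(k:ℝ)^ε/ε)
          = (1 - q / (t (k+1) : ℝ) ^ (1-ε)) * (a (t 1) * Real.exp (-(q * ((k:ℝ)^ε - 1)/((T:ℝ)*ε))))
            + (1 - q / (t (k+1) : ℝ) ^ (1-ε)) * (2*d*(k:ℝ)^ε/ε) := by ring
      have key2 : Real.exp (-(q * (((k:ℝ)+1)^ε - (k:ℝ)^ε)/((T:ℝ)*ε)))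
            * (a (t 1) * Real.exp (-(q * ((k:ℝ)^ε - 1)/((T:ℝ)*ε))))
          = a (t 1) * Real.exp (-(q * (((k:ℝ)+1)^ε - 1)/((T:ℝ)*ε))) := by
        rw [← keyE]; ring
      push_cast
      linarith [h0, hmul, s1, s2, hUB, hJ, expand, key2]
  -- Lemma B
  have lemB : ∀ m : ℕ, 1 ≤ m → 2*(T:ℝ)/q ≤ (m:ℝ)^ε → ∀ k : ℕ, m ≤ k →
      a (t k) ≤ 8*d*T/q * (k:ℝ)^(ε-1)
        + (a (t 1) * Real.exp (-(q * ((m:ℝ)^ε - 1)/((T:ℝ)*ε))) + 2*d*(m:ℝ)^ε/ε)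
          * Real.exp (-(q * ((k:ℝ)^ε - (m:ℝ)^ε)/((T:ℝ)*ε))) := by
    intro m hm hmq k hk
    induction k, hk using Nat.le_induction with
    | base =>
      have e0 : Real.exp (-(q * ((m:ℝ)^ε - (m:ℝ)^ε)/((T:ℝ)*ε))) = 1 := by
        simp
      rw [e0, mul_one]
      have h1 := lemA m hm
      have h2 : 0 ≤ 8*d*T/q * (m:ℝ)^(ε-1) := by
        have : (0:ℝ) ≤ (m:ℝ)^(ε-1) := Real.rpow_nonneg (by positivity) _
        positivity
      linarith
    | succ k hk ih =>
      have hk1n : 1 ≤ k := le_trans hm hk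
      have hk1 : (1:ℝ) ≤ (k:ℝ) := by exact_mod_cast hk1n
      have hk0 : (0:ℝ) < (k:ℝ) := by linarith
      have hcnn := hc_nonneg k hk1n
      have h0 := hrec k hk1n
      -- inhomogeneous bound (same as in lemA)
      have q2 : (k:ℝ)^(2-2*ε) ≤ (t k:ℝ)^(2-2*ε) :=
        Real.rpow_le_rpow (by positivity) (htlowR k hk1n) (by linarith)
      have q3 : (0:ℝ) < (k:ℝ)^(2-2*ε) := Real.rpow_pos_of_pos hk0 _
      have q4 : d / (t k:ℝ)^(2-2*ε) ≤ d / (k:ℝ)^(2-2*ε) :=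
        div_le_div_of_nonneg_left hd q3 q2
      have q5 : d / (k:ℝ)^(2-2*ε) = d * (k:ℝ)^(2*ε-2) := by
        rw [show (2*ε-2) = -(2-2*ε) by ring, Real.rpow_neg hk0.le]
        ring
      have hUB : d / (t k:ℝ)^(2-2*ε) ≤ d * (k:ℝ)^(2*ε-2) := by linarith [q5 ▸ q4]
      -- decay of the W part
      have hW0 : 0 ≤ a (t 1) * Real.exp (-(q * ((m:ℝ)^ε - 1)/((T:ℝ)*ε))) + 2*d*(m:ℝ)^ε/ε := by
        have h1 : 0 ≤ a (t 1) * Real.exp (-(q * ((m:ℝ)^ε - 1)/((T:ℝ)*ε))) :=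
          mul_nonneg ha1 (Real.exp_pos _).le
        have h2 : (0:ℝ) ≤ 2*d*(m:ℝ)^ε/ε := by
          have : (0:ℝ) ≤ (m:ℝ)^ε := Real.rpow_nonneg (by positivity) _
          positivity
        linarith
      have hWe0 : 0 ≤ (a (t 1) * Real.exp (-(q * ((m:ℝ)^ε - 1)/((T:ℝ)*ε))) + 2*d*(m:ℝ)^ε/ε)
          * Real.exp (-(q * ((k:ℝ)^ε - (m:ℝ)^ε)/((T:ℝ)*ε))) :=
        mul_nonneg hW0 (Real.exp_pos _).le
      have s1 : (1 - q / (t (k+1) : ℝ) ^ (1-ε)) *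
            ((a (t 1) * Real.exp (-(q * ((m:ℝ)^ε - 1)/((T:ℝ)*ε))) + 2*d*(m:ℝ)^ε/ε)
              * Real.exp (-(q * ((k:ℝ)^ε - (m:ℝ)^ε)/((T:ℝ)*ε))))
          ≤ Real.exp (-(q * (((k:ℝ)+1)^ε - (k:ℝ)^ε)/((T:ℝ)*ε))) *
            ((a (t 1) * Real.exp (-(q * ((m:ℝ)^ε - 1)/((T:ℝ)*ε))) + 2*d*(m:ℝ)^ε/ε)
              * Real.exp (-(q * ((k:ℝ)^ε - (m:ℝ)^ε)/((T:ℝ)*ε)))) :=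
        mul_le_mul_of_nonneg_right (hE k hk1n) hWe0
      have key2 : Real.exp (-(q * (((k:ℝ)+1)^ε - (k:ℝ)^ε)/((T:ℝ)*ε))) *
            ((a (t 1) * Real.exp (-(q * ((m:ℝ)^ε - 1)/((T:ℝ)*ε))) + 2*d*(m:ℝ)^ε/ε)
              * Real.exp (-(q * ((k:ℝ)^ε - (m:ℝ)^ε)/((T:ℝ)*ε))))
          = (a (t 1) * Real.exp (-(q * ((m:ℝ)^ε - 1)/((T:ℝ)*ε))) + 2*d*(m:ℝ)^ε/ε)
              * Real.exp (-(q * (((k:ℝ)+1)^ε - (m:ℝ)^ε)/((T:ℝ)*ε))) := by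
        rw [show Real.exp (-(q * (((k:ℝ)+1)^ε - (m:ℝ)^ε)/((T:ℝ)*ε)))
            = Real.exp (-(q * (((k:ℝ)+1)^ε - (k:ℝ)^ε)/((T:ℝ)*ε)))
              * Real.exp (-(q * ((k:ℝ)^ε - (m:ℝ)^ε)/((T:ℝ)*ε))) by
          rw [← Real.exp_add]; congr 1; ring]
        ring
      -- the M' part
      have r1 : (k:ℝ)^(ε-1) - ((k:ℝ)+1)^(ε-1) ≤ (k:ℝ)^(ε-2) :=
        stmt12_inv_diff_le hk1 hε0 hε1'
      have r2 : (k:ℝ)^(ε-2) = (k:ℝ)^(2*ε-2)*(k:ℝ)^(-ε) := by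
        rw [← Real.rpow_add hk0]; ring_nf
      have rm : (m:ℝ)^ε ≤ (k:ℝ)^ε :=
        Real.rpow_le_rpow (by positivity) (by exact_mod_cast hk) hε0.le
      have r3 : (k:ℝ)^(-ε) ≤ q/(2*(T:ℝ)) := by
        have h1 : 2*(T:ℝ)/q ≤ (k:ℝ)^ε := le_trans hmq rm
        have h2 : (0:ℝ) < 2*(T:ℝ)/q := by positivity
        have h3 : ((k:ℝ)^ε)⁻¹ ≤ (2*(T:ℝ)/q)⁻¹ := inv_anti₀ h2 h1
        rw [Real.rpow_neg hk0.le]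
        rw [inv_div] at h3
        exact h3
      have r4 := hcc2 k hk1n
      have r5 : (k:ℝ)^(ε-1)*(k:ℝ)^(ε-1) = (k:ℝ)^(2*ε-2) := by
        rw [← Real.rpow_add hk0]; ring_nf
      have rP : (0:ℝ) ≤ (k:ℝ)^(ε-1) := Real.rpow_nonneg hk0.le _
      have rQ : (0:ℝ) ≤ (k:ℝ)^(2*ε-2) := Real.rpow_nonneg hk0.le _
      have w1 : 8*d*T/q*((k:ℝ)^(ε-1) - ((k:ℝ)+1)^(ε-1))
          ≤ 8*d*T/q*((k:ℝ)^(2*ε-2)*(q/(2*(T:ℝ)))) := by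
        apply mul_le_mul_of_nonneg_left _ (by positivity)
        calc (k:ℝ)^(ε-1) - ((k:ℝ)+1)^(ε-1) ≤ (k:ℝ)^(ε-2) := r1
          _ = (k:ℝ)^(2*ε-2)*(k:ℝ)^(-ε) := r2
          _ ≤ (k:ℝ)^(2*ε-2)*(q/(2*(T:ℝ))) := mul_le_mul_of_nonneg_left r3 rQ
      have w1' : 8*d*T/q*((k:ℝ)^(2*ε-2)*(q/(2*(T:ℝ)))) = 4*d*(k:ℝ)^(2*ε-2) := by
        field_simp
        ring
      have w3 : (q/(T:ℝ)*(k:ℝ)^(ε-1)) * (8*d*T/q*(k:ℝ)^(ε-1)) ≤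
          (q / (t (k+1) : ℝ) ^ (1-ε)) * (8*d*T/q*(k:ℝ)^(ε-1)) :=
        mul_le_mul_of_nonneg_right r4 (by positivity)
      have w3' : (q/(T:ℝ)*(k:ℝ)^(ε-1)) * (8*d*T/q*(k:ℝ)^(ε-1)) = 8*d*(k:ℝ)^(2*ε-2) := by
        rw [show (q/(T:ℝ)*(k:ℝ)^(ε-1)) * (8*d*T/q*(k:ℝ)^(ε-1))
            = (q/(T:ℝ))*(8*d*T/q)*((k:ℝ)^(ε-1)*(k:ℝ)^(ε-1)) by ring, r5]
        field_simp
      have wmain : (1 - q / (t (k+1) : ℝ) ^ (1-ε)) * (8*d*T/q*(k:ℝ)^(ε-1)) + d*(k:ℝ)^(2*ε-2)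
          ≤ 8*d*T/q*(((k:ℝ)+1)^(ε-1)) := by
        have expand2 : (1 - q / (t (k+1) : ℝ) ^ (1-ε)) * (8*d*T/q*(k:ℝ)^(ε-1))
            = 8*d*T/q*(k:ℝ)^(ε-1)
              - (q / (t (k+1) : ℝ) ^ (1-ε)) * (8*d*T/q*(k:ℝ)^(ε-1)) := by ring
        have expand3 : 8*d*T/q*((k:ℝ)^(ε-1) - ((k:ℝ)+1)^(ε-1))
            = 8*d*T/q*(k:ℝ)^(ε-1) - 8*d*T/q*(((k:ℝ)+1)^(ε-1)) := by ring
        have hdq : 0 ≤ d*(k:ℝ)^(2*ε-2) := mul_nonneg hd rQ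
        linarith [w1, w1', w3, w3', expand2, expand3]
      -- assemble
      have hmul := mul_le_mul_of_nonneg_left ih hcnn
      have expand : (1 - q / (t (k+1) : ℝ) ^ (1-ε)) *
            (8*d*T/q * (k:ℝ)^(ε-1)
              + (a (t 1) * Real.exp (-(q * ((m:ℝ)^ε - 1)/((T:ℝ)*ε))) + 2*d*(m:ℝ)^ε/ε)
                * Real.exp (-(q * ((k:ℝ)^ε - (m:ℝ)^ε)/((T:ℝ)*ε))))
          = (1 - q / (t (k+1) : ℝ) ^ (1-ε)) * (8*d*T/q * (k:ℝ)^(ε-1))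
            + (1 - q / (t (k+1) : ℝ) ^ (1-ε)) *
              ((a (t 1) * Real.exp (-(q * ((m:ℝ)^ε - 1)/((T:ℝ)*ε))) + 2*d*(m:ℝ)^ε/ε)
                * Real.exp (-(q * ((k:ℝ)^ε - (m:ℝ)^ε)/((T:ℝ)*ε)))) := by ring
      push_cast
      linarith [h0, hmul, s1, key2, hUB, wmain, expand]
  -- final assembly
  intro k hK
  set Y : ℝ := 4*(T:ℝ)/(q*ε) with hYdef
  have hqε : (0:ℝ) < q*ε := mul_pos hq0 hε0
  have hqε1 : q*ε ≤ 1 := by nlinarith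
  have hY8 : (8:ℝ) ≤ Y := by
    rw [hYdef]
    have h1 : 4*(T:ℝ) ≤ 4*(T:ℝ)/(q*ε) := by
      rw [le_div_iff₀ hqε]
      nlinarith [mul_le_mul_of_nonneg_left hqε1 (by positivity : (0:ℝ) ≤ 4*(T:ℝ))]
    linarith
  have hY0 : (0:ℝ) < Y := by linarith
  have hlY : 2 ≤ Real.log Y := by
    have he : Real.exp 2 < 8 := by
      have h1 := Real.exp_one_lt_d9
      have h2 : Real.exp 2 = Real.exp 1 * Real.exp 1 := by rw [← Real.exp_add]; norm_num
      nlinarith [Real.exp_pos 1]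
    calc (2:ℝ) = Real.log (Real.exp 2) := (Real.log_exp 2).symm
      _ ≤ Real.log Y := Real.log_le_log (Real.exp_pos 2) (by linarith)
  have hBident : 12 * (T:ℝ) / (q * ε) * Real.log Y = 3*Y*Real.log Y := by
    rw [hYdef]; ring
  have hB0 : (0:ℝ) ≤ 3*Y*Real.log Y := by nlinarith
  have hkε : 3*Y*Real.log Y ≤ (k:ℝ)^ε := by
    have h1 : ((3*Y*Real.log Y) ^ (1/ε) : ℝ) ≤ (k:ℝ) := by rw [← hBident]; exact hK
    have h2 : (((3*Y*Real.log Y) ^ (1/ε) : ℝ)) ^ ε ≤ (k:ℝ)^ε :=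
      Real.rpow_le_rpow (Real.rpow_nonneg hB0 _) h1 hε0.le
    rwa [← Real.rpow_mul hB0, one_div, inv_mul_cancel₀ hε0.ne', Real.rpow_one] at h2
  have hk48 : (48:ℝ) ≤ (k:ℝ)^ε := by nlinarith
  have hk1n : 1 ≤ k := by
    by_contra h
    have hz : k = 0 := by omega
    rw [hz, Nat.cast_zero, Real.zero_rpow hε0.ne'] at hk48
    linarith
  have hk1 : (1:ℝ) ≤ (k:ℝ) := by exact_mod_cast hk1n
  have hk0 : (0:ℝ) < (k:ℝ) := by linarith
  -- choose m
  set X : ℝ := (2*(T:ℝ)/q)^(1/ε) with hXdef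
  have h2T : (4:ℝ) ≤ 2*(T:ℝ)/q := by
    rw [le_div_iff₀ hq0]; nlinarith
  have hX4 : (4:ℝ) ≤ X := by
    rw [hXdef]
    calc (4:ℝ) ≤ 2*(T:ℝ)/q := h2T
      _ = (2*(T:ℝ)/q)^(1:ℝ) := (Real.rpow_one _).symm
      _ ≤ (2*(T:ℝ)/q)^(1/ε) := Real.rpow_le_rpow_of_exponent_le (by linarith)
          (by rw [le_div_iff₀ hε0]; linarith)
  have hX0 : (0:ℝ) < X := by linarith
  set m : ℕ := ⌈X⌉₊ with hmdef
  have hmX : X ≤ (m:ℝ) := Nat.le_ceil X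
  have hm1 : 1 ≤ m := by
    by_contra h
    have hz : m = 0 := by omega
    rw [hz, Nat.cast_zero] at hmX
    linarith
  have hm0 : (0:ℝ) < (m:ℝ) := by
    have : (1:ℝ) ≤ (m:ℝ) := by exact_mod_cast hm1
    linarith
  have hmub : (m:ℝ) ≤ (5/4)*X := by
    have h := Nat.ceil_lt_add_one hX0.le
    have h2 : (m:ℝ) < X + 1 := by exact_mod_cast h
    linarith
  have hXε : X^ε = 2*(T:ℝ)/q := by
    rw [hXdef, ← Real.rpow_mul (by positivity), one_div, inv_mul_cancel₀ hε0.ne',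
      Real.rpow_one]
  have hmlow : 2*(T:ℝ)/q ≤ (m:ℝ)^ε := by
    rw [← hXε]; exact Real.rpow_le_rpow hX0.le hmX hε0.le
  have hmup : (m:ℝ)^ε ≤ 3*(T:ℝ)/q := by
    have h1 : (m:ℝ)^ε ≤ ((5/4)*X)^ε := Real.rpow_le_rpow (by positivity) hmub hε0.le
    have h2 : ((5/4)*X)^ε = (5/4:ℝ)^ε * X^ε := Real.mul_rpow (by norm_num) hX0.le
    have h3 : (5/4:ℝ)^ε ≤ 5/4 := by
      calc (5/4:ℝ)^ε ≤ (5/4:ℝ)^(1:ℝ) :=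
            Real.rpow_le_rpow_of_exponent_le (by norm_num) (by linarith)
        _ = 5/4 := Real.rpow_one _
    have h4 : (0:ℝ) ≤ X^ε := Real.rpow_nonneg hX0.le _
    have h5 : (5/4:ℝ)^ε * X^ε ≤ (5/4) * (2*(T:ℝ)/q) := by
      rw [hXε]
      exact mul_le_mul_of_nonneg_right h3 (by positivity)
    have h6 : (5/4:ℝ) * (2*(T:ℝ)/q) ≤ 3*(T:ℝ)/q := by
      rw [show (5/4:ℝ) * (2*(T:ℝ)/q) = (5*(T:ℝ)/2)/q by ring]
      rw [div_le_div_iff₀ hq0 hq0]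
      nlinarith
    linarith
  have hTq0 : (0:ℝ) ≤ (T:ℝ)/q := by positivity
  have hmk : m ≤ k := by
    have hYlow : 4*(T:ℝ)/q ≤ Y := by
      rw [hYdef]
      apply div_le_div_of_nonneg_left (by positivity) hqε
      nlinarith
    have h3Tk : 3*(T:ℝ)/q ≤ (k:ℝ)^ε := by
      have p1 := mul_le_mul_of_nonneg_left hlY (show (0:ℝ) ≤ 3*Y by linarith)
      have p0 : (0:ℝ) ≤ (T:ℝ)/q := hTq0
      have pk : 3*Y*Real.log Y ≤ (k:ℝ)^ε := hkε
      have pY : 4*(T:ℝ)/q ≤ Y := hYlow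
      ring_nf at p1 p0 pk pY ⊢
      linarith
    have h1 : (m:ℝ)^ε ≤ (k:ℝ)^ε := by linarith
    have h2 : (m:ℝ) ≤ (k:ℝ) := (Real.rpow_le_rpow_iff (by positivity) hk0.le hε0).mp h1
    exact_mod_cast h2
  have hmain := lemB m hm1 hmlow k hmk
  have ekey : Real.exp (-(q * ((m:ℝ)^ε - 1)/((T:ℝ)*ε)))
        * Real.exp (-(q * ((k:ℝ)^ε - (m:ℝ)^ε)/((T:ℝ)*ε)))
      = Real.exp (-(q * ((k:ℝ)^ε - 1)/((T:ℝ)*ε))) := by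
    rw [← Real.exp_add]; congr 1; ring
  -- residual term bound
  have hres : 2*d*(m:ℝ)^ε/ε * Real.exp (-(q * ((k:ℝ)^ε - (m:ℝ)^ε)/((T:ℝ)*ε)))
      ≤ d*(T:ℝ)/q * (k:ℝ)^(ε-1) := by
    have hqm3T : q * (m:ℝ)^ε ≤ 3*(T:ℝ) := by
      have h1 := mul_le_mul_of_nonneg_left hmup hq0.le
      have h2 : q * (3*(T:ℝ)/q) = 3*(T:ℝ) := by field_simp
      linarith
    have base : 2*(m:ℝ)^ε/ε * Real.exp (-(q * ((k:ℝ)^ε - (m:ℝ)^ε)/((T:ℝ)*ε)))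
        ≤ (T:ℝ)/q * (k:ℝ)^(ε-1) := by
      have e1 : Real.exp (-(q * ((k:ℝ)^ε - (m:ℝ)^ε)/((T:ℝ)*ε)))
          ≤ Real.exp (3/ε - q * (k:ℝ)^ε/((T:ℝ)*ε)) := by
        apply Real.exp_le_exp.mpr
        have hqmT : q * (m:ℝ)^ε/((T:ℝ)*ε) ≤ 3/ε := by
          rw [div_le_div_iff₀ (by positivity) hε0]
          nlinarith
        have expand : -(q * ((k:ℝ)^ε - (m:ℝ)^ε)/((T:ℝ)*ε))
            = q * (m:ℝ)^ε/((T:ℝ)*ε) - q * (k:ℝ)^ε/((T:ℝ)*ε) := by ring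
        linarith [expand.le]
      have e2 : 2*(m:ℝ)^ε/ε ≤ 6*(T:ℝ)/(q*ε) := by
        rw [div_le_div_iff₀ hε0 hqε]
        nlinarith
      have hkey : Real.exp (3/ε - q * (k:ℝ)^ε/((T:ℝ)*ε)) * (6*(T:ℝ)/(q*ε))
          ≤ (T:ℝ)/q * (k:ℝ)^(ε-1) := by
        have hkrw : (k:ℝ)^(ε-1) = Real.exp (Real.log (k:ℝ) * (ε-1)) :=
          Real.rpow_def_of_pos hk0 _
        have hsuff : Real.exp (3/ε - q * (k:ℝ)^ε/((T:ℝ)*ε)) * (6/ε)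
            ≤ Real.exp (Real.log (k:ℝ) * (ε-1)) := by
          have h66 : (6:ℝ)/ε = Real.exp (Real.log (6/ε)) := (Real.exp_log (by positivity)).symm
          rw [h66, ← Real.exp_add]
          apply Real.exp_le_exp.mpr
          have hlog6e : Real.log ((6:ℝ)/ε) = Real.log 6 - Real.log ε :=
            Real.log_div (by norm_num) hε0.ne'
          have hL0 : 0 ≤ Real.log (k:ℝ) := Real.log_nonneg hk1
          have hsL : Real.log ((k:ℝ)^ε) = ε * Real.log (k:ℝ) := Real.log_rpow hk0 ε
          have hnum := stmt12_num hε0 hε1' hY8 hkε hL0 hsL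
          have hid : q * (k:ℝ)^ε/((T:ℝ)*ε) = 4*(k:ℝ)^ε/(Y*ε^2) := by
            rw [hYdef]; field_simp
          rw [hlog6e]
          linarith [hnum, hid.le, hid.ge]
        have hmulT := mul_le_mul_of_nonneg_left hsuff hTq0
        have hrw1 : (T:ℝ)/q * (Real.exp (3/ε - q * (k:ℝ)^ε/((T:ℝ)*ε)) * (6/ε))
            = Real.exp (3/ε - q * (k:ℝ)^ε/((T:ℝ)*ε)) * (6*(T:ℝ)/(q*ε)) := by
          field_simp
        rw [hkrw]
        linarith [hrw1 ▸ hmulT]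
      calc 2*(m:ℝ)^ε/ε * Real.exp (-(q * ((k:ℝ)^ε - (m:ℝ)^ε)/((T:ℝ)*ε)))
          ≤ (6*(T:ℝ)/(q*ε)) * Real.exp (-(q * ((k:ℝ)^ε - (m:ℝ)^ε)/((T:ℝ)*ε))) :=
            mul_le_mul_of_nonneg_right e2 (Real.exp_pos _).le
        _ ≤ (6*(T:ℝ)/(q*ε)) * Real.exp (3/ε - q * (k:ℝ)^ε/((T:ℝ)*ε)) :=
            mul_le_mul_of_nonneg_left e1 (by positivity)
        _ = Real.exp (3/ε - q * (k:ℝ)^ε/((T:ℝ)*ε)) * (6*(T:ℝ)/(q*ε)) := by ring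
        _ ≤ (T:ℝ)/q * (k:ℝ)^(ε-1) := hkey
    have hbase := mul_le_mul_of_nonneg_left base hd
    calc 2*d*(m:ℝ)^ε/ε * Real.exp (-(q * ((k:ℝ)^ε - (m:ℝ)^ε)/((T:ℝ)*ε)))
        = d * (2*(m:ℝ)^ε/ε * Real.exp (-(q * ((k:ℝ)^ε - (m:ℝ)^ε)/((T:ℝ)*ε)))) := by ring
      _ ≤ d * ((T:ℝ)/q * (k:ℝ)^(ε-1)) := hbase
      _ = d*(T:ℝ)/q * (k:ℝ)^(ε-1) := by ring
  have hsplit : (a (t 1) * Real.exp (-(q * ((m:ℝ)^ε - 1)/((T:ℝ)*ε))) + 2*d*(m:ℝ)^ε/ε)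
        * Real.exp (-(q * ((k:ℝ)^ε - (m:ℝ)^ε)/((T:ℝ)*ε)))
      = a (t 1) * (Real.exp (-(q * ((m:ℝ)^ε - 1)/((T:ℝ)*ε)))
            * Real.exp (-(q * ((k:ℝ)^ε - (m:ℝ)^ε)/((T:ℝ)*ε))))
        + 2*d*(m:ℝ)^ε/ε * Real.exp (-(q * ((k:ℝ)^ε - (m:ℝ)^ε)/((T:ℝ)*ε))) := by ring
  rw [ekey] at hsplit
  rw [hsplit] at hmain
  have hfin : a (t k) ≤ 9*d*(T:ℝ)/q * (k:ℝ)^(ε-1)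
      + a (t 1) * Real.exp (-(q * ((k:ℝ)^ε - 1)/((T:ℝ)*ε))) := by
    have hres' := hres
    have hmain' := hmain
    ring_nf at hres' hmain' ⊢
    linarith
  have hrw : 9*d*(T:ℝ)/q * (k:ℝ)^(ε-1) = (9*d*(T:ℝ)/q) / (k:ℝ)^(1-ε) := by
    rw [show ε-1 = -(1-ε) by ring, Real.rpow_neg hk0.le]
    ring
  linarith [hfin, hrw.le, hrw.ge]
end

section
/- Let G be a simple undirected graph on {1,…,n} with edge set E and degrees d_i, let S ⊆ {1,…,n}, and let A be the associated alignment matrix. Then for every v ∈ ℝⁿ and every μ ∈ ℝ, ‖A(v − μ𝟙)‖₂² ≤ ‖v − μ𝟙‖₂² − (1/8) Σ_{{k,l}∈E} (v_k − v_l)²/max(d_k, d_l) − (1/4) Σ_{k∈S} (v_k − μ)², where 𝟙 ∈ ℝⁿ is the all-ones vector and each unordered edge {k,l} is counted once in the sum. -/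
open Finset

open Matrix in
lemma symmDot {n : ℕ} (B : Matrix (Fin n) (Fin n) ℝ) (h : Bᵀ = B) (a c : Fin n → ℝ) :
    (B *ᵥ a) ⬝ᵥ c = a ⬝ᵥ (B *ᵥ c) := by
  rw [dotProduct_mulVec, ← Matrix.mulVec_transpose, h]

open Matrix in
lemma hermTrans {n : ℕ} {B : Matrix (Fin n) (Fin n) ℝ} (h : B.IsHermitian) : Bᵀ = B := by
  ext i j
  have := congrFun (congrFun h i) j
  simpa [Matrix.conjTranspose_apply, Matrix.transpose_apply] using this

open Matrix MatrixOrder in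
lemma keyIneq {n : ℕ} (B : Matrix (Fin n) (Fin n) ℝ) (hB : B.PosSemidef)
    (hB' : ((1 : Matrix (Fin n) (Fin n) ℝ) - B).PosSemidef) (w : Fin n → ℝ) :
    (B *ᵥ w) ⬝ᵥ (B *ᵥ w) ≤ w ⬝ᵥ (B *ᵥ w) := by
  set R := CFC.sqrt B with hRdef
  have hRR : R * R = B := CFC.sqrt_mul_sqrt_self B hB.nonneg
  have hRsym : Rᵀ = R := hermTrans (CFC.sqrt_nonneg B).posSemidef.1
  have hBsym : Bᵀ = B := hermTrans hB.1
  set u := R *ᵥ w with hu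
  have h0 : 0 ≤ u ⬝ᵥ ((1 - B) *ᵥ u) := by
    have := hB'.dotProduct_mulVec_nonneg u
    simpa using this
  have h1 : u ⬝ᵥ ((1 - B) *ᵥ u) = u ⬝ᵥ u - u ⬝ᵥ (B *ᵥ u) := by
    rw [Matrix.sub_mulVec, Matrix.one_mulVec, dotProduct_sub]
  have h2 : u ⬝ᵥ u = w ⬝ᵥ (B *ᵥ w) := by
    rw [hu, symmDot R hRsym, Matrix.mulVec_mulVec, hRR]
  have h3 : u ⬝ᵥ (B *ᵥ u) = (B *ᵥ w) ⬝ᵥ (B *ᵥ w) := by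
    rw [hu, symmDot R hRsym, Matrix.mulVec_mulVec, Matrix.mulVec_mulVec]
    have hmm : R * B * R = B * B := by
      rw [← hRR]; simp only [Matrix.mul_assoc]
    rw [hmm, ← Matrix.mulVec_mulVec, ← symmDot B hBsym]
  linarith [h0, h1 ▸ h0, h2, h3]

/-- For the alignment matrix `A` associated with a graph `G` and a
measurement set `S`, and any `v ∈ ℝⁿ`, `μ ∈ ℝ`:
`‖A(v - μ𝟙)‖₂² ≤ ‖v - μ𝟙‖₂² - (1/8) Σ_{{k,l}∈E} (v_k - v_l)²/max(d_k,d_l)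
 - (1/4) Σ_{k∈S} (v_k - μ)²`.  (The sum over unordered edges is written as half
the sum over ordered adjacent pairs.) -/
theorem stmt13 (n : ℕ) (G : SimpleGraph (Fin n)) [DecidableRel G.Adj]
    (S : Finset (Fin n)) (A : Matrix (Fin n) (Fin n) ℝ)
    (hAadj : ∀ i j, G.Adj i j →
      A i j = 1 / (4 * ((max (G.degree i) (G.degree j) : ℕ) : ℝ)))
    (hAoff : ∀ i j, i ≠ j → ¬ G.Adj i j → A i j = 0)
    (hAdiagOut : ∀ i ∉ S, A i i
      = 1 - ∑ j ∈ G.neighborFinset i, 1 / (4 * ((max (G.degree i) (G.degree j) : ℕ) : ℝ)))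
    (hAdiagIn : ∀ i ∈ S, A i i
      = 3 / 4 - ∑ j ∈ G.neighborFinset i, 1 / (4 * ((max (G.degree i) (G.degree j) : ℕ) : ℝ)))
    (v : Fin n → ℝ) (μ : ℝ) :
    ∑ i, (A.mulVec (fun j => v j - μ) i) ^ 2
      ≤ ∑ i, (v i - μ) ^ 2
        - (1 / 8) * ((1 / 2) * ∑ k, ∑ l,
            if G.Adj k l then (v k - v l) ^ 2 / ((max (G.degree k) (G.degree l) : ℕ) : ℝ) else 0)
        - (1 / 4) * ∑ k ∈ S, (v k - μ) ^ 2 := by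
  classical
  -- edge weights
  set W : Fin n → Fin n → ℝ := fun k l =>
    if G.Adj k l then 1 / (4 * ((max (G.degree k) (G.degree l) : ℕ) : ℝ)) else 0 with hWdef
  have hWsymm : ∀ k l, W k l = W l k := by
    intro k l
    by_cases h : G.Adj k l
    · simp only [hWdef, if_pos h, if_pos h.symm]
      rw [max_comm]
    · have h2 : ¬ G.Adj l k := fun hb => h hb.symm
      simp only [hWdef, if_neg h, if_neg h2]
  have hWnn : ∀ k l, 0 ≤ W k l := by
    intro k l
    simp only [hWdef]
    split
    · positivity
    · exact le_refl 0
  have hWdiag : ∀ k, W k k = 0 := by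
    intro k; simp [hWdef]
  have hWsum : ∀ i, ∑ j, W i j
      = ∑ j ∈ G.neighborFinset i, 1 / (4 * ((max (G.degree i) (G.degree j) : ℕ) : ℝ)) := by
    intro i
    have hnb : G.neighborFinset i = Finset.univ.filter (fun j => G.Adj i j) := by
      ext j; simp [SimpleGraph.mem_neighborFinset]
    rw [hnb, Finset.sum_filter]
  have hWrow : ∀ i, ∑ j, W i j ≤ 1 / 4 := by
    intro i
    rw [hWsum i]
    by_cases hdeg : G.degree i = 0
    · have hempty : G.neighborFinset i = ∅ := by
        rw [← Finset.card_eq_zero, G.card_neighborFinset_eq_degree, hdeg]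
      simp [hempty]
    · have hdpos : (0 : ℝ) < (G.degree i : ℝ) := by
        exact_mod_cast Nat.pos_of_ne_zero hdeg
      calc ∑ j ∈ G.neighborFinset i, 1 / (4 * ((max (G.degree i) (G.degree j) : ℕ) : ℝ))
          ≤ ∑ j ∈ G.neighborFinset i, 1 / (4 * (G.degree i : ℝ)) := by
            refine Finset.sum_le_sum fun j _ => ?_
            apply one_div_le_one_div_of_le (by positivity)
            have : (G.degree i : ℝ) ≤ ((max (G.degree i) (G.degree j) : ℕ) : ℝ) := by
              exact_mod_cast le_max_left _ _
            linarith
        _ = (G.degree i : ℝ) * (1 / (4 * (G.degree i : ℝ))) := by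
            rw [Finset.sum_const, G.card_neighborFinset_eq_degree, nsmul_eq_mul]
        _ = 1 / 4 := by field_simp
  -- structural form of A
  have hA' : ∀ i j, A i j
      = (if i = j then ((if i ∈ S then (3:ℝ)/4 else 1) - ∑ l, W i l) else 0) + W i j := by
    intro i j
    by_cases hij : i = j
    · subst hij
      rw [if_pos rfl, hWdiag, add_zero]
      by_cases hiS : i ∈ S
      · rw [hAdiagIn i hiS, if_pos hiS, hWsum i]
      · rw [hAdiagOut i hiS, if_neg hiS, hWsum i]
    · rw [if_neg hij, zero_add]
      by_cases hadj : G.Adj i j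
      · rw [hAadj i j hadj]
        simp only [hWdef, if_pos hadj]
      · rw [hAoff i j hij hadj]
        simp only [hWdef, if_neg hadj]
  have hAsymm : ∀ i j, A i j = A j i := by
    intro i j
    rw [hA' i j, hA' j i]
    by_cases h : i = j
    · subst h; rfl
    · rw [if_neg h, if_neg (Ne.symm h), hWsymm]
  set M : Matrix (Fin n) (Fin n) ℝ := 1 - A with hM
  have h1M : (1 : Matrix (Fin n) (Fin n) ℝ) - M = A := by
    rw [hM, sub_sub_cancel]
  -- quadratic form of M
  have hQ : ∀ x : Fin n → ℝ, dotProduct x (M.mulVec x)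
      = ∑ i, ∑ j, W i j * (x i ^ 2 - x i * x j) + (1/4) * ∑ i ∈ S, x i ^ 2 := by
    intro x
    have hrw : dotProduct x (M.mulVec x)
        = ∑ i, ∑ j, ((if i = j then (1:ℝ) else 0) - A i j) * (x i * x j) := by
      simp only [dotProduct, Matrix.mulVec, hM, Matrix.sub_apply, Matrix.one_apply]
      refine Finset.sum_congr rfl fun i _ => ?_
      rw [Finset.mul_sum]
      exact Finset.sum_congr rfl fun j _ => by ring
    rw [hrw]
    have hinner : ∀ i, ∑ j, ((if i = j then (1:ℝ) else 0) - A i j) * (x i * x j)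
        = ∑ j, W i j * (x i ^ 2 - x i * x j) + (if i ∈ S then (1/4) * x i ^ 2 else 0) := by
      intro i
      have hterm : ∀ j, ((if i = j then (1:ℝ) else 0) - A i j) * (x i * x j)
          = (if i = j then ((1:ℝ) - ((if i ∈ S then (3:ℝ)/4 else 1) - ∑ l, W i l)) * (x i * x j)
              else 0) - W i j * (x i * x j) := by
        intro j
        rw [hA' i j]
        by_cases h : i = j
        · simp only [if_pos h]; ring
        · simp only [if_neg h]; ring
      rw [Finset.sum_congr rfl fun j _ => hterm j, Finset.sum_sub_distrib,
        Finset.sum_ite_eq Finset.univ i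
          (fun j => ((1:ℝ) - ((if i ∈ S then (3:ℝ)/4 else 1) - ∑ l, W i l)) * (x i * x j)),
        if_pos (Finset.mem_univ i)]
      have hsplit : ((1:ℝ) - ((if i ∈ S then (3:ℝ)/4 else 1) - ∑ l, W i l)) * (x i * x i)
          = ∑ j, W i j * (x i * x i) + (if i ∈ S then (1/4) * x i ^ 2 else 0) := by
        rw [← Finset.sum_mul]
        by_cases hiS : i ∈ S
        · simp only [if_pos hiS]; ring
        · simp only [if_neg hiS]; ring
      rw [hsplit]
      have : ∑ j, W i j * (x i * x i) - ∑ j, W i j * (x i * x j)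
          = ∑ j, W i j * (x i ^ 2 - x i * x j) := by
        rw [← Finset.sum_sub_distrib]
        exact Finset.sum_congr rfl fun j _ => by ring
      linarith [this]
    rw [Finset.sum_congr rfl fun i _ => hinner i, Finset.sum_add_distrib]
    congr 1
    rw [Finset.sum_ite_mem, Finset.univ_inter, Finset.mul_sum]
  -- symmetrized form
  have hsymQ : ∀ x : Fin n → ℝ, ∑ i, ∑ j, W i j * (x i ^ 2 - x i * x j)
      = (1/2) * ∑ i, ∑ j, W i j * (x i - x j) ^ 2 := by
    intro x
    have h1 : ∑ i, ∑ j, W i j * (x i - x j) ^ 2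
        = ∑ i, ∑ j, W i j * (x i ^ 2 - x i * x j)
          + ∑ i, ∑ j, W i j * (x j ^ 2 - x j * x i) := by
      rw [← Finset.sum_add_distrib]
      refine Finset.sum_congr rfl fun i _ => ?_
      rw [← Finset.sum_add_distrib]
      exact Finset.sum_congr rfl fun j _ => by ring
    have h2 : ∑ i, ∑ j, W i j * (x j ^ 2 - x j * x i)
        = ∑ i, ∑ j, W i j * (x i ^ 2 - x i * x j) := by
      rw [Finset.sum_comm]
      exact Finset.sum_congr rfl fun j _ =>
        Finset.sum_congr rfl fun i _ => by rw [hWsymm]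
    linarith
  have hLapnn : ∀ x : Fin n → ℝ, 0 ≤ ∑ i, ∑ j, W i j * (x i - x j) ^ 2 := by
    intro x
    refine Finset.sum_nonneg fun i _ => Finset.sum_nonneg fun j _ => ?_
    exact mul_nonneg (hWnn i j) (sq_nonneg _)
  -- upper bound of the quadratic form
  have hQle : ∀ x : Fin n → ℝ, dotProduct x (M.mulVec x) ≤ ∑ i, x i ^ 2 := by
    intro x
    rw [hQ x]
    have hL : ∑ i, ∑ j, W i j * (x i ^ 2 - x i * x j) ≤ (1/2) * ∑ i, x i ^ 2 := by
      have step1 : ∑ i, ∑ j, W i j * (x i ^ 2 - x i * x j)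
          ≤ ∑ i, ∑ j, W i j * ((3 * x i ^ 2 + x j ^ 2) / 2) := by
        refine Finset.sum_le_sum fun i _ => Finset.sum_le_sum fun j _ => ?_
        refine mul_le_mul_of_nonneg_left ?_ (hWnn i j)
        nlinarith [sq_nonneg (x i + x j)]
      have swap : ∑ i, ∑ j, W i j * x j ^ 2 = ∑ i, (∑ j, W i j) * x i ^ 2 := by
        rw [Finset.sum_comm]
        refine Finset.sum_congr rfl fun j _ => ?_
        rw [Finset.sum_mul]
        exact Finset.sum_congr rfl fun i _ => by rw [hWsymm]
      have step2 : ∑ i, ∑ j, W i j * ((3 * x i ^ 2 + x j ^ 2) / 2)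
          = (3/2) * ∑ i, (∑ j, W i j) * x i ^ 2 + (1/2) * ∑ i, ∑ j, W i j * x j ^ 2 := by
        rw [Finset.mul_sum, Finset.mul_sum, ← Finset.sum_add_distrib]
        refine Finset.sum_congr rfl fun i _ => ?_
        have e1 : (3:ℝ)/2 * ((∑ j, W i j) * x i ^ 2) = ∑ j, 3/2 * (W i j * x i ^ 2) := by
          rw [Finset.sum_mul, Finset.mul_sum]
        have e2 : (1:ℝ)/2 * ∑ j, W i j * x j ^ 2 = ∑ j, 1/2 * (W i j * x j ^ 2) := by
          rw [Finset.mul_sum]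
        rw [e1, e2, ← Finset.sum_add_distrib]
        exact Finset.sum_congr rfl fun j _ => by ring
      have step3 : ∑ i, (∑ j, W i j) * x i ^ 2 ≤ (1/4) * ∑ i, x i ^ 2 := by
        rw [Finset.mul_sum]
        exact Finset.sum_le_sum fun i _ =>
          mul_le_mul_of_nonneg_right (hWrow i) (sq_nonneg _)
      rw [swap] at step2
      linarith
    have hS : ∑ i ∈ S, x i ^ 2 ≤ ∑ i, x i ^ 2 :=
      Finset.sum_le_sum_of_subset_of_nonneg (Finset.subset_univ S) fun i _ _ => sq_nonneg _
    have hSnn : (0:ℝ) ≤ ∑ i ∈ S, x i ^ 2 := Finset.sum_nonneg fun i _ => sq_nonneg _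
    linarith
  -- PSD facts
  have hMherm : M.IsHermitian := by
    ext i j
    simp only [Matrix.conjTranspose_apply, hM, Matrix.sub_apply, Matrix.one_apply, star_trivial]
    rw [hAsymm j i]
    congr 1
    simp [eq_comm]
  have hMpsd : M.PosSemidef := by
    refine Matrix.PosSemidef.of_dotProduct_mulVec_nonneg hMherm fun x => ?_
    have hst : star x = x := by
      funext i; exact star_trivial _
    rw [hst, hQ x, hsymQ x]
    have h1 : (0:ℝ) ≤ (1/2) * ∑ i, ∑ j, W i j * (x i - x j) ^ 2 := by
      have := hLapnn x; linarith
    have h2 : (0:ℝ) ≤ (1/4) * ∑ i ∈ S, x i ^ 2 := by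
      have : (0:ℝ) ≤ ∑ i ∈ S, x i ^ 2 := Finset.sum_nonneg fun i _ => sq_nonneg _
      linarith
    linarith
  have hApsd : ((1 : Matrix (Fin n) (Fin n) ℝ) - M).PosSemidef := by
    rw [h1M]
    refine Matrix.PosSemidef.of_dotProduct_mulVec_nonneg ?_ fun x => ?_
    · ext i j
      simp only [Matrix.conjTranspose_apply, star_trivial]
      exact hAsymm j i
    · have hst : star x = x := by
        funext i; exact star_trivial _
      rw [hst]
      have hx : dotProduct x (A.mulVec x)
          = ∑ i, x i ^ 2 - dotProduct x (M.mulVec x) := by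
        rw [← h1M, Matrix.sub_mulVec, Matrix.one_mulVec, dotProduct_sub]
        congr 1
        simp [dotProduct, pow_two]
      rw [hx]
      linarith [hQle x]
  -- assembly
  set w : Fin n → ℝ := fun j => v j - μ with hw
  have hkey := keyIneq M hMpsd hApsd w
  have hexp : ∑ i, (A.mulVec w i) ^ 2
      = ∑ i, w i ^ 2 - 2 * dotProduct w (M.mulVec w)
        + dotProduct (M.mulVec w) (M.mulVec w) := by
    have h1 : ∀ i, A.mulVec w i = w i - M.mulVec w i := by
      intro i
      rw [← h1M, Matrix.sub_mulVec, Matrix.one_mulVec]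
      rfl
    have h2 : ∑ i, (A.mulVec w i) ^ 2
        = ∑ i, (w i ^ 2 - 2 * (w i * M.mulVec w i) + M.mulVec w i * M.mulVec w i) :=
      Finset.sum_congr rfl fun i _ => by rw [h1 i]; ring
    rw [h2, Finset.sum_add_distrib, Finset.sum_sub_distrib, ← Finset.mul_sum]
    rfl
  have hfinal : (1/8) * ((1/2) * ∑ k, ∑ l,
        if G.Adj k l then (v k - v l) ^ 2 / ((max (G.degree k) (G.degree l) : ℕ) : ℝ) else 0)
      + (1/4) * ∑ k ∈ S, (v k - μ) ^ 2 ≤ dotProduct w (M.mulVec w) := by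
    rw [hQ w, hsymQ w]
    have hSeq : ∑ k ∈ S, (v k - μ) ^ 2 = ∑ i ∈ S, w i ^ 2 := by
      exact Finset.sum_congr rfl fun k _ => by simp [hw]
    rw [hSeq]
    have hLap : (1/8) * ((1/2) * ∑ k, ∑ l,
        if G.Adj k l then (v k - v l) ^ 2 / ((max (G.degree k) (G.degree l) : ℕ) : ℝ) else 0)
        ≤ (1/2) * ∑ i, ∑ j, W i j * (w i - w j) ^ 2 := by
      have e1 : (1/8 : ℝ) * ((1/2) * ∑ k, ∑ l,
          (if G.Adj k l then (v k - v l) ^ 2 / ((max (G.degree k) (G.degree l) : ℕ) : ℝ) else 0))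
          = ∑ k, ∑ l, (1/16 : ℝ) *
            (if G.Adj k l then (v k - v l) ^ 2 / ((max (G.degree k) (G.degree l) : ℕ) : ℝ) else 0) := by
        rw [← mul_assoc]
        norm_num
        rw [Finset.mul_sum]
        exact Finset.sum_congr rfl fun k _ => by rw [Finset.mul_sum]; norm_num
      have e2 : (1/2 : ℝ) * ∑ i, ∑ j, W i j * (w i - w j) ^ 2
          = ∑ i, ∑ j, (1/2 : ℝ) * (W i j * (w i - w j) ^ 2) := by
        rw [Finset.mul_sum]
        exact Finset.sum_congr rfl fun i _ => by rw [Finset.mul_sum]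
      rw [e1, e2]
      refine Finset.sum_le_sum fun k _ => Finset.sum_le_sum fun l _ => ?_
      have hwd : w k - w l = v k - v l := by simp only [hw]; ring
      by_cases hadj : G.Adj k l
      · simp only [if_pos hadj, hWdef, hwd]
        set t : ℝ := ((max (G.degree k) (G.degree l) : ℕ) : ℝ) with ht
        have htnn : 0 ≤ t := by rw [ht]; exact Nat.cast_nonneg _
        have hnn : 0 ≤ (v k - v l) ^ 2 * (1/t) := by positivity
        have f1 : (v k - v l) ^ 2 / t = (v k - v l) ^ 2 * (1/t) := by
          rw [one_div, div_eq_mul_inv]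
        have f2 : 1 / (4 * t) = (1/4) * (1/t) := by
          rw [one_div, mul_inv, one_div]; ring
        rw [f1, f2]
        nlinarith [hnn]
      · simp only [if_neg hadj, hWdef]
        simp
    linarith
  have : ∑ i, (v i - μ) ^ 2 = ∑ i, w i ^ 2 :=
    Finset.sum_congr rfl fun i _ => by simp [hw]
  rw [this]
  linarith [hexp, hkey, hfinal]
end

section
/- Let G be a simple undirected graph on {1,…,n} with edge set E and degrees d_i, let S ⊆ {1,…,n}, and let A be the associated alignment matrix. Let Δ ∈ (0,1), v ∈ ℝⁿ, μ ∈ ℝ, and let b ∈ ℝⁿ be given by b_i = μ/4 for i ∈ S and b_i = 0 otherwise. Let r and c be independent random vectors in ℝⁿ with mean zero such that r_i = 0 almost surely for i ∉ S, E[r_i²] ≤ σ²/16 for i ∈ S, and E[c_i²] ≤ (σ′)²/16 for all i. Define the random vector v′ = (1 − Δ)v + Δ(Av + b + r + c). Then E‖v′ − μ𝟙‖₂² ≤ ‖v − μ𝟙‖₂² − (Δ/8) Σ_{{k,l}∈E} (v_k − v_l)²/max(d_k, d_l) − (Δ/4) Σ_{k∈S} (v_k − μ)² + (Δ²/16)(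 |S| σ² + n (σ′)² ), where 𝟙 ∈ ℝⁿ is the all-ones vector and each unordered edge {k,l} is counted once in the sum. -/
open Finset MeasureTheory ProbabilityTheory





private lemma stmt14_sq_add (x y : ℝ) : (x + y)^2 ≤ 2*x^2 + 2*y^2 := by nlinarith [sq_nonneg (x - y)]

private lemma stmt14_det {n : ℕ} (a : Fin n → Fin n → ℝ) (S : Finset (Fin n)) (w L D : Fin n → ℝ)
    (hLdef : ∀ i, L i = ∑ j, a i j * (w i - w j))
    (hDdef : ∀ i, D i = if i ∈ S then w i / 4 else 0)
    (ha0 : ∀ i j, 0 ≤ a i j) (hsymm : ∀ i j, a i j = a j i)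
    (hrow : ∀ i, ∑ j, a i j ≤ 1/4) {Δ : ℝ} (hΔ0 : 0 < Δ) (hΔ1 : Δ < 1) :
    ∑ i, (w i - Δ * (L i + D i)) ^ 2
      ≤ ∑ i, w i ^ 2 - (Δ/4) * (∑ i, ∑ j, a i j * (w i - w j)^2)
        - (Δ/4) * ∑ k ∈ S, w k ^ 2 := by
  have hE2 : (0:ℝ) ≤ ∑ i, ∑ j, a i j * (w i - w j)^2 :=
    Finset.sum_nonneg fun i _ => Finset.sum_nonneg fun j _ => mul_nonneg (ha0 i j) (sq_nonneg _)
  have hs : (0:ℝ) ≤ ∑ k ∈ S, w k ^ 2 := Finset.sum_nonneg fun k _ => sq_nonneg _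
  -- symmetrization
  have hrel : ∑ i, ∑ j, a i j * ((w i - w j) * w i) = ∑ i, ∑ j, a i j * ((w j - w i) * w j) := by
    rw [Finset.sum_comm]
    exact Finset.sum_congr rfl fun j _ => Finset.sum_congr rfl fun i _ => by rw [hsymm]
  have hwL : ∀ i, w i * L i = ∑ j, a i j * ((w i - w j) * w i) := fun i => by
    rw [hLdef, Finset.mul_sum]; exact Finset.sum_congr rfl fun j _ => by ring
  have hcross : 2 * (∑ i, w i * L i) = ∑ i, ∑ j, a i j * (w i - w j)^2 := by
    calc 2 * (∑ i, w i * L i)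
        = (∑ i, ∑ j, a i j * ((w i - w j) * w i))
          + ∑ i, ∑ j, a i j * ((w j - w i) * w j) := by
          rw [← hrel, Finset.sum_congr rfl fun i _ => hwL i]; ring
      _ = ∑ i, ∑ j, (a i j * ((w i - w j) * w i) + a i j * ((w j - w i) * w j)) := by
          rw [← Finset.sum_add_distrib]
          exact Finset.sum_congr rfl fun i _ => by rw [← Finset.sum_add_distrib]
      _ = ∑ i, ∑ j, a i j * (w i - w j)^2 :=
          Finset.sum_congr rfl fun i _ => Finset.sum_congr rfl fun j _ => by ring
  -- Cauchy-Schwarz row bound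
  have hLsq : ∑ i, L i ^ 2 ≤ (1/4) * ∑ i, ∑ j, a i j * (w i - w j)^2 := by
    have per : ∀ i, L i ^ 2 ≤ (1/4) * ∑ j, a i j * (w i - w j)^2 := by
      intro i
      have hg : (0:ℝ) ≤ ∑ j, a i j * (w i - w j)^2 :=
        Finset.sum_nonneg fun j _ => mul_nonneg (ha0 i j) (sq_nonneg _)
      have hcs := Finset.sum_sq_le_sum_mul_sum_of_sq_eq_mul (Finset.univ (α := Fin n))
        (r := fun j => a i j * (w i - w j)) (f := fun j => a i j)
        (g := fun j => a i j * (w i - w j)^2)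
        (fun j _ => ha0 i j) (fun j _ => mul_nonneg (ha0 i j) (sq_nonneg _)) (fun j _ => by ring)
      calc L i ^ 2 = (∑ j, a i j * (w i - w j))^2 := by rw [hLdef]
        _ ≤ (∑ j, a i j) * ∑ j, a i j * (w i - w j)^2 := hcs
        _ ≤ (1/4) * ∑ j, a i j * (w i - w j)^2 := mul_le_mul_of_nonneg_right (hrow i) hg
    calc ∑ i, L i ^ 2 ≤ ∑ i, (1/4) * ∑ j, a i j * (w i - w j)^2 :=
          Finset.sum_le_sum fun i _ => per i
      _ = (1/4) * ∑ i, ∑ j, a i j * (w i - w j)^2 := (Finset.mul_sum _ _ _).symm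
  -- D sums
  have hDsq : ∑ i, D i ^ 2 = (∑ k ∈ S, w k ^ 2) / 16 := by
    have h1 : ∀ i, D i ^ 2 = if i ∈ S then w i ^ 2 / 16 else 0 := by
      intro i; rw [hDdef]; by_cases h : i ∈ S <;> simp [h] <;> ring
    rw [Finset.sum_congr rfl fun i _ => h1 i, Finset.sum_ite_mem, Finset.univ_inter,
      ← Finset.sum_div]
  have hDcross : ∑ i, w i * D i = (∑ k ∈ S, w k ^ 2) / 4 := by
    have h1 : ∀ i, w i * D i = if i ∈ S then w i ^ 2 / 4 else 0 := by
      intro i; rw [hDdef]; by_cases h : i ∈ S <;> simp [h] <;> ring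
    rw [Finset.sum_congr rfl fun i _ => h1 i, Finset.sum_ite_mem, Finset.univ_inter,
      ← Finset.sum_div]
  have hM0 : (0:ℝ) ≤ ∑ i, (L i + D i)^2 := Finset.sum_nonneg fun i _ => sq_nonneg _
  have hM2 : ∑ i, (L i + D i)^2
      ≤ (∑ i, ∑ j, a i j * (w i - w j)^2)/2 + (∑ k ∈ S, w k ^ 2)/8 := by
    have h1 : ∑ i, (L i + D i)^2 ≤ 2*(∑ i, L i ^ 2) + 2*(∑ i, D i ^ 2) := by
      calc ∑ i, (L i + D i)^2 ≤ ∑ i, (2*(L i)^2 + 2*(D i)^2) :=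
            Finset.sum_le_sum fun i _ => stmt14_sq_add _ _
        _ = 2*(∑ i, L i ^ 2) + 2*(∑ i, D i ^ 2) := by
            rw [Finset.sum_add_distrib, ← Finset.mul_sum, ← Finset.mul_sum]
    linarith
  -- expansion
  have hexp : ∑ i, (w i - Δ * (L i + D i)) ^ 2
      = (∑ i, w i ^ 2) - (2*Δ)*(∑ i, w i * L i) - (2*Δ)*(∑ i, w i * D i)
        + Δ^2 * (∑ i, (L i + D i)^2) := by
    have h1 : ∀ i, (w i - Δ * (L i + D i))^2
        = w i ^ 2 - (2*Δ)*(w i * L i) - (2*Δ)*(w i * D i) + Δ^2*(L i + D i)^2 :=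
      fun i => by ring
    rw [Finset.sum_congr rfl fun i _ => h1 i, Finset.sum_add_distrib, Finset.sum_sub_distrib,
      Finset.sum_sub_distrib, ← Finset.mul_sum, ← Finset.mul_sum, ← Finset.mul_sum]
  have hΔsq : Δ^2 * (∑ i, (L i + D i)^2)
      ≤ Δ * ((∑ i, ∑ j, a i j * (w i - w j)^2)/2 + (∑ k ∈ S, w k ^ 2)/8) := by
    have h1 : Δ^2 * (∑ i, (L i + D i)^2) ≤ Δ * (∑ i, (L i + D i)^2) :=
      mul_le_mul_of_nonneg_right (by nlinarith) hM0
    have h2 : Δ * (∑ i, (L i + D i)^2)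
        ≤ Δ * ((∑ i, ∑ j, a i j * (w i - w j)^2)/2 + (∑ k ∈ S, w k ^ 2)/8) :=
      mul_le_mul_of_nonneg_left hM2 hΔ0.le
    linarith
  have hΔE : (0:ℝ) ≤ Δ * (∑ i, ∑ j, a i j * (w i - w j)^2) := mul_nonneg hΔ0.le hE2
  have hΔs : (0:ℝ) ≤ Δ * (∑ k ∈ S, w k ^ 2) := mul_nonneg hΔ0.le hs
  have hwLval : ∑ i, w i * L i = (∑ i, ∑ j, a i j * (w i - w j)^2)/2 := by linarith
  rw [hexp, hwLval, hDcross]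
  linarith




private lemma stmt14_int_sq {Ω : Type*} [MeasureSpace Ω] [IsProbabilityMeasure (ℙ : Measure Ω)]
    (u Δ : ℝ) (x y : Ω → ℝ) (hx : MemLp x 2 ℙ) (hy : MemLp y 2 ℙ)
    (hxy : IndepFun x y ℙ) (hx0 : ∫ ω, x ω ∂ℙ = 0) (hy0 : ∫ ω, y ω ∂ℙ = 0) :
    ∫ ω, (u + Δ * (x ω + y ω))^2 ∂ℙ
      = u^2 + Δ^2 * ((∫ ω, (x ω)^2 ∂ℙ) + ∫ ω, (y ω)^2 ∂ℙ) := by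
  have hxi : Integrable x ℙ := hx.integrable one_le_two
  have hyi : Integrable y ℙ := hy.integrable one_le_two
  have hx2 : Integrable (fun ω => x ω ^ 2) ℙ := hx.integrable_sq
  have hy2 : Integrable (fun ω => y ω ^ 2) ℙ := hy.integrable_sq
  have hxyi : Integrable (fun ω => x ω * y ω) ℙ := hxy.integrable_mul hxi hyi
  have hxy0 : ∫ ω, x ω * y ω ∂ℙ = 0 := by
    have h := hxy.integral_mul_eq_mul_integral hxi.aestronglyMeasurable hyi.aestronglyMeasurable
    calc ∫ ω, x ω * y ω ∂ℙ = ∫ ω, (x * y) ω ∂ℙ := rfl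
      _ = (∫ ω, x ω ∂ℙ) * ∫ ω, y ω ∂ℙ := h
      _ = 0 := by rw [hx0, zero_mul]
  have I6 : Integrable (fun ω => Δ^2 * y ω ^ 2) ℙ := hy2.const_mul _
  have I5 : Integrable (fun ω => (2*Δ^2) * (x ω * y ω) + Δ^2 * y ω ^ 2) ℙ :=
    (hxyi.const_mul _).add I6
  have I4 : Integrable (fun ω => Δ^2 * x ω ^ 2 + ((2*Δ^2) * (x ω * y ω) + Δ^2 * y ω ^ 2)) ℙ :=
    (hx2.const_mul _).add I5
  have I3 : Integrable (fun ω => (2*u*Δ) * y ω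
      + (Δ^2 * x ω ^ 2 + ((2*Δ^2) * (x ω * y ω) + Δ^2 * y ω ^ 2))) ℙ :=
    (hyi.const_mul _).add I4
  have I2 : Integrable (fun ω => (2*u*Δ) * x ω + ((2*u*Δ) * y ω
      + (Δ^2 * x ω ^ 2 + ((2*Δ^2) * (x ω * y ω) + Δ^2 * y ω ^ 2)))) ℙ :=
    (hxi.const_mul _).add I3
  calc ∫ ω, (u + Δ * (x ω + y ω))^2 ∂ℙ
      = ∫ ω, (u^2 + ((2*u*Δ) * x ω + ((2*u*Δ) * y ω
          + (Δ^2 * x ω ^ 2 + ((2*Δ^2) * (x ω * y ω) + Δ^2 * y ω ^ 2))))) ∂ℙ := by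
        apply integral_congr_ae; filter_upwards with ω; ring
    _ = (∫ _ω, (u^2:ℝ) ∂ℙ) + ∫ ω, ((2*u*Δ) * x ω + ((2*u*Δ) * y ω
          + (Δ^2 * x ω ^ 2 + ((2*Δ^2) * (x ω * y ω) + Δ^2 * y ω ^ 2)))) ∂ℙ :=
        integral_add (integrable_const _) I2
    _ = (∫ _ω, (u^2:ℝ) ∂ℙ) + ((∫ ω, (2*u*Δ) * x ω ∂ℙ) + ∫ ω, ((2*u*Δ) * y ω
          + (Δ^2 * x ω ^ 2 + ((2*Δ^2) * (x ω * y ω) + Δ^2 * y ω ^ 2))) ∂ℙ) := by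
        rw [integral_add (hxi.const_mul _) I3]
    _ = (∫ _ω, (u^2:ℝ) ∂ℙ) + ((∫ ω, (2*u*Δ) * x ω ∂ℙ) + ((∫ ω, (2*u*Δ) * y ω ∂ℙ)
          + ∫ ω, (Δ^2 * x ω ^ 2 + ((2*Δ^2) * (x ω * y ω) + Δ^2 * y ω ^ 2)) ∂ℙ)) := by
        rw [integral_add (hyi.const_mul _) I4]
    _ = (∫ _ω, (u^2:ℝ) ∂ℙ) + ((∫ ω, (2*u*Δ) * x ω ∂ℙ) + ((∫ ω, (2*u*Δ) * y ω ∂ℙ)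
          + ((∫ ω, Δ^2 * x ω ^ 2 ∂ℙ) + ∫ ω, ((2*Δ^2) * (x ω * y ω) + Δ^2 * y ω ^ 2) ∂ℙ))) := by
        rw [integral_add (hx2.const_mul _) I5]
    _ = (∫ _ω, (u^2:ℝ) ∂ℙ) + ((∫ ω, (2*u*Δ) * x ω ∂ℙ) + ((∫ ω, (2*u*Δ) * y ω ∂ℙ)
          + ((∫ ω, Δ^2 * x ω ^ 2 ∂ℙ) + ((∫ ω, (2*Δ^2) * (x ω * y ω) ∂ℙ)
          + ∫ ω, Δ^2 * y ω ^ 2 ∂ℙ)))) := by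
        rw [integral_add (hxyi.const_mul _) I6]
    _ = u^2 + Δ^2 * ((∫ ω, (x ω)^2 ∂ℙ) + ∫ ω, (y ω)^2 ∂ℙ) := by
        rw [integral_const_mul, integral_const_mul, integral_const_mul, integral_const_mul,
          integral_const_mul, hx0, hy0, hxy0]
        simp [integral_const]
        ring




private noncomputable def stmtF {n : ℕ} (G : SimpleGraph (Fin n)) [DecidableRel G.Adj] :
    Fin n → Fin n → ℝ :=
  fun i j => 1 / (4 * ((max (G.degree i) (G.degree j) : ℕ) : ℝ))

private noncomputable def stmtAw {n : ℕ} (G : SimpleGraph (Fin n)) [DecidableRel G.Adj] :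
    Fin n → Fin n → ℝ :=
  fun i j => if G.Adj i j then stmtF G i j else 0

private lemma stmt14_deg_pos {n : ℕ} (G : SimpleGraph (Fin n)) [DecidableRel G.Adj]
    {i j : Fin n} (h : G.Adj i j) : (0:ℝ) < ((max (G.degree i) (G.degree j) : ℕ) : ℝ) := by
  have h1 : 0 < G.degree i := (SimpleGraph.degree_pos_iff_exists_adj G i).mpr ⟨j, h⟩
  have h2 : 0 < max (G.degree i) (G.degree j) := lt_of_lt_of_le h1 (le_max_left _ _)
  exact_mod_cast h2

private lemma stmtAw_nonneg {n : ℕ} (G : SimpleGraph (Fin n)) [DecidableRel G.Adj]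
    (i j : Fin n) : 0 ≤ stmtAw G i j := by
  unfold stmtAw
  by_cases h : G.Adj i j
  · rw [if_pos h]; unfold stmtF; positivity
  · rw [if_neg h]

private lemma stmtAw_symm {n : ℕ} (G : SimpleGraph (Fin n)) [DecidableRel G.Adj]
    (i j : Fin n) : stmtAw G i j = stmtAw G j i := by
  unfold stmtAw stmtF
  by_cases h : G.Adj i j
  · rw [if_pos h, if_pos h.symm, max_comm (G.degree i) (G.degree j)]
  · rw [if_neg h, if_neg fun h' => h h'.symm]

private lemma stmtAw_nbr {n : ℕ} (G : SimpleGraph (Fin n)) [DecidableRel G.Adj]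
    (i : Fin n) (g : Fin n → ℝ) :
    ∑ j, stmtAw G i j * g j = ∑ j ∈ G.neighborFinset i, stmtF G i j * g j := by
  rw [SimpleGraph.neighborFinset_eq_filter, Finset.sum_filter]
  exact Finset.sum_congr rfl fun j _ => by simp only [stmtAw, ite_mul, zero_mul]

private lemma stmtAw_row {n : ℕ} (G : SimpleGraph (Fin n)) [DecidableRel G.Adj]
    (i : Fin n) : ∑ j, stmtAw G i j ≤ 1/4 := by
  have h1 : ∑ j, stmtAw G i j = ∑ j ∈ G.neighborFinset i, stmtF G i j := by
    rw [SimpleGraph.neighborFinset_eq_filter, Finset.sum_filter]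
    exact Finset.sum_congr rfl fun j _ => rfl
  rw [h1]
  rcases Nat.eq_zero_or_pos (G.degree i) with h0 | hpos
  · have he : G.neighborFinset i = ∅ := Finset.card_eq_zero.mp
      (by rw [SimpleGraph.card_neighborFinset_eq_degree, h0])
    rw [he]
    simp
  · have hd : (0:ℝ) < (G.degree i : ℝ) := by exact_mod_cast hpos
    have hb : ∀ j ∈ G.neighborFinset i, stmtF G i j ≤ 1/(4 * (G.degree i : ℝ)) := by
      intro j _
      unfold stmtF
      have hm : (G.degree i : ℝ) ≤ ((max (G.degree i) (G.degree j) : ℕ) : ℝ) := by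
        exact_mod_cast le_max_left (G.degree i) (G.degree j)
      apply one_div_le_one_div_of_le (by positivity)
      linarith
    calc ∑ j ∈ G.neighborFinset i, stmtF G i j
        ≤ ∑ _j ∈ G.neighborFinset i, 1/(4 * (G.degree i : ℝ)) := Finset.sum_le_sum hb
      _ = ((G.neighborFinset i).card : ℝ) * (1/(4 * (G.degree i : ℝ))) := by
          rw [Finset.sum_const, nsmul_eq_mul]
      _ = (G.degree i : ℝ) * (1/(4 * (G.degree i : ℝ))) := by
          rw [SimpleGraph.card_neighborFinset_eq_degree]
      _ = 1/4 := by field_simp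
/-- one-step expected decrease for the alignment update
`v' = (1-Δ)v + Δ(Av + b + r + c)` with measurement noise `r` and communication
noise `c`.  (The sum over unordered edges is written as half the sum over
ordered adjacent pairs.) -/
theorem stmt14 {Ω : Type*} [MeasureSpace Ω] [IsProbabilityMeasure (ℙ : Measure Ω)]
    (n : ℕ) (G : SimpleGraph (Fin n)) [DecidableRel G.Adj]
    (S : Finset (Fin n)) (A : Matrix (Fin n) (Fin n) ℝ)
    (hAadj : ∀ i j, G.Adj i j →
      A i j = 1 / (4 * ((max (G.degree i) (G.degree j) : ℕ) : ℝ)))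
    (hAoff : ∀ i j, i ≠ j → ¬ G.Adj i j → A i j = 0)
    (hAdiagOut : ∀ i ∉ S, A i i
      = 1 - ∑ j ∈ G.neighborFinset i, 1 / (4 * ((max (G.degree i) (G.degree j) : ℕ) : ℝ)))
    (hAdiagIn : ∀ i ∈ S, A i i
      = 3 / 4 - ∑ j ∈ G.neighborFinset i, 1 / (4 * ((max (G.degree i) (G.degree j) : ℕ) : ℝ)))
    (Δ : ℝ) (hΔ0 : 0 < Δ) (hΔ1 : Δ < 1) (v : Fin n → ℝ) (μ σ σ' : ℝ)
    (hσ : 0 ≤ σ) (hσ' : 0 ≤ σ')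
    (b : Fin n → ℝ) (hb : ∀ i, b i = if i ∈ S then μ / 4 else 0)
    (r c : Ω → Fin n → ℝ) (hrMeas : Measurable r) (hcMeas : Measurable c)
    (hIndep : IndepFun r c ℙ)
    (hrL2 : ∀ i, MemLp (fun ω => r ω i) 2 ℙ)
    (hcL2 : ∀ i, MemLp (fun ω => c ω i) 2 ℙ)
    (hrMean : ∀ i, ∫ ω, r ω i ∂ℙ = 0) (hcMean : ∀ i, ∫ ω, c ω i ∂ℙ = 0)
    (hrZero : ∀ i ∉ S, ∀ᵐ ω ∂ℙ, r ω i = 0)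
    (hrVar : ∀ i ∈ S, ∫ ω, (r ω i) ^ 2 ∂ℙ ≤ σ ^ 2 / 16)
    (hcVar : ∀ i, ∫ ω, (c ω i) ^ 2 ∂ℙ ≤ σ' ^ 2 / 16) :
    (∫ ω, ∑ i, (((1 - Δ) • v + Δ • (A.mulVec v + b + r ω + c ω)) i - μ) ^ 2 ∂ℙ)
      ≤ ∑ i, (v i - μ) ^ 2
        - (Δ / 8) * ((1 / 2) * ∑ k, ∑ l,
            if G.Adj k l then (v k - v l) ^ 2 / ((max (G.degree k) (G.degree l) : ℕ) : ℝ) else 0)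
        - (Δ / 4) * ∑ k ∈ S, (v k - μ) ^ 2
        + (Δ ^ 2 / 16) * (S.card * σ ^ 2 + n * σ' ^ 2) := by
  classical
  set u : Fin n → ℝ := fun i => (v i - μ)
    - Δ * ((∑ j, stmtAw G i j * ((v i - μ) - (v j - μ)))
      + (if i ∈ S then (v i - μ)/4 else 0)) with hu
  -- mulVec decomposition
  have hmv : ∀ i, A.mulVec v i = A i i * v i + ∑ j ∈ G.neighborFinset i, stmtF G i j * v j := by
    intro i
    have h0 : A.mulVec v i = ∑ j, A i j * v j := by simp [Matrix.mulVec, dotProduct]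
    have h1 : ∑ j, A i j * v j = A i i * v i + ∑ j ∈ Finset.univ.erase i, A i j * v j :=
      (Finset.add_sum_erase _ (fun j => A i j * v j) (Finset.mem_univ i)).symm
    have h2 : ∑ j ∈ Finset.univ.erase i, A i j * v j
        = ∑ j ∈ G.neighborFinset i, stmtF G i j * v j := by
      have e1 : ∑ j ∈ Finset.univ.erase i, A i j * v j
          = ∑ j ∈ Finset.univ.erase i, (if G.Adj i j then stmtF G i j * v j else 0) := by
        refine Finset.sum_congr rfl fun j hj => ?_
        by_cases h : G.Adj i j
        · rw [hAadj i j h, if_pos h]; rfl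
        · rw [hAoff i j (Ne.symm (Finset.ne_of_mem_erase hj)) h, if_neg h, zero_mul]
      have hz : (if G.Adj i i then stmtF G i i * v i else 0) = 0 := if_neg (G.loopless.irrefl i)
      rw [e1, Finset.sum_erase (f := fun j => if G.Adj i j then stmtF G i j * v j else 0)
        Finset.univ hz, SimpleGraph.neighborFinset_eq_filter, Finset.sum_filter]
    rw [h0, h1, h2]
  have hAii : ∀ i, A i i = (if i ∈ S then (3:ℝ)/4 else 1)
      - ∑ j ∈ G.neighborFinset i, stmtF G i j := by
    intro i
    by_cases h : i ∈ S
    · rw [if_pos h, hAdiagIn i h]; rfl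
    · rw [if_neg h, hAdiagOut i h]; rfl
  have hvsplit : ∀ i, ∑ j ∈ G.neighborFinset i, stmtF G i j * v j
      = (∑ j ∈ G.neighborFinset i, stmtF G i j * (v j - μ))
        + (∑ j ∈ G.neighborFinset i, stmtF G i j) * μ := by
    intro i
    rw [Finset.sum_mul, ← Finset.sum_add_distrib]
    exact Finset.sum_congr rfl fun j _ => by ring
  have hLnbr : ∀ i, ∑ j, stmtAw G i j * ((v i - μ) - (v j - μ))
      = (∑ j ∈ G.neighborFinset i, stmtF G i j) * (v i - μ)
        - ∑ j ∈ G.neighborFinset i, stmtF G i j * (v j - μ) := by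
    intro i
    rw [stmtAw_nbr G i (fun j => (v i - μ) - (v j - μ)), Finset.sum_mul,
      ← Finset.sum_sub_distrib]
    exact Finset.sum_congr rfl fun j _ => by ring
  have hkey : ∀ i, A.mulVec v i + b i
      = v i - ((∑ j, stmtAw G i j * ((v i - μ) - (v j - μ)))
        + (if i ∈ S then (v i - μ)/4 else 0)) := by
    intro i
    rw [hmv i, hAii i, hvsplit i, hLnbr i, hb i]
    by_cases h : i ∈ S <;> simp only [h, if_true, if_false] <;> ring
  have hpt : ∀ (ω : Ω) i, ((1 - Δ) • v + Δ • (A.mulVec v + b + r ω + c ω)) i - μ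
      = u i + Δ * (r ω i + c ω i) := by
    intro ω i
    have h3 := hkey i
    simp only [Pi.add_apply, Pi.smul_apply, smul_eq_mul, hu]
    rw [h3]
    ring
  -- integrability
  have hInteg : ∀ i, Integrable (fun ω => (u i + Δ * (r ω i + c ω i))^2) ℙ := by
    intro i
    have hsum : MemLp (fun ω => r ω i + c ω i) 2 ℙ := (hrL2 i).add (hcL2 i)
    have h1 : MemLp (fun ω => u i + Δ * (r ω i + c ω i)) 2 ℙ :=
      (memLp_const (u i)).add (hsum.const_mul Δ)
    exact h1.integrable_sq
  -- noise sums
  have hRsum : ∑ i, ∫ ω, (r ω i)^2 ∂ℙ ≤ (S.card : ℝ) * σ^2/16 := by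
    have h0 : ∀ i ∈ Finset.univ, i ∉ S → ∫ ω, (r ω i)^2 ∂ℙ = 0 := by
      intro i _ hi
      have he : (fun ω => (r ω i)^2) =ᵐ[ℙ] 0 := (hrZero i hi).mono fun ω h => by simp [h]
      rw [integral_congr_ae he]; simp
    rw [← Finset.sum_subset (Finset.subset_univ S) h0]
    calc ∑ i ∈ S, ∫ ω, (r ω i)^2 ∂ℙ ≤ ∑ _i ∈ S, σ^2/16 := Finset.sum_le_sum hrVar
      _ = (S.card : ℝ) * σ^2/16 := by rw [Finset.sum_const, nsmul_eq_mul]; ring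
  have hCsum : ∑ i, ∫ ω, (c ω i)^2 ∂ℙ ≤ (n:ℝ) * σ'^2/16 := by
    calc ∑ i, ∫ ω, (c ω i)^2 ∂ℙ ≤ ∑ _i : Fin n, σ'^2/16 :=
          Finset.sum_le_sum fun i _ => hcVar i
      _ = (n:ℝ) * σ'^2/16 := by
          rw [Finset.sum_const, nsmul_eq_mul, Finset.card_univ, Fintype.card_fin]; ring
  -- deterministic bound
  have hdet : ∑ i, u i ^ 2 ≤ ∑ i, (v i - μ)^2
      - (Δ/4) * (∑ i, ∑ j, stmtAw G i j * ((v i - μ) - (v j - μ))^2)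
      - (Δ/4) * ∑ k ∈ S, (v k - μ)^2 := by
    have h := stmt14_det (stmtAw G) S (fun i => v i - μ)
      (fun i => ∑ j, stmtAw G i j * ((v i - μ) - (v j - μ)))
      (fun i => if i ∈ S then (v i - μ)/4 else 0)
      (fun i => rfl) (fun i => rfl) (stmtAw_nonneg G) (stmtAw_symm G) (stmtAw_row G) hΔ0 hΔ1
    simpa [hu] using h
  -- edge sum identity
  have hedge : ∑ k, ∑ l, (if G.Adj k l then
        (v k - v l)^2 / ((max (G.degree k) (G.degree l) : ℕ):ℝ) else 0)
      = 4 * ∑ k, ∑ l, stmtAw G k l * ((v k - μ) - (v l - μ))^2 := by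
    rw [Finset.mul_sum]
    refine Finset.sum_congr rfl fun k _ => ?_
    rw [Finset.mul_sum]
    refine Finset.sum_congr rfl fun l _ => ?_
    by_cases h : G.Adj k l
    · have hM := stmt14_deg_pos G h
      rw [if_pos h]
      simp only [stmtAw, stmtF, if_pos h]
      field_simp
      ring
    · rw [if_neg h]
      simp [stmtAw, if_neg h]
  have hnoise : Δ^2 * ((∑ i, ∫ ω, (r ω i)^2 ∂ℙ) + ∑ i, ∫ ω, (c ω i)^2 ∂ℙ)
      ≤ Δ^2 * ((S.card:ℝ)*σ^2/16 + (n:ℝ)*σ'^2/16) :=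
    mul_le_mul_of_nonneg_left (by linarith) (sq_nonneg Δ)
  have hmain : (∫ ω, ∑ i, (((1 - Δ) • v + Δ • (A.mulVec v + b + r ω + c ω)) i - μ) ^ 2 ∂ℙ)
      = (∑ i, u i ^ 2)
        + Δ^2 * ((∑ i, ∫ ω, (r ω i)^2 ∂ℙ) + ∑ i, ∫ ω, (c ω i)^2 ∂ℙ) := by
    calc (∫ ω, ∑ i, (((1 - Δ) • v + Δ • (A.mulVec v + b + r ω + c ω)) i - μ) ^ 2 ∂ℙ)
        = ∫ ω, ∑ i, (u i + Δ * (r ω i + c ω i))^2 ∂ℙ := by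
          refine integral_congr_ae (Filter.Eventually.of_forall fun ω => ?_)
          exact Finset.sum_congr rfl fun i _ => by rw [hpt ω i]
      _ = ∑ i, ∫ ω, (u i + Δ * (r ω i + c ω i))^2 ∂ℙ :=
          integral_finset_sum _ (fun i _ => hInteg i)
      _ = ∑ i, (u i ^ 2 + Δ^2 * ((∫ ω, (r ω i)^2 ∂ℙ) + ∫ ω, (c ω i)^2 ∂ℙ)) := by
          refine Finset.sum_congr rfl fun i _ => ?_
          exact stmt14_int_sq (u i) Δ _ _ (hrL2 i) (hcL2 i)
            (hIndep.comp (measurable_pi_apply i) (measurable_pi_apply i))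
            (hrMean i) (hcMean i)
      _ = (∑ i, u i ^ 2)
          + Δ^2 * ((∑ i, ∫ ω, (r ω i)^2 ∂ℙ) + ∑ i, ∫ ω, (c ω i)^2 ∂ℙ) := by
          rw [Finset.sum_add_distrib, ← Finset.mul_sum, Finset.sum_add_distrib]
  rw [hmain, hedge]
  linarith [hdet, hnoise]
end

section
/- Let G be a simple undirected graph on {1,…,n} with edge set E and degrees d_i, let S ⊆ {1,…,n} be nonempty, and let A be the associated alignment matrix. Let Δ ∈ (0,1), v ∈ ℝⁿ, μ ∈ ℝ, let b ∈ ℝⁿ be given by b_i = μ/4 for i ∈ S and b_i = 0 otherwise, and let r and c be independent mean-zero random vectors in ℝⁿ with r_i = 0 almost surely for i ∉ S, E[r_i²] ≤ σ²/16 for i ∈ S, and E[c_i²] ≤ (σ′)²/16 for all i. Define v′ = (1 − Δ)v + Δ(Av + b + r + c). Then E‖v′ − μ𝟙‖₂² ≤ (1 − (Δ/8) κ(G)) ‖v − μ𝟙‖₂² + (Δ²/16)( |S| σ² + n (σ′)² ), where κ(G) is the sieve constant of G and 𝟙 ∈ ℝⁿ is the all-ones vector. -/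
open Finset MeasureTheory ProbabilityTheory

private noncomputable def sieveT {n : ℕ} (S : Finset (Fin n)) (i : Fin n) : ℝ :=
  if i ∈ S then (1/4 : ℝ) else 0

private noncomputable def sieveW {n : ℕ} (G : SimpleGraph (Fin n)) [DecidableRel G.Adj] (k l : Fin n) : ℝ :=
  if G.Adj k l then 1 / ((max (G.degree k) (G.degree l) : ℕ) : ℝ) else 0

private noncomputable def sieveQ {n : ℕ} (t : Fin n → ℝ) (W : Fin n → Fin n → ℝ) (x y : Fin n → ℝ) : ℝ :=
  (∑ i, t i * (x i * y i)) + (1/8) * ∑ k, ∑ l, W k l * ((x k - x l) * (y k - y l))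

private lemma sieveT_nonneg {n : ℕ} (S : Finset (Fin n)) (i : Fin n) : 0 ≤ sieveT S i := by
  unfold sieveT; split_ifs
  · norm_num
  · exact le_refl 0

private lemma sieveW_nonneg {n : ℕ} (G : SimpleGraph (Fin n)) [DecidableRel G.Adj]
    (k l : Fin n) : 0 ≤ sieveW G k l := by
  unfold sieveW; split_ifs
  · positivity
  · exact le_refl 0

private lemma sieveW_symm {n : ℕ} (G : SimpleGraph (Fin n)) [DecidableRel G.Adj]
    (k l : Fin n) : sieveW G k l = sieveW G l k := by
  unfold sieveW
  by_cases h : G.Adj k l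
  · rw [if_pos h, if_pos h.symm, max_comm]
  · rw [if_neg h, if_neg fun h' => h h'.symm]

private lemma sieveW_row {n : ℕ} (G : SimpleGraph (Fin n)) [DecidableRel G.Adj] (k : Fin n) :
    ∑ l, sieveW G k l ≤ 1 := by
  have hrw : ∑ l, sieveW G k l
      = ∑ l ∈ G.neighborFinset k, 1 / ((max (G.degree k) (G.degree l) : ℕ) : ℝ) := by
    simp only [sieveW]
    rw [SimpleGraph.neighborFinset_eq_filter, Finset.sum_filter]
  rw [hrw]
  by_cases hd : G.degree k = 0
  · have hempty : G.neighborFinset k = ∅ := by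
      rw [← Finset.card_eq_zero, SimpleGraph.card_neighborFinset_eq_degree]; exact hd
    rw [hempty]; simp
  · have hdpos : (0:ℝ) < (G.degree k : ℝ) := by
      exact_mod_cast Nat.pos_of_ne_zero hd
    calc ∑ l ∈ G.neighborFinset k, 1 / ((max (G.degree k) (G.degree l) : ℕ) : ℝ)
        ≤ ∑ _l ∈ G.neighborFinset k, 1 / (G.degree k : ℝ) := by
          refine Finset.sum_le_sum fun l _ => ?_
          refine one_div_le_one_div_of_le hdpos ?_
          exact_mod_cast le_max_left (G.degree k) (G.degree l)
      _ = (G.degree k : ℝ) * (1 / (G.degree k : ℝ)) := by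
          rw [Finset.sum_const, SimpleGraph.card_neighborFinset_eq_degree, nsmul_eq_mul]
      _ = 1 := by field_simp

private lemma sieveQ_nonneg {n : ℕ} {t : Fin n → ℝ} {W : Fin n → Fin n → ℝ}
    (ht : ∀ i, 0 ≤ t i) (hW : ∀ k l, 0 ≤ W k l) (x : Fin n → ℝ) : 0 ≤ sieveQ t W x x := by
  unfold sieveQ
  apply add_nonneg
  · exact Finset.sum_nonneg fun i _ => mul_nonneg (ht i) (mul_self_nonneg _)
  · apply mul_nonneg (by norm_num)
    exact Finset.sum_nonneg fun k _ => Finset.sum_nonneg fun l _ =>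
      mul_nonneg (hW k l) (mul_self_nonneg _)

private lemma sieveQ_expand {n : ℕ} (t : Fin n → ℝ) (W : Fin n → Fin n → ℝ)
    (x y : Fin n → ℝ) (s : ℝ) :
    sieveQ t W (fun i => x i + s * y i) (fun i => x i + s * y i)
      = sieveQ t W y y * (s * s) + (2 * sieveQ t W x y) * s + sieveQ t W x x := by
  simp only [sieveQ]
  have e1 : ∑ i, t i * ((x i + s * y i) * (x i + s * y i))
      = (∑ i, t i * (y i * y i)) * (s * s) + (∑ i, t i * (x i * y i)) * (2 * s)
        + ∑ i, t i * (x i * x i) := by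
    rw [Finset.sum_mul, Finset.sum_mul, ← Finset.sum_add_distrib, ← Finset.sum_add_distrib]
    exact Finset.sum_congr rfl fun i _ => by ring
  have e2 : ∑ k, ∑ l, W k l * ((x k + s * y k - (x l + s * y l)) * (x k + s * y k - (x l + s * y l)))
      = (∑ k, ∑ l, W k l * ((y k - y l) * (y k - y l))) * (s * s)
        + (∑ k, ∑ l, W k l * ((x k - x l) * (y k - y l))) * (2 * s)
        + ∑ k, ∑ l, W k l * ((x k - x l) * (x k - x l)) := by
    rw [Finset.sum_mul, Finset.sum_mul, ← Finset.sum_add_distrib, ← Finset.sum_add_distrib]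
    refine Finset.sum_congr rfl fun k _ => ?_
    rw [Finset.sum_mul, Finset.sum_mul, ← Finset.sum_add_distrib, ← Finset.sum_add_distrib]
    exact Finset.sum_congr rfl fun l _ => by ring
  rw [e1, e2]
  ring

private lemma sieveQ_cauchy {n : ℕ} {t : Fin n → ℝ} {W : Fin n → Fin n → ℝ}
    (ht : ∀ i, 0 ≤ t i) (hW : ∀ k l, 0 ≤ W k l) (x y : Fin n → ℝ) :
    (sieveQ t W x y)^2 ≤ sieveQ t W x x * sieveQ t W y y := by
  have key : ∀ s : ℝ, 0 ≤ sieveQ t W y y * (s * s) + (2 * sieveQ t W x y) * s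
      + sieveQ t W x x := by
    intro s
    have h := sieveQ_nonneg ht hW (fun i => x i + s * y i)
    rw [sieveQ_expand t W x y s] at h
    exact h
  have hd := discrim_le_zero key
  simp only [discrim] at hd
  nlinarith [hd]

/-- one-step contraction in terms of the sieve constant `κ(G)` of
the graph, when the measurement set `S` is nonempty.  `κ(G)` is the minimum over
vertices `m` and unit vectors `x` of
`x_m² + Σ_{{k,l}∈E} (x_k - x_l)²/max(d_k,d_l)` (each unordered edge counted once,
written as half the sum over ordered adjacent pairs); it is encoded by the
hypothesis `IsLeast … κ`. -/
theorem stmt15 {Ω : Type*} [MeasureSpace Ω] [IsProbabilityMeasure (ℙ : Measure Ω)]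
    (n : ℕ) (G : SimpleGraph (Fin n)) [DecidableRel G.Adj]
    (S : Finset (Fin n)) (hS : S.Nonempty) (A : Matrix (Fin n) (Fin n) ℝ)
    (hAadj : ∀ i j, G.Adj i j →
      A i j = 1 / (4 * ((max (G.degree i) (G.degree j) : ℕ) : ℝ)))
    (hAoff : ∀ i j, i ≠ j → ¬ G.Adj i j → A i j = 0)
    (hAdiagOut : ∀ i ∉ S, A i i
      = 1 - ∑ j ∈ G.neighborFinset i, 1 / (4 * ((max (G.degree i) (G.degree j) : ℕ) : ℝ)))
    (hAdiagIn : ∀ i ∈ S, A i i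
      = 3 / 4 - ∑ j ∈ G.neighborFinset i, 1 / (4 * ((max (G.degree i) (G.degree j) : ℕ) : ℝ)))
    (κ : ℝ)
    (hκ : IsLeast {y : ℝ | ∃ (m : Fin n) (x : Fin n → ℝ), (∑ i, (x i) ^ 2 = 1) ∧
      y = (x m) ^ 2 + (1 / 2) * ∑ k, ∑ l,
        if G.Adj k l then (x k - x l) ^ 2 / ((max (G.degree k) (G.degree l) : ℕ) : ℝ) else 0} κ)
    (Δ : ℝ) (hΔ0 : 0 < Δ) (hΔ1 : Δ < 1) (v : Fin n → ℝ) (μ σ σ' : ℝ)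
    (hσ : 0 ≤ σ) (hσ' : 0 ≤ σ')
    (b : Fin n → ℝ) (hb : ∀ i, b i = if i ∈ S then μ / 4 else 0)
    (r c : Ω → Fin n → ℝ) (hrMeas : Measurable r) (hcMeas : Measurable c)
    (hIndep : IndepFun r c ℙ)
    (hrL2 : ∀ i, MemLp (fun ω => r ω i) 2 ℙ)
    (hcL2 : ∀ i, MemLp (fun ω => c ω i) 2 ℙ)
    (hrMean : ∀ i, ∫ ω, r ω i ∂ℙ = 0) (hcMean : ∀ i, ∫ ω, c ω i ∂ℙ = 0)
    (hrZero : ∀ i ∉ S, ∀ᵐ ω ∂ℙ, r ω i = 0)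
    (hrVar : ∀ i ∈ S, ∫ ω, (r ω i) ^ 2 ∂ℙ ≤ σ ^ 2 / 16)
    (hcVar : ∀ i, ∫ ω, (c ω i) ^ 2 ∂ℙ ≤ σ' ^ 2 / 16) :
    (∫ ω, ∑ i, (((1 - Δ) • v + Δ • (A.mulVec v + b + r ω + c ω)) i - μ) ^ 2 ∂ℙ)
      ≤ (1 - (Δ / 8) * κ) * ∑ i, (v i - μ) ^ 2
        + (Δ ^ 2 / 16) * (S.card * σ ^ 2 + n * σ' ^ 2) := by
  -- ### Deterministic linear-algebra part ###
  -- off-diagonal entries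
  have hoff : ∀ i j, j ≠ i → A i j = (1/4) * sieveW G i j := by
    intro i j hji
    by_cases hadj : G.Adj i j
    · rw [hAadj i j hadj]
      simp only [sieveW, if_pos hadj]
      ring
    · rw [hAoff i j (Ne.symm hji) hadj]
      simp [sieveW, hadj]
  -- generic row expansion
  have hsum1 : ∀ (y : Fin n → ℝ) (i : Fin n),
      ∑ j, A i j * y j = A i i * y i + (1/4) * ∑ j, sieveW G i j * y j := by
    intro y i
    have hWii : sieveW G i i = 0 := by simp [sieveW]
    rw [← Finset.add_sum_erase Finset.univ (fun j => A i j * y j) (Finset.mem_univ i)]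
    rw [Finset.mul_sum,
      ← Finset.add_sum_erase Finset.univ (fun j => 1/4 * (sieveW G i j * y j)) (Finset.mem_univ i)]
    rw [hWii]
    have hcg : ∀ j ∈ Finset.univ.erase i, A i j * y j = 1/4 * (sieveW G i j * y j) := by
      intro j hj
      rw [hoff i j (Finset.ne_of_mem_erase hj)]; ring
    rw [Finset.sum_congr rfl hcg]
    ring
  -- diagonal entries
  have hAii : ∀ i, A i i = 1 - sieveT S i - (1/4) * ∑ j, sieveW G i j := by
    intro i
    have hnb : ∑ j ∈ G.neighborFinset i, 1 / (4 * ((max (G.degree i) (G.degree j) : ℕ) : ℝ))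
        = (1/4) * ∑ j, sieveW G i j := by
      rw [Finset.mul_sum, SimpleGraph.neighborFinset_eq_filter, Finset.sum_filter]
      refine Finset.sum_congr rfl fun j _ => ?_
      by_cases hadj : G.Adj i j
      · rw [if_pos hadj]; simp only [sieveW, if_pos hadj]; ring
      · rw [if_neg hadj]; simp [sieveW, hadj]
    by_cases hiS : i ∈ S
    · rw [hAdiagIn i hiS, hnb]; simp only [sieveT, if_pos hiS]; ring
    · rw [hAdiagOut i hiS, hnb]; simp only [sieveT, if_neg hiS]; ring
  -- row sums
  have hrowsum : ∀ i, ∑ j, A i j = 1 - sieveT S i := by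
    intro i
    have h := hsum1 (fun _ => (1:ℝ)) i
    simp only [mul_one] at h
    rw [h, hAii i]; ring
  -- application of (I - A)
  have hBapply : ∀ (y : Fin n → ℝ) (i : Fin n),
      y i - A.mulVec y i = sieveT S i * y i + (1/4) * ∑ j, sieveW G i j * (y i - y j) := by
    intro y i
    have h1 : A.mulVec y i = ∑ j, A i j * y j := by
      simp [Matrix.mulVec, dotProduct]
    rw [h1, hsum1 y i, hAii i]
    have h2 : ∑ j, sieveW G i j * (y i - y j)
        = (∑ j, sieveW G i j) * y i - ∑ j, sieveW G i j * y j := by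
      rw [Finset.sum_mul, ← Finset.sum_sub_distrib]
      exact Finset.sum_congr rfl fun j _ => by ring
    rw [h2]; ring
  -- key bilinear identity
  have hkey : ∀ x y : Fin n → ℝ,
      ∑ i, x i * (y i - A.mulVec y i) = sieveQ (sieveT S) (sieveW G) x y := by
    intro x y
    have h1 : ∑ i, x i * (y i - A.mulVec y i)
        = ∑ i, sieveT S i * (x i * y i)
          + (1/4) * ∑ i, ∑ j, sieveW G i j * (x i * (y i - y j)) := by
      rw [Finset.mul_sum, ← Finset.sum_add_distrib]
      refine Finset.sum_congr rfl fun i _ => ?_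
      rw [hBapply y i]
      have h3 : ∑ j, sieveW G i j * (x i * (y i - y j))
          = x i * ∑ j, sieveW G i j * (y i - y j) := by
        rw [Finset.mul_sum]
        exact Finset.sum_congr rfl fun j _ => by ring
      rw [h3]; ring
    have hswap : ∑ i, ∑ j, sieveW G i j * (x j * (y j - y i))
        = ∑ i, ∑ j, sieveW G i j * (x i * (y i - y j)) := by
      rw [Finset.sum_comm]
      exact Finset.sum_congr rfl fun a _ => Finset.sum_congr rfl fun b _ => by
        rw [sieveW_symm]
    have h2 : ∑ i, ∑ j, sieveW G i j * ((x i - x j) * (y i - y j))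
        = 2 * ∑ i, ∑ j, sieveW G i j * (x i * (y i - y j)) := by
      calc ∑ i, ∑ j, sieveW G i j * ((x i - x j) * (y i - y j))
          = ∑ i, ∑ j, (sieveW G i j * (x i * (y i - y j))
              + sieveW G i j * (x j * (y j - y i))) :=
            Finset.sum_congr rfl fun i _ => Finset.sum_congr rfl fun j _ => by ring
        _ = (∑ i, ∑ j, sieveW G i j * (x i * (y i - y j)))
              + ∑ i, ∑ j, sieveW G i j * (x j * (y j - y i)) := by
            rw [← Finset.sum_add_distrib]
            exact Finset.sum_congr rfl fun i _ => Finset.sum_add_distrib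
        _ = 2 * ∑ i, ∑ j, sieveW G i j * (x i * (y i - y j)) := by
            rw [hswap]; ring
    rw [h1]
    simp only [sieveQ]
    rw [h2]
    ring
  -- upper bound on the quadratic form
  have hQupper : ∀ y : Fin n → ℝ,
      sieveQ (sieveT S) (sieveW G) y y ≤ (3/4) * ∑ i, y i ^ 2 := by
    intro y
    have hA1 : ∑ i, sieveT S i * (y i * y i) ≤ (1/4) * ∑ i, y i ^ 2 := by
      rw [Finset.mul_sum]
      refine Finset.sum_le_sum fun i _ => ?_
      simp only [sieveT]
      split_ifs with h
      · exact le_of_eq (by ring)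
      · rw [zero_mul]; positivity
    have hB2 : ∑ k, ∑ l, sieveW G k l * ((y k - y l) * (y k - y l)) ≤ 4 * ∑ k, y k ^ 2 := by
      have step1 : ∀ k l, sieveW G k l * ((y k - y l) * (y k - y l))
          ≤ 2 * (sieveW G k l * y k ^ 2) + 2 * (sieveW G k l * y l ^ 2) := by
        intro k l
        nlinarith [mul_nonneg (sieveW_nonneg G k l) (sq_nonneg (y k + y l))]
      have hsw : ∑ k, ∑ l, sieveW G k l * y l ^ 2 = ∑ k, ∑ l, sieveW G k l * y k ^ 2 := by
        rw [Finset.sum_comm]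
        exact Finset.sum_congr rfl fun a _ => Finset.sum_congr rfl fun b _ => by
          rw [sieveW_symm]
      have e3 : ∑ k, ∑ l, (2 * (sieveW G k l * y k ^ 2) + 2 * (sieveW G k l * y l ^ 2))
          = (∑ k, ∑ l, sieveW G k l * y k ^ 2) * 2 + (∑ k, ∑ l, sieveW G k l * y l ^ 2) * 2 := by
        rw [Finset.sum_mul, Finset.sum_mul, ← Finset.sum_add_distrib]
        refine Finset.sum_congr rfl fun k _ => ?_
        rw [Finset.sum_mul, Finset.sum_mul, ← Finset.sum_add_distrib]
        exact Finset.sum_congr rfl fun l _ => by ring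
      have hrowb : ∑ k, ∑ l, sieveW G k l * y k ^ 2 ≤ ∑ k, y k ^ 2 := by
        refine Finset.sum_le_sum fun k _ => ?_
        rw [← Finset.sum_mul]
        calc (∑ l, sieveW G k l) * y k ^ 2 ≤ 1 * y k ^ 2 :=
              mul_le_mul_of_nonneg_right (sieveW_row G k) (sq_nonneg _)
          _ = y k ^ 2 := one_mul _
      calc ∑ k, ∑ l, sieveW G k l * ((y k - y l) * (y k - y l))
          ≤ ∑ k, ∑ l, (2 * (sieveW G k l * y k ^ 2) + 2 * (sieveW G k l * y l ^ 2)) :=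
            Finset.sum_le_sum fun k _ => Finset.sum_le_sum fun l _ => step1 k l
        _ = (∑ k, ∑ l, sieveW G k l * y k ^ 2) * 2
            + (∑ k, ∑ l, sieveW G k l * y l ^ 2) * 2 := e3
        _ = 4 * ∑ k, ∑ l, sieveW G k l * y k ^ 2 := by rw [hsw]; ring
        _ ≤ 4 * ∑ k, y k ^ 2 := by linarith
    simp only [sieveQ]
    linarith
  -- norm bound for B x
  have hBnorm : ∀ x : Fin n → ℝ,
      ∑ i, (x i - A.mulVec x i) ^ 2 ≤ (3/4) * sieveQ (sieveT S) (sieveW G) x x := by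
    intro x
    have hsq : ∑ i, (x i - A.mulVec x i) ^ 2
        = ∑ i, (x i - A.mulVec x i) * (x i - A.mulVec x i) :=
      Finset.sum_congr rfl fun i _ => pow_two _
    have hN : ∑ i, (x i - A.mulVec x i) * (x i - A.mulVec x i)
        = sieveQ (sieveT S) (sieveW G) (fun i => x i - A.mulVec x i) x :=
      hkey (fun i => x i - A.mulVec x i) x
    have hNN : ∑ i, (x i - A.mulVec x i) ^ 2
        = sieveQ (sieveT S) (sieveW G) (fun i => x i - A.mulVec x i) x := hsq.trans hN
    have hCS := sieveQ_cauchy (sieveT_nonneg S) (sieveW_nonneg G)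
      (fun i => x i - A.mulVec x i) x
    have hup : sieveQ (sieveT S) (sieveW G) (fun i => x i - A.mulVec x i)
        (fun i => x i - A.mulVec x i) ≤ (3/4) * ∑ i, (x i - A.mulVec x i) ^ 2 :=
      hQupper _
    have ha : (0:ℝ) ≤ ∑ i, (x i - A.mulVec x i) ^ 2 :=
      Finset.sum_nonneg fun i _ => sq_nonneg _
    have hc : 0 ≤ sieveQ (sieveT S) (sieveW G) x x :=
      sieveQ_nonneg (sieveT_nonneg S) (sieveW_nonneg G) x
    rw [hNN] at hup ha ⊢
    nlinarith [hCS, hup, ha, hc, mul_le_mul_of_nonneg_right hup hc]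
  -- nonnegativity of the edge sum
  have hEsNonneg : ∀ x : Fin n → ℝ, 0 ≤ ∑ k, ∑ l,
      (if G.Adj k l then (x k - x l) ^ 2 / ((max (G.degree k) (G.degree l) : ℕ) : ℝ) else 0) := by
    intro x
    refine Finset.sum_nonneg fun k _ => Finset.sum_nonneg fun l _ => ?_
    by_cases h : G.Adj k l
    · rw [if_pos h]; positivity
    · rw [if_neg h]
  -- κ ≥ 0
  have hκ0 : 0 ≤ κ := by
    obtain ⟨m0, x0, hx0, hy0⟩ := hκ.1
    rw [hy0]
    exact add_nonneg (sq_nonneg _) (mul_nonneg (by norm_num) (hEsNonneg x0))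
  -- Q as the κ-expression
  have hQeq : ∀ x : Fin n → ℝ, sieveQ (sieveT S) (sieveW G) x x
      = (1/4) * ((∑ i ∈ S, x i ^ 2) + (1/2) * ∑ k, ∑ l,
          (if G.Adj k l then (x k - x l) ^ 2 / ((max (G.degree k) (G.degree l) : ℕ) : ℝ) else 0)) := by
    intro x
    simp only [sieveQ]
    have h1 : ∑ i, sieveT S i * (x i * x i) = (1/4) * ∑ i ∈ S, x i ^ 2 := by
      rw [Finset.mul_sum]
      have hite := Finset.sum_ite_mem Finset.univ S (fun i => (1/4 : ℝ) * x i ^ 2)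
      rw [Finset.univ_inter] at hite
      rw [← hite]
      refine Finset.sum_congr rfl fun i _ => ?_
      simp only [sieveT]
      split_ifs
      · ring
      · ring
    have h2 : ∑ k, ∑ l, sieveW G k l * ((x k - x l) * (x k - x l))
        = ∑ k, ∑ l, (if G.Adj k l then (x k - x l) ^ 2
            / ((max (G.degree k) (G.degree l) : ℕ) : ℝ) else 0) := by
      refine Finset.sum_congr rfl fun k _ => Finset.sum_congr rfl fun l _ => ?_
      simp only [sieveW]
      split_ifs with h
      · ring
      · ring
    rw [h1, h2]
    ring
  -- κ lower bound for the quadratic form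
  have hQlow : ∀ x : Fin n → ℝ,
      κ / 4 * ∑ i, x i ^ 2 ≤ sieveQ (sieveT S) (sieveW G) x x := by
    intro x
    rw [hQeq x]
    have hx0 : (0:ℝ) ≤ ∑ i, x i ^ 2 := Finset.sum_nonneg fun i _ => sq_nonneg _
    have main : κ * ∑ i, x i ^ 2 ≤ (∑ i ∈ S, x i ^ 2) + (1/2) * ∑ k, ∑ l,
        (if G.Adj k l then (x k - x l) ^ 2 / ((max (G.degree k) (G.degree l) : ℕ) : ℝ) else 0) := by
      rcases eq_or_lt_of_le hx0 with hC | hC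
      · rw [← hC, mul_zero]
        exact add_nonneg (Finset.sum_nonneg fun i _ => sq_nonneg _)
          (mul_nonneg (by norm_num) (hEsNonneg x))
      · have hs2 : Real.sqrt (∑ j, x j ^ 2) ^ 2 = ∑ j, x j ^ 2 := Real.sq_sqrt hC.le
        obtain ⟨m, hm⟩ := hS
        have hnorm : ∑ i, (x i / Real.sqrt (∑ j, x j ^ 2)) ^ 2 = 1 := by
          simp only [div_pow]
          rw [← Finset.sum_div, hs2]
          exact div_self (ne_of_gt hC)
        have hmem : κ ≤ (x m / Real.sqrt (∑ j, x j ^ 2)) ^ 2 + (1/2) * ∑ k, ∑ l,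
            (if G.Adj k l then ((x k / Real.sqrt (∑ j, x j ^ 2))
              - (x l / Real.sqrt (∑ j, x j ^ 2))) ^ 2
              / ((max (G.degree k) (G.degree l) : ℕ) : ℝ) else 0) :=
          hκ.2 ⟨m, (fun i => x i / Real.sqrt (∑ j, x j ^ 2)), hnorm, rfl⟩
        have hEsc : ∑ k, ∑ l, (if G.Adj k l then ((x k / Real.sqrt (∑ j, x j ^ 2))
              - (x l / Real.sqrt (∑ j, x j ^ 2))) ^ 2
              / ((max (G.degree k) (G.degree l) : ℕ) : ℝ) else 0)
            = (∑ k, ∑ l, (if G.Adj k l then (x k - x l) ^ 2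
                / ((max (G.degree k) (G.degree l) : ℕ) : ℝ) else 0)) / (∑ j, x j ^ 2) := by
          rw [Finset.sum_div]
          refine Finset.sum_congr rfl fun k _ => ?_
          rw [Finset.sum_div]
          refine Finset.sum_congr rfl fun l _ => ?_
          by_cases h : G.Adj k l
          · rw [if_pos h, if_pos h]
            rw [div_sub_div_same, div_pow, hs2, div_div, div_div, mul_comm]
          · rw [if_neg h, if_neg h]
            exact (zero_div _).symm
        have hm2 : (x m / Real.sqrt (∑ j, x j ^ 2)) ^ 2 = x m ^ 2 / (∑ j, x j ^ 2) := by
          rw [div_pow, hs2]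
        rw [hm2, hEsc] at hmem
        have hle : κ ≤ (x m ^ 2 + (1/2) * ∑ k, ∑ l, (if G.Adj k l then (x k - x l) ^ 2
            / ((max (G.degree k) (G.degree l) : ℕ) : ℝ) else 0)) / (∑ j, x j ^ 2) := by
          rw [add_div, mul_div_assoc]
          exact hmem
        have hmul := (le_div_iff₀ hC).mp hle
        have hsingle : x m ^ 2 ≤ ∑ i ∈ S, x i ^ 2 :=
          Finset.single_le_sum (fun i _ => sq_nonneg (x i)) hm
        linarith
    linarith
  -- one-step deterministic contraction
  have hdet : ∀ x : Fin n → ℝ,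
      ∑ i, (x i - Δ * (x i - A.mulVec x i)) ^ 2 ≤ (1 - (Δ/8) * κ) * ∑ i, x i ^ 2 := by
    intro x
    have hexp : ∑ i, (x i - Δ * (x i - A.mulVec x i)) ^ 2
        = ∑ i, x i ^ 2 - 2 * Δ * ∑ i, x i * (x i - A.mulVec x i)
          + Δ ^ 2 * ∑ i, (x i - A.mulVec x i) ^ 2 := by
      rw [Finset.mul_sum, Finset.mul_sum, ← Finset.sum_sub_distrib, ← Finset.sum_add_distrib]
      exact Finset.sum_congr rfl fun i _ => by ring
    have hq := hkey x x
    have hB := hBnorm x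
    have hlow := hQlow x
    have hq0 : 0 ≤ sieveQ (sieveT S) (sieveW G) x x :=
      sieveQ_nonneg (sieveT_nonneg S) (sieveW_nonneg G) x
    have hx0 : (0:ℝ) ≤ ∑ i, x i ^ 2 := Finset.sum_nonneg fun i _ => sq_nonneg _
    rw [hexp, hq]
    nlinarith [mul_le_mul_of_nonneg_left hB (sq_nonneg Δ),
      mul_nonneg (mul_nonneg hΔ0.le (by linarith : (0:ℝ) ≤ 1 - Δ)) hq0,
      mul_le_mul_of_nonneg_left hlow hΔ0.le,
      mul_nonneg (mul_nonneg hΔ0.le hκ0) hx0]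
  -- mean vector identity
  have hAe : ∀ i, A.mulVec (fun j => v j - μ) i = A.mulVec v i + b i - μ := by
    intro i
    have h1 : A.mulVec (fun j => v j - μ) i = A.mulVec v i - μ * ∑ j, A i j := by
      simp only [Matrix.mulVec, dotProduct]
      rw [Finset.mul_sum, ← Finset.sum_sub_distrib]
      exact Finset.sum_congr rfl fun j _ => by ring
    rw [h1, hrowsum i, hb i]
    simp only [sieveT]
    split_ifs
    · ring
    · ring
  -- pointwise identity for the update
  have hpt : ∀ (ω : Ω) (i : Fin n), ((1 - Δ) • v + Δ • (A.mulVec v + b + r ω + c ω)) i - μ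
      = ((v i - μ) - Δ * ((v i - μ) - A.mulVec (fun j => v j - μ) i)) + Δ * (r ω i + c ω i) := by
    intro ω i
    have h := hAe i
    simp only [Pi.add_apply, Pi.smul_apply, smul_eq_mul]
    linear_combination (-Δ) * h
  have hdetv : ∑ i, ((v i - μ) - Δ * ((v i - μ) - A.mulVec (fun j => v j - μ) i)) ^ 2
      ≤ (1 - (Δ/8) * κ) * ∑ i, (v i - μ) ^ 2 := hdet (fun j => v j - μ)
  -- ### Probabilistic part ###
  have hIntegrand : ∀ (a : ℝ) (i : Fin n),
      Integrable (fun ω => (a + Δ * (r ω i + c ω i)) ^ 2) ℙ := by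
    intro a i
    have h1 : MemLp (fun ω => r ω i + c ω i) 2 ℙ := (hrL2 i).add (hcL2 i)
    have h2 : MemLp (fun ω => Δ * (r ω i + c ω i)) 2 ℙ := h1.const_mul Δ
    have h3 : MemLp (fun ω => a + Δ * (r ω i + c ω i)) 2 ℙ := (memLp_const a).add h2
    exact h3.integrable_sq
  have hIntOne : ∀ (a : ℝ) (i : Fin n), ∫ ω, (a + Δ * (r ω i + c ω i)) ^ 2 ∂ℙ
      = a ^ 2 + (Δ ^ 2 * ∫ ω, (r ω i) ^ 2 ∂ℙ + Δ ^ 2 * ∫ ω, (c ω i) ^ 2 ∂ℙ) := by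
    intro a i
    have hRmeas : Measurable fun ω => r ω i := (measurable_pi_apply i).comp hrMeas
    have hCmeas : Measurable fun ω => c ω i := (measurable_pi_apply i).comp hcMeas
    have iR : Integrable (fun ω => r ω i) ℙ := (hrL2 i).integrable one_le_two
    have iC : Integrable (fun ω => c ω i) ℙ := (hcL2 i).integrable one_le_two
    have iR2 : Integrable (fun ω => (r ω i) ^ 2) ℙ := (hrL2 i).integrable_sq
    have iC2 : Integrable (fun ω => (c ω i) ^ 2) ℙ := (hcL2 i).integrable_sq
    have iRC : Integrable (fun ω => r ω i * c ω i) ℙ := by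
      refine ((iR2.add iC2).div_const 2).mono'
        ((hRmeas.mul hCmeas).aestronglyMeasurable) (Filter.Eventually.of_forall fun ω => ?_)
      simp only [Pi.add_apply]
      rw [Real.norm_eq_abs, abs_mul]
      nlinarith [sq_nonneg (|r ω i| - |c ω i|), sq_abs (r ω i), sq_abs (c ω i)]
    have hIndRC : IndepFun (fun ω => r ω i) (fun ω => c ω i) ℙ :=
      hIndep.comp (measurable_pi_apply i) (measurable_pi_apply i)
    have hmul : ∫ ω, r ω i * c ω i ∂ℙ = 0 := by
      have h := hIndRC.integral_fun_mul_eq_mul_integral hRmeas.aestronglyMeasurable hCmeas.aestronglyMeasurable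
      rw [hrMean i, hcMean i, mul_zero] at h
      exact h
    have hsplit : (fun ω => (a + Δ * (r ω i + c ω i)) ^ 2)
        = fun ω => a ^ 2 + (Δ ^ 2 * (r ω i) ^ 2 + (Δ ^ 2 * (c ω i) ^ 2
            + ((2 * Δ * a) * (r ω i) + ((2 * Δ * a) * (c ω i)
              + (2 * Δ ^ 2) * (r ω i * c ω i))))) :=
      funext fun ω => by ring
    have i5 : Integrable (fun ω => (2 * Δ ^ 2) * (r ω i * c ω i)) ℙ := iRC.const_mul _
    have i4 : Integrable (fun ω => (2 * Δ * a) * (c ω i)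
        + (2 * Δ ^ 2) * (r ω i * c ω i)) ℙ := (iC.const_mul _).add i5
    have i3 : Integrable (fun ω => (2 * Δ * a) * (r ω i) + ((2 * Δ * a) * (c ω i)
        + (2 * Δ ^ 2) * (r ω i * c ω i))) ℙ := (iR.const_mul _).add i4
    have i2 : Integrable (fun ω => Δ ^ 2 * (c ω i) ^ 2 + ((2 * Δ * a) * (r ω i)
        + ((2 * Δ * a) * (c ω i) + (2 * Δ ^ 2) * (r ω i * c ω i)))) ℙ := (iC2.const_mul _).add i3
    have i1 : Integrable (fun ω => Δ ^ 2 * (r ω i) ^ 2 + (Δ ^ 2 * (c ω i) ^ 2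
        + ((2 * Δ * a) * (r ω i) + ((2 * Δ * a) * (c ω i)
          + (2 * Δ ^ 2) * (r ω i * c ω i))))) ℙ := (iR2.const_mul _).add i2
    rw [hsplit]
    rw [integral_add (integrable_const _) i1]
    rw [integral_add (iR2.const_mul _) i2]
    rw [integral_add (iC2.const_mul _) i3]
    rw [integral_add (iR.const_mul _) i4]
    rw [integral_add (iC.const_mul _) i5]
    simp only [integral_const_mul]
    rw [integral_const, hrMean i, hcMean i, hmul]
    simp only [measure_univ, probReal_univ, ENNReal.toReal_one, one_smul]
    ring
  -- sum of noise variances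
  have hrSum : ∑ i, ∫ ω, (r ω i) ^ 2 ∂ℙ ≤ S.card * σ ^ 2 / 16 := by
    have hzero : ∀ i ∈ Finset.univ, i ∉ S → ∫ ω, (r ω i) ^ 2 ∂ℙ = 0 := by
      intro i _ hiS
      have hae : (fun ω => (r ω i) ^ 2) =ᵐ[ℙ] (fun _ => (0:ℝ)) :=
        (hrZero i hiS).mono fun ω h => by simp [h]
      rw [integral_congr_ae hae, integral_zero]
    rw [← Finset.sum_subset S.subset_univ hzero]
    calc ∑ i ∈ S, ∫ ω, (r ω i) ^ 2 ∂ℙ ≤ ∑ _i ∈ S, σ ^ 2 / 16 :=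
          Finset.sum_le_sum fun i hi => hrVar i hi
      _ = S.card * (σ ^ 2 / 16) := by rw [Finset.sum_const, nsmul_eq_mul]
      _ = S.card * σ ^ 2 / 16 := by ring
  have hcSum : ∑ i, ∫ ω, (c ω i) ^ 2 ∂ℙ ≤ n * σ' ^ 2 / 16 := by
    calc ∑ i, ∫ ω, (c ω i) ^ 2 ∂ℙ ≤ ∑ _i : Fin n, σ' ^ 2 / 16 :=
          Finset.sum_le_sum fun i _ => hcVar i
      _ = n * (σ' ^ 2 / 16) := by
          rw [Finset.sum_const, Finset.card_univ, Fintype.card_fin, nsmul_eq_mul]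
      _ = n * σ' ^ 2 / 16 := by ring
  -- ### Assembly ###
  have hcongr : (∫ ω, ∑ i, (((1 - Δ) • v + Δ • (A.mulVec v + b + r ω + c ω)) i - μ) ^ 2 ∂ℙ)
      = ∫ ω, ∑ i, (((v i - μ) - Δ * ((v i - μ) - A.mulVec (fun j => v j - μ) i))
          + Δ * (r ω i + c ω i)) ^ 2 ∂ℙ :=
    integral_congr_ae (Filter.Eventually.of_forall fun ω =>
      Finset.sum_congr rfl fun i _ => by rw [hpt ω i])
  rw [hcongr]
  rw [integral_finset_sum Finset.univ (fun i _ => hIntegrand _ i)]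
  have hterm : ∑ i, ∫ ω, (((v i - μ) - Δ * ((v i - μ) - A.mulVec (fun j => v j - μ) i))
        + Δ * (r ω i + c ω i)) ^ 2 ∂ℙ
      = ∑ i, (((v i - μ) - Δ * ((v i - μ) - A.mulVec (fun j => v j - μ) i)) ^ 2
        + (Δ ^ 2 * ∫ ω, (r ω i) ^ 2 ∂ℙ + Δ ^ 2 * ∫ ω, (c ω i) ^ 2 ∂ℙ)) :=
    Finset.sum_congr rfl fun i _ => hIntOne _ i
  rw [hterm]
  rw [Finset.sum_add_distrib, Finset.sum_add_distrib, ← Finset.mul_sum, ← Finset.mul_sum]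
  have h4 : Δ ^ 2 * ∑ i, ∫ ω, (r ω i) ^ 2 ∂ℙ ≤ Δ ^ 2 * (S.card * σ ^ 2 / 16) :=
    mul_le_mul_of_nonneg_left hrSum (sq_nonneg Δ)
  have h5 : Δ ^ 2 * ∑ i, ∫ ω, (c ω i) ^ 2 ∂ℙ ≤ Δ ^ 2 * (n * σ' ^ 2 / 16) :=
    mul_le_mul_of_nonneg_left hcSum (sq_nonneg Δ)
  nlinarith [hdetv, h4, h5]
end
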